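/- arXiv:1207.1893 — 4 statements merged into one kernel-verified Lean document; each statement's English description precedes it below -/
import Mathlib

section
/- (Minimal dwell-time, affine conditions.) Let T > 0 and let A, J be real n×n matrices. Suppose there exist real symmetric positive definite n×n matrices P and Z, real symmetric n×n matrices Q and U, a real n×n matrix R, and a real n×2n matrix N such that Ψ(T) is negative definite, Φ(T) is negative definite, and AᵀP + PA is negative definite. Then ℐ(P,A,J,s) is negative definite for every s ≥ T, and consequently for every sequence (T_k)_{k∈ℕ} of reals with T_k ≥ T for all k and every x₀ ∈ ℝⁿ, the sequence defined by x_{k+1} = exp(T_k·A)·J·x_k, x_0 = x₀, tends to 0 as k → ∞. -/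
open Matrix Filter

/-- Matrix exponential of a real square matrix. -/
noncomputable def mexp {n : ℕ} (A : Matrix (Fin n) (Fin n) ℝ) : Matrix (Fin n) (Fin n) ℝ :=
  NormedSpace.exp A

/-- ℐ(P,A,J,T) := Jᵀ·exp(T·Aᵀ)·P·exp(T·A)·J − P. -/
noncomputable def scrI {n : ℕ} (P A J : Matrix (Fin n) (Fin n) ℝ) (T : ℝ) :
    Matrix (Fin n) (Fin n) ℝ :=
  Jᵀ * mexp (T • Aᵀ) * P * mexp (T • A) * J - P

/-- xᵀMx < 0 for all x ≠ 0. -/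
def negDef {m : Type*} [Fintype m] (M : Matrix m m ℝ) : Prop :=
  ∀ x : m → ℝ, x ≠ 0 → x ⬝ᵥ M.mulVec x < 0

/-- xᵀMx > 0 for all x ≠ 0. -/
def posDef {m : Type*} [Fintype m] (M : Matrix m m ℝ) : Prop :=
  ∀ x : m → ℝ, x ≠ 0 → 0 < x ⬝ᵥ M.mulVec x

/-- xᵀMx ≥ 0 for all x. -/
def posSemidef {m : Type*} [Fintype m] (M : Matrix m m ℝ) : Prop :=
  ∀ x : m → ℝ, 0 ≤ x ⬝ᵥ M.mulVec x

/-- The n×2n block matrix `[I 0]`. -/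
def Mxb (n : ℕ) : Matrix (Fin n) (Fin n ⊕ Fin n) ℝ := Matrix.fromCols 1 0

/-- The n×2n block matrix `[0 I]`. -/
def Mmb (n : ℕ) : Matrix (Fin n) (Fin n ⊕ Fin n) ℝ := Matrix.fromCols 0 1

/-- The n×2n block matrix `[I −J]`. -/
def Mzb {n : ℕ} (J : Matrix (Fin n) (Fin n) ℝ) : Matrix (Fin n) (Fin n ⊕ Fin n) ℝ :=
  Matrix.fromCols 1 (-J)

/-- He[X] := X + Xᵀ. -/
def He {m : Type*} (X : Matrix m m ℝ) : Matrix m m ℝ := X + Xᵀ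

/-- The 2n×2n matrix `F₀`. -/
def F0 {n : ℕ} (T : ℝ) (A J P Q R : Matrix (Fin n) (Fin n) ℝ)
    (N : Matrix (Fin n) (Fin n ⊕ Fin n) ℝ) :
    Matrix (Fin n ⊕ Fin n) (Fin n ⊕ Fin n) ℝ :=
  T • ((Mxb n)ᵀ * (Aᵀ * P + P * A) * Mxb n) - (Mzb J)ᵀ * Q * Mzb J
    + (Mmb n)ᵀ * (Jᵀ * P * J - P) * Mmb n
    + He (Nᵀ * Mzb J - (Mzb J)ᵀ * R * Mxb n)

/-- The 2n×2n matrix `F₂`. -/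
def F2 {n : ℕ} (A J Q R Z : Matrix (Fin n) (Fin n) ℝ) :
    Matrix (Fin n ⊕ Fin n) (Fin n ⊕ Fin n) ℝ :=
  He ((Mxb n)ᵀ * Aᵀ * Q * Mzb J + (Mxb n)ᵀ * Aᵀ * R * Mxb n + (Mzb J)ᵀ * R * A * Mxb n)
    + (Mxb n)ᵀ * Aᵀ * Z * A * Mxb n

/-- The 2n×2n matrix `F₃`. -/
def F3 {n : ℕ} (J U : Matrix (Fin n) (Fin n) ℝ) :
    Matrix (Fin n ⊕ Fin n) (Fin n ⊕ Fin n) ℝ :=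
  (Mmb n)ᵀ * Jᵀ * U * J * Mmb n

/-- The 2n×2n matrix `Ψ(T) = F₀ + T·(F₂ + F₃)`. -/
def Psi {n : ℕ} (T : ℝ) (A J P Z Q U R : Matrix (Fin n) (Fin n) ℝ)
    (N : Matrix (Fin n) (Fin n ⊕ Fin n) ℝ) :
    Matrix (Fin n ⊕ Fin n) (Fin n ⊕ Fin n) ℝ :=
  F0 T A J P Q R N + T • (F2 A J Q R Z + F3 J U)

/-- The 3n×3n block matrix `Φ(T) = [[F₀ − T·F₃, Nᵀ],[N, −Z/T]]`. -/
noncomputable def Phi {n : ℕ} (T : ℝ) (A J P Z Q U R : Matrix (Fin n) (Fin n) ℝ)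
    (N : Matrix (Fin n) (Fin n ⊕ Fin n) ℝ) :
    Matrix ((Fin n ⊕ Fin n) ⊕ Fin n) ((Fin n ⊕ Fin n) ⊕ Fin n) ℝ :=
  Matrix.fromBlocks (F0 T A J P Q R N - T • F3 J U) Nᵀ N (-(T⁻¹ • Z))

/- ========================= auxiliary development ========================= -/

namespace S8
open MeasureTheory intervalIntegral

variable {n : ℕ}

lemma mulVec_dot {k l : Type*} [Fintype k] [Fintype l] (M : Matrix k l ℝ) (a : l → ℝ) (b : k → ℝ) :
    (M *ᵥ a) ⬝ᵥ b = a ⬝ᵥ (Mᵀ *ᵥ b) := by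
  rw [dotProduct_mulVec, vecMul_transpose, dotProduct_comm]

lemma dotT {k l : Type*} [Fintype k] [Fintype l] (M : Matrix k l ℝ) (x : l → ℝ) (y : k → ℝ) :
    x ⬝ᵥ (Mᵀ *ᵥ y) = (M *ᵥ x) ⬝ᵥ y := (mulVec_dot M x y).symm

lemma dot_symm {M : Matrix (Fin n) (Fin n) ℝ} (hM : M.IsSymm) (a b : Fin n → ℝ) :
    a ⬝ᵥ M *ᵥ b = b ⬝ᵥ M *ᵥ a := by
  conv_lhs => rw [← hM]
  rw [← mulVec_dot, dotProduct_comm]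

lemma quad_congr {m : Type*} [Fintype m] (K L : Matrix (Fin n) m ℝ)
    (M : Matrix (Fin n) (Fin n) ℝ) (ζ : m → ℝ) :
    ζ ⬝ᵥ (Kᵀ * M * L) *ᵥ ζ = (K *ᵥ ζ) ⬝ᵥ M *ᵥ (L *ᵥ ζ) := by
  rw [← mulVec_mulVec, ← mulVec_mulVec, ← mulVec_dot, mulVec_mulVec]

lemma pair_congr {m : Type*} [Fintype m] (K L : Matrix (Fin n) m ℝ) (ζ : m → ℝ) :
    ζ ⬝ᵥ (Kᵀ * L) *ᵥ ζ = (K *ᵥ ζ) ⬝ᵥ (L *ᵥ ζ) := by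
  rw [← mulVec_mulVec, ← mulVec_dot]

lemma Mxb_mulVec (a b : Fin n → ℝ) : Mxb n *ᵥ Sum.elim a b = a := by
  simp [Mxb, Matrix.fromCols_mulVec_sumElim]
lemma Mmb_mulVec (a b : Fin n → ℝ) : Mmb n *ᵥ Sum.elim a b = b := by
  simp [Mmb, Matrix.fromCols_mulVec_sumElim]
lemma Mzb_mulVec (J : Matrix (Fin n) (Fin n) ℝ) (a b : Fin n → ℝ) :
    Mzb J *ᵥ Sum.elim a b = a - J *ᵥ b := by
  simp [Mzb, Matrix.fromCols_mulVec_sumElim, Matrix.neg_mulVec, sub_eq_add_neg]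

lemma quad_He {m : Type*} [Fintype m] (X : Matrix m m ℝ) (ζ : m → ℝ) :
    ζ ⬝ᵥ He X *ᵥ ζ = 2 * (ζ ⬝ᵥ X *ᵥ ζ) := by
  rw [He, add_mulVec, dotProduct_add, ← mulVec_dot, dotProduct_comm]; ring

lemma quad_add {m : Type*} [Fintype m] (X Y : Matrix m m ℝ) (ζ : m → ℝ) :
    ζ ⬝ᵥ (X + Y) *ᵥ ζ = ζ ⬝ᵥ X *ᵥ ζ + ζ ⬝ᵥ Y *ᵥ ζ := by
  rw [add_mulVec, dotProduct_add]
lemma quad_sub {m : Type*} [Fintype m] (X Y : Matrix m m ℝ) (ζ : m → ℝ) :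
    ζ ⬝ᵥ (X - Y) *ᵥ ζ = ζ ⬝ᵥ X *ᵥ ζ - ζ ⬝ᵥ Y *ᵥ ζ := by
  rw [sub_mulVec, dotProduct_sub]
lemma quad_smul {m : Type*} [Fintype m] (c : ℝ) (X : Matrix m m ℝ) (ζ : m → ℝ) :
    ζ ⬝ᵥ (c • X) *ᵥ ζ = c * (ζ ⬝ᵥ X *ᵥ ζ) := by
  rw [Matrix.smul_mulVec, dotProduct_smul, smul_eq_mul]

section Expand
variable (T : ℝ) (A J P Q R U Z : Matrix (Fin n) (Fin n) ℝ)
  (N : Matrix (Fin n) (Fin n ⊕ Fin n) ℝ) (a b : Fin n → ℝ)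

lemma quadF0 :
    Sum.elim a b ⬝ᵥ F0 T A J P Q R N *ᵥ Sum.elim a b =
      T * ((A *ᵥ a) ⬝ᵥ P *ᵥ a + a ⬝ᵥ P *ᵥ (A *ᵥ a))
        - (a - J *ᵥ b) ⬝ᵥ Q *ᵥ (a - J *ᵥ b)
        + ((J *ᵥ b) ⬝ᵥ P *ᵥ (J *ᵥ b) - b ⬝ᵥ P *ᵥ b)
        + 2 * ((N *ᵥ Sum.elim a b) ⬝ᵥ (a - J *ᵥ b)
               - (a - J *ᵥ b) ⬝ᵥ R *ᵥ a) := by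
  simp only [F0, quad_add, quad_sub, quad_smul, quad_He, ← mulVec_mulVec, dotT,
    Mxb_mulVec, Mmb_mulVec, Mzb_mulVec,
    dotProduct_add, dotProduct_sub, add_dotProduct, sub_dotProduct, dotProduct_smul,
    smul_dotProduct, mulVec_add, mulVec_sub, smul_eq_mul]

lemma quadF2 :
    Sum.elim a b ⬝ᵥ F2 A J Q R Z *ᵥ Sum.elim a b =
      2 * ((A *ᵥ a) ⬝ᵥ Q *ᵥ (a - J *ᵥ b))
        + 2 * ((A *ᵥ a) ⬝ᵥ R *ᵥ a + (a - J *ᵥ b) ⬝ᵥ R *ᵥ (A *ᵥ a))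
        + (A *ᵥ a) ⬝ᵥ Z *ᵥ (A *ᵥ a) := by
  simp only [F2, quad_add, quad_sub, quad_smul, quad_He, ← mulVec_mulVec, dotT,
    Mxb_mulVec, Mmb_mulVec, Mzb_mulVec,
    dotProduct_add, dotProduct_sub, add_dotProduct, sub_dotProduct, dotProduct_smul,
    smul_dotProduct, mulVec_add, mulVec_sub, smul_eq_mul]
  ring

lemma quadF3 :
    Sum.elim a b ⬝ᵥ F3 J U *ᵥ Sum.elim a b = (J *ᵥ b) ⬝ᵥ U *ᵥ (J *ᵥ b) := by
  simp only [F3, ← mulVec_mulVec, dotT, Mmb_mulVec]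

end Expand

lemma posDef_isUnit_det {Z : Matrix (Fin n) (Fin n) ℝ} (hZ : posDef Z) : IsUnit Z.det := by
  rw [isUnit_iff_ne_zero]
  intro h
  obtain ⟨v, hv, hZv⟩ := (Matrix.exists_mulVec_eq_zero_iff).2 h
  have := hZ v hv
  rw [hZv] at this
  simp at this

lemma inv_symm {Z : Matrix (Fin n) (Fin n) ℝ} (hZsym : Z.IsSymm) : (Z⁻¹).IsSymm := by
  rw [Matrix.IsSymm, Matrix.transpose_nonsing_inv, hZsym]

lemma mul_inv_cancel_mulVec {Z : Matrix (Fin n) (Fin n) ℝ} (hZ : posDef Z) (m : Fin n → ℝ) :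
    Z *ᵥ (Z⁻¹ *ᵥ m) = m := by
  rw [mulVec_mulVec, Matrix.mul_nonsing_inv _ (posDef_isUnit_det hZ), one_mulVec]

lemma posDef_nonneg {Z : Matrix (Fin n) (Fin n) ℝ} (hZ : posDef Z) (x : Fin n → ℝ) :
    0 ≤ x ⬝ᵥ Z *ᵥ x := by
  rcases eq_or_ne x 0 with h | h
  · simp [h]
  · exact (hZ x h).le

lemma negDef_nonpos {m : Type*} [Fintype m] {M : Matrix m m ℝ} (hM : negDef M) (x : m → ℝ) :
    x ⬝ᵥ M *ᵥ x ≤ 0 := by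
  rcases eq_or_ne x 0 with h | h
  · simp [h]
  · exact (hM x h).le

/-- completion of squares -/
lemma comp_sq {Z : Matrix (Fin n) (Fin n) ℝ} (hZsym : Z.IsSymm) (hZ : posDef Z)
    {θ : ℝ} (hθ : 0 < θ) (u m : Fin n → ℝ) :
    -(2 * (m ⬝ᵥ u)) ≤ θ * (m ⬝ᵥ Z⁻¹ *ᵥ m) + θ⁻¹ * (u ⬝ᵥ Z *ᵥ u) := by
  set d : Fin n → ℝ := θ⁻¹ • u + Z⁻¹ *ᵥ m with hd
  have h0 : 0 ≤ θ * (d ⬝ᵥ Z *ᵥ d) := mul_nonneg hθ.le (posDef_nonneg hZ d)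
  have hexp : d ⬝ᵥ Z *ᵥ d =
      θ⁻¹ * θ⁻¹ * (u ⬝ᵥ Z *ᵥ u) + 2 * θ⁻¹ * (u ⬝ᵥ m) + m ⬝ᵥ Z⁻¹ *ᵥ m := by
    have e1 : u ⬝ᵥ Z *ᵥ (Z⁻¹ *ᵥ m) = u ⬝ᵥ m := by rw [mul_inv_cancel_mulVec hZ]
    have e2 : (Z⁻¹ *ᵥ m) ⬝ᵥ Z *ᵥ u = u ⬝ᵥ m := by
      rw [dot_symm hZsym, e1]
    have e3 : (Z⁻¹ *ᵥ m) ⬝ᵥ Z *ᵥ (Z⁻¹ *ᵥ m) = m ⬝ᵥ Z⁻¹ *ᵥ m := by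
      rw [mul_inv_cancel_mulVec hZ, mulVec_dot, inv_symm hZsym]
    rw [hd]
    simp only [dotProduct_add, add_dotProduct, mulVec_add, mulVec_smul, dotProduct_smul,
      smul_dotProduct, smul_eq_mul, e1, e2, e3]
    ring
  have key : 0 ≤ θ⁻¹ * (u ⬝ᵥ Z *ᵥ u) + 2 * (u ⬝ᵥ m) + θ * (m ⬝ᵥ Z⁻¹ *ᵥ m) := by
    have h1 := h0
    rw [hexp] at h1
    have hθ0 : θ ≠ 0 := ne_of_gt hθ
    have e : θ * (θ⁻¹ * θ⁻¹ * (u ⬝ᵥ Z *ᵥ u) + 2 * θ⁻¹ * (u ⬝ᵥ m) + m ⬝ᵥ Z⁻¹ *ᵥ m)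
        = θ⁻¹ * (u ⬝ᵥ Z *ᵥ u) + 2 * (u ⬝ᵥ m) + θ * (m ⬝ᵥ Z⁻¹ *ᵥ m) := by
      field_simp
    rw [e] at h1
    exact h1
  have : m ⬝ᵥ u = u ⬝ᵥ m := dotProduct_comm m u
  linarith

lemma Continuous.quad {f g : ℝ → Fin n → ℝ} (M : Matrix (Fin n) (Fin n) ℝ)
    (hf : Continuous f) (hg : Continuous g) :
    Continuous fun s => f s ⬝ᵥ M *ᵥ g s := by
  simp only [dotProduct, mulVec]
  refine continuous_finset_sum _ fun i _ => ((continuous_apply i).comp hf).mul ?_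
  exact continuous_finset_sum _ fun j _ => continuous_const.mul ((continuous_apply j).comp hg)

lemma integral_dot (c : Fin n → ℝ) (M : Matrix (Fin n) (Fin n) ℝ) {v : ℝ → Fin n → ℝ}
    (hv : Continuous v) {θ : ℝ} (u : Fin n → ℝ)
    (hu : ∀ i, u i = ∫ s in (0:ℝ)..θ, v s i) :
    ∫ s in (0:ℝ)..θ, c ⬝ᵥ M *ᵥ v s = c ⬝ᵥ M *ᵥ u := by
  have hexp : ∀ w : Fin n → ℝ, c ⬝ᵥ M *ᵥ w = ∑ j, (Matrix.vecMul c M) j * w j := by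
    intro w
    rw [dotProduct_mulVec]
    rfl
  rw [hexp]
  have h2 : ∀ s : ℝ, c ⬝ᵥ M *ᵥ v s = ∑ j, (Matrix.vecMul c M) j * v s j := fun s => hexp (v s)
  simp_rw [h2]
  rw [intervalIntegral.integral_finset_sum]
  · refine Finset.sum_congr rfl fun j _ => ?_
    rw [intervalIntegral.integral_const_mul, ← hu j]
  · intro j _
    exact (Continuous.intervalIntegrable
      (continuous_const.mul ((continuous_apply j).comp hv)) _ _)

lemma jensen {Z : Matrix (Fin n) (Fin n) ℝ} (hZsym : Z.IsSymm) (hZ : posDef Z)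
    {v : ℝ → Fin n → ℝ} (hv : Continuous v) {θ : ℝ} (hθ : 0 < θ) (u : Fin n → ℝ)
    (hu : ∀ i, u i = ∫ s in (0:ℝ)..θ, v s i) :
    θ⁻¹ * (u ⬝ᵥ Z *ᵥ u) ≤ ∫ s in (0:ℝ)..θ, v s ⬝ᵥ Z *ᵥ v s := by
  set c : Fin n → ℝ := θ⁻¹ • u with hc
  have hi1 : IntervalIntegrable (fun s => 2 * (c ⬝ᵥ Z *ᵥ v s)) volume 0 θ :=
    (continuous_const.mul (Continuous.quad Z continuous_const hv)).intervalIntegrable _ _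
  have hi2 : IntervalIntegrable (fun _ : ℝ => c ⬝ᵥ Z *ᵥ c) volume 0 θ :=
    intervalIntegrable_const
  have hpoint : ∀ s : ℝ, 2 * (c ⬝ᵥ Z *ᵥ v s) - c ⬝ᵥ Z *ᵥ c ≤ v s ⬝ᵥ Z *ᵥ v s := by
    intro s
    have h0 : 0 ≤ (v s - c) ⬝ᵥ Z *ᵥ (v s - c) := posDef_nonneg hZ _
    have e : (v s - c) ⬝ᵥ Z *ᵥ (v s - c)
        = v s ⬝ᵥ Z *ᵥ v s - 2 * (c ⬝ᵥ Z *ᵥ v s) + c ⬝ᵥ Z *ᵥ c := by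
      have e2 : v s ⬝ᵥ Z *ᵥ c = c ⬝ᵥ Z *ᵥ v s := dot_symm hZsym _ _
      simp only [dotProduct_sub, sub_dotProduct, mulVec_sub, e2]
      ring
    linarith [e ▸ h0]
  have hint : ∫ s in (0:ℝ)..θ, (2 * (c ⬝ᵥ Z *ᵥ v s) - c ⬝ᵥ Z *ᵥ c)
      ≤ ∫ s in (0:ℝ)..θ, v s ⬝ᵥ Z *ᵥ v s := by
    apply intervalIntegral.integral_mono_on hθ.le (hi1.sub hi2)
      ((Continuous.quad Z hv hv).intervalIntegrable _ _)
    intro s _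
    exact hpoint s
  have hL : ∫ s in (0:ℝ)..θ, (2 * (c ⬝ᵥ Z *ᵥ v s) - c ⬝ᵥ Z *ᵥ c)
      = 2 * (c ⬝ᵥ Z *ᵥ u) - θ * (c ⬝ᵥ Z *ᵥ c) := by
    rw [intervalIntegral.integral_sub hi1 hi2, intervalIntegral.integral_const_mul,
      integral_dot c Z hv u hu, intervalIntegral.integral_const, smul_eq_mul, sub_zero]
  have hcu : c ⬝ᵥ Z *ᵥ u = θ⁻¹ * (u ⬝ᵥ Z *ᵥ u) := by
    rw [hc]
    rw [smul_dotProduct]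
    simp [smul_eq_mul]
  have hcc : c ⬝ᵥ Z *ᵥ c = θ⁻¹ * (θ⁻¹ * (u ⬝ᵥ Z *ᵥ u)) := by
    rw [hc]
    rw [smul_dotProduct, mulVec_smul, dotProduct_smul]
    simp [smul_eq_mul]
  have hθ0 : θ ≠ 0 := ne_of_gt hθ
  rw [hL, hcu, hcc] at hint
  have e3 : 2 * (θ⁻¹ * (u ⬝ᵥ Z *ᵥ u)) - θ * (θ⁻¹ * (θ⁻¹ * (u ⬝ᵥ Z *ᵥ u)))
      = θ⁻¹ * (u ⬝ᵥ Z *ᵥ u) := by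
    field_simp
    ring
  linarith [e3 ▸ hint]

section Exp
attribute [local instance] Matrix.linftyOpNormedAddCommGroup Matrix.linftyOpNormedRing
  Matrix.linftyOpNormedAlgebra

noncomputable def mulVecCLM (n : ℕ) (w : Fin n → ℝ) :
    Matrix (Fin n) (Fin n) ℝ →L[ℝ] (Fin n → ℝ) :=
  LinearMap.toContinuousLinearMap
    { toFun := fun M => M *ᵥ w
      map_add' := fun M N => Matrix.add_mulVec M N w
      map_smul' := fun c M => Matrix.smul_mulVec c M w }

lemma hasDerivAt_mexp_mulVec (A : Matrix (Fin n) (Fin n) ℝ) (w : Fin n → ℝ) (t : ℝ) :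
    HasDerivAt (fun s : ℝ => mexp (s • A) *ᵥ w) (A *ᵥ (mexp (t • A) *ᵥ w)) t := by
  have h := hasDerivAt_exp_smul_const (𝕂 := ℝ) A t
  have h2 := ((mulVecCLM n w).hasFDerivAt.comp_hasDerivAt t h)
  have e1 : NormedSpace.exp (t • A) * A = A * NormedSpace.exp (t • A) :=
    (((Commute.refl A).smul_left t).exp_left).eq
  have h3 : HasDerivAt (fun u => NormedSpace.exp (u • A) *ᵥ w)
      ((NormedSpace.exp (t • A) * A) *ᵥ w) t := h2
  simpa [mulVecCLM, mexp, e1, ← Matrix.mulVec_mulVec, Function.comp_def] using h3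

end Exp

lemma mexp_zero_smul (A : Matrix (Fin n) (Fin n) ℝ) : mexp ((0:ℝ) • A) = 1 := by
  simp [mexp, NormedSpace.exp_zero]

lemma continuous_flow (A : Matrix (Fin n) (Fin n) ℝ) (w : Fin n → ℝ) :
    Continuous fun s : ℝ => mexp (s • A) *ᵥ w :=
  continuous_iff_continuousAt.2 fun t => (hasDerivAt_mexp_mulVec A w t).continuousAt

lemma hasDerivAt_quad {a b : ℝ → Fin n → ℝ} {a' b' : Fin n → ℝ} {t : ℝ}
    (M : Matrix (Fin n) (Fin n) ℝ) (ha : HasDerivAt a a' t) (hb : HasDerivAt b b' t) :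
    HasDerivAt (fun s => a s ⬝ᵥ M *ᵥ b s) (a' ⬝ᵥ M *ᵥ b t + a t ⬝ᵥ M *ᵥ b') t := by
  have ha' := hasDerivAt_pi.1 ha
  have hb' := hasDerivAt_pi.1 hb
  have key : ∀ i : Fin n, HasDerivAt (fun s => a s i * (M *ᵥ b s) i)
      (a' i * (M *ᵥ b t) i + a t i * (M *ᵥ b') i) t := by
    intro i
    have hMb : HasDerivAt (fun s => (M *ᵥ b s) i) ((M *ᵥ b') i) t := by
      simp only [mulVec, dotProduct]
      exact HasDerivAt.fun_sum fun j _ => (hb' j).const_mul (M i j)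
    exact (ha' i).mul hMb
  have hsum := HasDerivAt.fun_sum (fun i (_ : i ∈ Finset.univ) => key i)
  simpa only [dotProduct, Finset.sum_add_distrib] using hsum

lemma comp_integral {f : ℝ → Fin n → ℝ} {f' : ℝ → Fin n → ℝ}
    (hf : ∀ s, HasDerivAt f (f' s) s) (hc : Continuous f') (θ : ℝ) (i : Fin n) :
    f θ i - f 0 i = ∫ s in (0:ℝ)..θ, f' s i := by
  have h1 : ∀ s, HasDerivAt (fun r => f r i) (f' s i) s := fun s =>
    (hasDerivAt_pi.1 (hf s)) i
  rw [intervalIntegral.integral_eq_sub_of_hasDerivAt (fun s _ => h1 s)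
    (((continuous_apply i).comp hc).intervalIntegrable _ _)]

lemma hasDerivAt_integral {w : ℝ → ℝ} (hw : Continuous w) (θ : ℝ) :
    HasDerivAt (fun r => ∫ s in (0:ℝ)..r, w s) (w θ) θ :=
  intervalIntegral.integral_hasDerivAt_right (hw.intervalIntegrable _ _)
    hw.stronglyMeasurable.stronglyMeasurableAtFilter hw.continuousAt

/-- monotone decrease of the Lyapunov function along the flow -/
lemma phi_mono {A P : Matrix (Fin n) (Fin n) ℝ} (hC : negDef (Aᵀ * P + P * A))
    (w : Fin n → ℝ) {t s : ℝ} (hts : t ≤ s) :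
    (mexp (s • A) *ᵥ w) ⬝ᵥ P *ᵥ (mexp (s • A) *ᵥ w)
      ≤ (mexp (t • A) *ᵥ w) ⬝ᵥ P *ᵥ (mexp (t • A) *ᵥ w) := by
  set χ : ℝ → Fin n → ℝ := fun r => mexp (r • A) *ᵥ w with hχ
  set φ : ℝ → ℝ := fun r => χ r ⬝ᵥ P *ᵥ χ r with hφ
  have hd : ∀ r : ℝ, HasDerivAt φ (χ r ⬝ᵥ (Aᵀ * P + P * A) *ᵥ χ r) r := by
    intro r
    have h := hasDerivAt_quad P (hasDerivAt_mexp_mulVec A w r) (hasDerivAt_mexp_mulVec A w r)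
    have e : (A *ᵥ χ r) ⬝ᵥ P *ᵥ χ r + χ r ⬝ᵥ P *ᵥ (A *ᵥ χ r)
        = χ r ⬝ᵥ (Aᵀ * P + P * A) *ᵥ χ r := by
      rw [add_mulVec, dotProduct_add, ← mulVec_mulVec, ← mulVec_mulVec, mulVec_dot]
    exact e ▸ h
  have ha : AntitoneOn φ (Set.Icc t s) := by
    apply antitoneOn_of_deriv_nonpos (convex_Icc t s)
    · exact fun r _ => (hd r).continuousAt.continuousWithinAt
    · exact fun r _ => (hd r).differentiableAt.differentiableWithinAt
    · intro r _
      rw [(hd r).deriv]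
      exact negDef_nonpos hC _
  exact ha (Set.left_mem_Icc.2 hts) (Set.right_mem_Icc.2 hts) hts

lemma quad_cont (M : Matrix (Fin n) (Fin n) ℝ) :
    Continuous fun x : Fin n → ℝ => x ⬝ᵥ M *ᵥ x := by
  simp only [dotProduct, mulVec]
  refine continuous_finset_sum _ fun i _ => (continuous_apply i).mul ?_
  exact continuous_finset_sum _ fun j _ => continuous_const.mul (continuous_apply j)

lemma quad_homog (M : Matrix (Fin n) (Fin n) ℝ) (c : ℝ) (x : Fin n → ℝ) :
    (c • x) ⬝ᵥ M *ᵥ (c • x) = c ^ 2 * (x ⬝ᵥ M *ᵥ x) := by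
  rw [smul_dotProduct, mulVec_smul, dotProduct_smul]
  simp [smul_eq_mul]
  ring

lemma exists_lower (hn : n ≠ 0) {M : Matrix (Fin n) (Fin n) ℝ} (hM : posDef M) :
    ∃ ε > 0, ∀ x : Fin n → ℝ, ε * ‖x‖ ^ 2 ≤ x ⬝ᵥ M *ᵥ x := by
  have : Nontrivial (Fin n → ℝ) := by
    have : Nonempty (Fin n) := ⟨⟨0, Nat.pos_of_ne_zero hn⟩⟩
    infer_instance
  have hcomp : IsCompact (Metric.sphere (0 : Fin n → ℝ) 1) := isCompact_sphere 0 1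
  have hne : (Metric.sphere (0 : Fin n → ℝ) 1).Nonempty := by
    obtain ⟨x, hx⟩ := exists_norm_eq (Fin n → ℝ) (zero_le_one' ℝ)
    exact ⟨x, by simpa [Metric.mem_sphere, dist_zero_right] using hx⟩
  obtain ⟨x₀, hx₀S, hx₀min⟩ := hcomp.exists_isMinOn hne ((quad_cont M).continuousOn)
  have hx₀n : ‖x₀‖ = 1 := by simpa [Metric.mem_sphere, dist_zero_right] using hx₀S
  have hx₀0 : x₀ ≠ 0 := fun h => by simp [h] at hx₀n
  refine ⟨x₀ ⬝ᵥ M *ᵥ x₀, hM x₀ hx₀0, fun x => ?_⟩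
  rcases eq_or_ne x 0 with rfl | hx
  · simp
  · have hxn : ‖x‖ ≠ 0 := norm_ne_zero_iff.2 hx
    set y : Fin n → ℝ := ‖x‖⁻¹ • x with hy
    have hyS : y ∈ Metric.sphere (0 : Fin n → ℝ) 1 := by
      simp [hy, Metric.mem_sphere, dist_zero_right, norm_smul, abs_of_nonneg,
        inv_mul_cancel₀ hxn]
    have h1 := hx₀min hyS
    have h2 : y ⬝ᵥ M *ᵥ y = ‖x‖⁻¹ ^ 2 * (x ⬝ᵥ M *ᵥ x) := quad_homog M _ x
    have h3 : x₀ ⬝ᵥ M *ᵥ x₀ ≤ ‖x‖⁻¹ ^ 2 * (x ⬝ᵥ M *ᵥ x) := h2 ▸ h1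
    have hn2 : (0:ℝ) < ‖x‖ ^ 2 := by positivity
    calc x₀ ⬝ᵥ M *ᵥ x₀ * ‖x‖ ^ 2 ≤ ‖x‖⁻¹ ^ 2 * (x ⬝ᵥ M *ᵥ x) * ‖x‖ ^ 2 := by nlinarith
      _ = x ⬝ᵥ M *ᵥ x := by field_simp

lemma exists_ratio (hn : n ≠ 0) {P M : Matrix (Fin n) (Fin n) ℝ} (hP : posDef P)
    (h : ∀ x : Fin n → ℝ, x ≠ 0 → x ⬝ᵥ M *ᵥ x < x ⬝ᵥ P *ᵥ x) :
    ∃ ρ : ℝ, 0 ≤ ρ ∧ ρ < 1 ∧ ∀ x : Fin n → ℝ, x ⬝ᵥ M *ᵥ x ≤ ρ * (x ⬝ᵥ P *ᵥ x) := by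
  have : Nontrivial (Fin n → ℝ) := by
    have : Nonempty (Fin n) := ⟨⟨0, Nat.pos_of_ne_zero hn⟩⟩
    infer_instance
  have hcomp : IsCompact (Metric.sphere (0 : Fin n → ℝ) 1) := isCompact_sphere 0 1
  have hne : (Metric.sphere (0 : Fin n → ℝ) 1).Nonempty := by
    obtain ⟨x, hx⟩ := exists_norm_eq (Fin n → ℝ) (zero_le_one' ℝ)
    exact ⟨x, by simpa [Metric.mem_sphere, dist_zero_right] using hx⟩
  have hS0 : ∀ y ∈ Metric.sphere (0 : Fin n → ℝ) 1, y ≠ 0 := by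
    intro y hy h0
    simp [Metric.mem_sphere, dist_zero_right, h0] at hy
  have hcont : ContinuousOn (fun x : Fin n → ℝ => (x ⬝ᵥ M *ᵥ x) / (x ⬝ᵥ P *ᵥ x))
      (Metric.sphere (0 : Fin n → ℝ) 1) := by
    apply ContinuousOn.div (quad_cont M).continuousOn (quad_cont P).continuousOn
    intro y hy
    exact ne_of_gt (hP y (hS0 y hy))
  obtain ⟨x₀, hx₀S, hx₀max⟩ := hcomp.exists_isMaxOn hne hcont
  set ρ : ℝ := max ((x₀ ⬝ᵥ M *ᵥ x₀) / (x₀ ⬝ᵥ P *ᵥ x₀)) 0 with hρ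
  have hρ1 : ρ < 1 := by
    apply max_lt _ one_pos
    rw [div_lt_one (hP x₀ (hS0 x₀ hx₀S))]
    exact h x₀ (hS0 x₀ hx₀S)
  refine ⟨ρ, le_max_right _ _, hρ1, fun x => ?_⟩
  rcases eq_or_ne x 0 with rfl | hx
  · simp
  · have hxn : ‖x‖ ≠ 0 := norm_ne_zero_iff.2 hx
    set y : Fin n → ℝ := ‖x‖⁻¹ • x with hy
    have hyS : y ∈ Metric.sphere (0 : Fin n → ℝ) 1 := by
      simp [hy, Metric.mem_sphere, dist_zero_right, norm_smul, abs_of_nonneg,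
        inv_mul_cancel₀ hxn]
    have h1 : (y ⬝ᵥ M *ᵥ y) / (y ⬝ᵥ P *ᵥ y) ≤ ρ := le_trans (hx₀max hyS) (le_max_left _ _)
    have hyP : 0 < y ⬝ᵥ P *ᵥ y := hP y (hS0 y hyS)
    have h2 : y ⬝ᵥ M *ᵥ y ≤ ρ * (y ⬝ᵥ P *ᵥ y) := by
      rw [div_le_iff₀ hyP] at h1
      linarith
    have hM2 : y ⬝ᵥ M *ᵥ y = ‖x‖⁻¹ ^ 2 * (x ⬝ᵥ M *ᵥ x) := quad_homog M _ x
    have hP2 : y ⬝ᵥ P *ᵥ y = ‖x‖⁻¹ ^ 2 * (x ⬝ᵥ P *ᵥ x) := quad_homog P _ x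
    rw [hM2, hP2] at h2
    have hn2 : (0:ℝ) < ‖x‖ ^ 2 := by positivity
    have h3 := mul_le_mul_of_nonneg_left h2 hn2.le
    calc x ⬝ᵥ M *ᵥ x = ‖x‖ ^ 2 * (‖x‖⁻¹ ^ 2 * (x ⬝ᵥ M *ᵥ x)) := by field_simp
      _ ≤ ‖x‖ ^ 2 * (ρ * (‖x‖⁻¹ ^ 2 * (x ⬝ᵥ P *ᵥ x))) := h3
      _ = ρ * (x ⬝ᵥ P *ᵥ x) := by field_simp

lemma quad_scrI (P A J : Matrix (Fin n) (Fin n) ℝ) (s : ℝ) (v : Fin n → ℝ) :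
    v ⬝ᵥ scrI P A J s *ᵥ v =
      (mexp (s • A) *ᵥ (J *ᵥ v)) ⬝ᵥ P *ᵥ (mexp (s • A) *ᵥ (J *ᵥ v)) - v ⬝ᵥ P *ᵥ v := by
  have hTt : mexp (s • Aᵀ) = (mexp (s • A))ᵀ := by
    rw [mexp, mexp, ← Matrix.transpose_smul, Matrix.exp_transpose]
  have hgroup : Jᵀ * (mexp (s • A))ᵀ * P * mexp (s • A) * J
      = (mexp (s • A) * J)ᵀ * P * (mexp (s • A) * J) := by
    rw [transpose_mul]
    noncomm_ring
  rw [scrI, quad_sub, hTt, hgroup, quad_congr, ← mulVec_mulVec]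

lemma elim_ne_zero {a b : Fin n → ℝ} (hb : b ≠ 0) : Sum.elim a b ≠ (0 : Fin n ⊕ Fin n → ℝ) :=
  fun h => hb (funext fun i => congrFun h (Sum.inr i))

/-- Schur complement step -/
lemma schur {T : ℝ} {A J P Z Q U R : Matrix (Fin n) (Fin n) ℝ}
    {N : Matrix (Fin n) (Fin n ⊕ Fin n) ℝ}
    (hT : 0 < T) (hZsym : Z.IsSymm) (hZ : posDef Z)
    (hPhi : negDef (Phi T A J P Z Q U R N)) (ζ : Fin n ⊕ Fin n → ℝ) (hζ : ζ ≠ 0) :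
    ζ ⬝ᵥ F0 T A J P Q R N *ᵥ ζ - T * (ζ ⬝ᵥ F3 J U *ᵥ ζ)
      + T * ((N *ᵥ ζ) ⬝ᵥ Z⁻¹ *ᵥ (N *ᵥ ζ)) < 0 := by
  have hT0 : T ≠ 0 := ne_of_gt hT
  have hzz : (Z⁻¹)ᵀ = Z⁻¹ := inv_symm hZsym
  set z : Fin n → ℝ := T • (Z⁻¹ *ᵥ (N *ᵥ ζ)) with hz
  have hw : Sum.elim ζ z ≠ 0 := fun h => hζ (funext fun i => congrFun h (Sum.inl i))
  have h := hPhi (Sum.elim ζ z) hw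
  rw [Phi, Matrix.fromBlocks_mulVec] at h
  simp only [Sum.elim_comp_inl, Sum.elim_comp_inr] at h
  rw [sumElim_dotProduct_sumElim, dotProduct_add, dotProduct_add] at h
  have e1 : ζ ⬝ᵥ (F0 T A J P Q R N - T • F3 J U) *ᵥ ζ
      = ζ ⬝ᵥ F0 T A J P Q R N *ᵥ ζ - T * (ζ ⬝ᵥ F3 J U *ᵥ ζ) := by
    rw [quad_sub, quad_smul]
  have e2 : ζ ⬝ᵥ (Nᵀ *ᵥ z) = T * ((N *ᵥ ζ) ⬝ᵥ Z⁻¹ *ᵥ (N *ᵥ ζ)) := by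
    rw [dotT, hz, dotProduct_smul, smul_eq_mul]
  have e3 : z ⬝ᵥ (N *ᵥ ζ) = T * ((N *ᵥ ζ) ⬝ᵥ Z⁻¹ *ᵥ (N *ᵥ ζ)) := by
    rw [hz, smul_dotProduct, smul_eq_mul, mulVec_dot, hzz]
  have e4 : z ⬝ᵥ (-(T⁻¹ • Z)) *ᵥ z = -(T * ((N *ᵥ ζ) ⬝ᵥ Z⁻¹ *ᵥ (N *ᵥ ζ))) := by
    rw [neg_mulVec, dotProduct_neg, Matrix.smul_mulVec, dotProduct_smul, smul_eq_mul]
    rw [hz, smul_dotProduct, mulVec_smul, dotProduct_smul, smul_eq_mul, smul_eq_mul]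
    rw [mul_inv_cancel_mulVec hZ, mulVec_dot, hzz]
    field_simp
  rw [e1, e2, e3, e4] at h
  linarith

/-- Core lemma: `scrI(T)` is negative definite. -/
lemma key {T : ℝ} {A J P Z Q U R : Matrix (Fin n) (Fin n) ℝ}
    {N : Matrix (Fin n) (Fin n ⊕ Fin n) ℝ}
    (hT : 0 < T) (hZsym : Z.IsSymm) (hZ : posDef Z) (hQsym : Q.IsSymm)
    (hPsi : negDef (Psi T A J P Z Q U R N))
    (hPhi : negDef (Phi T A J P Z Q U R N)) :
    negDef (scrI P A J T) := by
  intro v hv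
  rw [quad_scrI]
  set χ : ℝ → Fin n → ℝ := fun θ => mexp (θ • A) *ᵥ (J *ᵥ v) with hχdef
  have hχd : ∀ θ : ℝ, HasDerivAt χ (A *ᵥ χ θ) θ := fun θ => hasDerivAt_mexp_mulVec A (J *ᵥ v) θ
  have hχ0 : χ 0 = J *ᵥ v := by rw [hχdef]; simp [mexp, NormedSpace.exp_zero]
  have hvc : Continuous fun s => A *ᵥ χ s := by
    apply continuous_pi
    intro i
    simp only [mulVec, dotProduct]
    exact continuous_finset_sum _ fun j _ => continuous_const.mul
      ((continuous_apply j).comp (continuous_flow A (J *ᵥ v)))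
  set Iw : ℝ → ℝ := fun r => ∫ s in (0:ℝ)..r, (A *ᵥ χ s) ⬝ᵥ Z *ᵥ (A *ᵥ χ s) with hIdef
  have hIc : Continuous fun s => (A *ᵥ χ s) ⬝ᵥ Z *ᵥ (A *ᵥ χ s) := Continuous.quad Z hvc hvc
  have hId : ∀ θ : ℝ, HasDerivAt Iw ((A *ᵥ χ θ) ⬝ᵥ Z *ᵥ (A *ᵥ χ θ)) θ := fun θ =>
    hasDerivAt_integral hIc θ
  have hI0 : Iw 0 = 0 := intervalIntegral.integral_same
  set g : ℝ → ℝ := fun θ =>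
    T * (χ θ ⬝ᵥ P *ᵥ χ θ)
      + θ * ((J *ᵥ v) ⬝ᵥ P *ᵥ (J *ᵥ v) - v ⬝ᵥ P *ᵥ v)
      + (T - θ) * ((χ θ - J *ᵥ v) ⬝ᵥ Q *ᵥ (χ θ - J *ᵥ v)
          + 2 * ((χ θ - J *ᵥ v) ⬝ᵥ R *ᵥ χ θ) + Iw θ)
      + (θ * (T - θ)) * ((J *ᵥ v) ⬝ᵥ U *ᵥ (J *ᵥ v)) with hgdef
  set gd : ℝ → ℝ := fun θ =>
    T * ((A *ᵥ χ θ) ⬝ᵥ P *ᵥ χ θ + χ θ ⬝ᵥ P *ᵥ (A *ᵥ χ θ))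
      + ((J *ᵥ v) ⬝ᵥ P *ᵥ (J *ᵥ v) - v ⬝ᵥ P *ᵥ v)
      - ((χ θ - J *ᵥ v) ⬝ᵥ Q *ᵥ (χ θ - J *ᵥ v)
          + 2 * ((χ θ - J *ᵥ v) ⬝ᵥ R *ᵥ χ θ) + Iw θ)
      + (T - θ) * (((A *ᵥ χ θ) ⬝ᵥ Q *ᵥ (χ θ - J *ᵥ v)
            + (χ θ - J *ᵥ v) ⬝ᵥ Q *ᵥ (A *ᵥ χ θ))
          + 2 * ((A *ᵥ χ θ) ⬝ᵥ R *ᵥ χ θ + (χ θ - J *ᵥ v) ⬝ᵥ R *ᵥ (A *ᵥ χ θ))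
          + (A *ᵥ χ θ) ⬝ᵥ Z *ᵥ (A *ᵥ χ θ))
      + (T - 2 * θ) * ((J *ᵥ v) ⬝ᵥ U *ᵥ (J *ᵥ v)) with hgddef
  have hud : ∀ θ : ℝ, HasDerivAt (fun r => χ r - J *ᵥ v) (A *ᵥ χ θ) θ := fun θ =>
    (hχd θ).sub_const _
  have hg : ∀ θ : ℝ, HasDerivAt g (gd θ) θ := by
    intro θ
    have h1 := (hasDerivAt_quad P (hχd θ) (hχd θ)).const_mul T
    have h2 := (hasDerivAt_id θ).mul_const
      ((J *ᵥ v) ⬝ᵥ P *ᵥ (J *ᵥ v) - v ⬝ᵥ P *ᵥ v)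
    have h3a := hasDerivAt_quad Q (hud θ) (hud θ)
    have h3b := (hasDerivAt_quad R (hud θ) (hχd θ)).const_mul 2
    have h3 := (h3a.add h3b).add (hId θ)
    have hTθ : HasDerivAt (fun r : ℝ => T - r) (-1) θ := by
      simpa using (hasDerivAt_id θ).const_sub T
    have h3' := hTθ.mul h3
    have h4 := ((hasDerivAt_id θ).mul hTθ).mul_const ((J *ᵥ v) ⬝ᵥ U *ᵥ (J *ᵥ v))
    have hfin := ((h1.add h2).add h3').add h4
    rw [hgdef, hgddef]
    exact hfin.congr_deriv (by simp only [id_eq, Pi.add_apply]; ring)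
  have hneg : ∀ θ : ℝ, θ ∈ Set.Ioo 0 T → gd θ < 0 := by
    intro θ hθmem
    obtain ⟨hθ0, hθT⟩ := hθmem
    have hζ : Sum.elim (χ θ) v ≠ (0 : Fin n ⊕ Fin n → ℝ) := elim_ne_zero hv
    have hQswap : (χ θ - J *ᵥ v) ⬝ᵥ Q *ᵥ (A *ᵥ χ θ)
        = (A *ᵥ χ θ) ⬝ᵥ Q *ᵥ (χ θ - J *ᵥ v) := dot_symm hQsym _ _
    have hid : T * gd θ
        = (T - θ) * (Sum.elim (χ θ) v ⬝ᵥ Psi T A J P Z Q U R N *ᵥ Sum.elim (χ θ) v)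
          + θ * (Sum.elim (χ θ) v ⬝ᵥ F0 T A J P Q R N *ᵥ Sum.elim (χ θ) v
              - T * (Sum.elim (χ θ) v ⬝ᵥ F3 J U *ᵥ Sum.elim (χ θ) v)
              + T * ((N *ᵥ Sum.elim (χ θ) v) ⬝ᵥ Z⁻¹ *ᵥ (N *ᵥ Sum.elim (χ θ) v)))
          + T * (-(2 * ((N *ᵥ Sum.elim (χ θ) v) ⬝ᵥ (χ θ - J *ᵥ v))) - Iw θ
              - θ * ((N *ᵥ Sum.elim (χ θ) v) ⬝ᵥ Z⁻¹ *ᵥ (N *ᵥ Sum.elim (χ θ) v))) := by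
      simp only [hgddef, Psi, quad_add, quad_smul, quadF0, quadF2, quadF3]
      rw [hQswap]
      ring
    have huint : ∀ i, (χ θ - J *ᵥ v) i = ∫ s in (0:ℝ)..θ, (A *ᵥ χ s) i := by
      intro i
      have h := comp_integral (f := fun r => χ r - J *ᵥ v)
        (f' := fun s => A *ᵥ χ s) hud hvc θ i
      rw [← h]
      simp [hχ0]
    have hJ : θ⁻¹ * ((χ θ - J *ᵥ v) ⬝ᵥ Z *ᵥ (χ θ - J *ᵥ v)) ≤ Iw θ :=
      jensen hZsym hZ hvc hθ0 _ huint
    have hCS := comp_sq hZsym hZ hθ0 (χ θ - J *ᵥ v) (N *ᵥ Sum.elim (χ θ) v)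
    have h1 : (T - θ) * (Sum.elim (χ θ) v ⬝ᵥ Psi T A J P Z Q U R N *ᵥ Sum.elim (χ θ) v)
        ≤ 0 := by
      have h := mul_le_mul_of_nonneg_left (hPsi _ hζ).le (sub_nonneg.2 hθT.le)
      simpa using h
    have h2 := mul_neg_of_pos_of_neg hθ0 (schur hT hZsym hZ hPhi (Sum.elim (χ θ) v) hζ)
    have hstuff : -(2 * ((N *ᵥ Sum.elim (χ θ) v) ⬝ᵥ (χ θ - J *ᵥ v))) - Iw θ
        - θ * ((N *ᵥ Sum.elim (χ θ) v) ⬝ᵥ Z⁻¹ *ᵥ (N *ᵥ Sum.elim (χ θ) v)) ≤ 0 := by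
      linarith [hCS, hJ]
    have h3 : T * (-(2 * ((N *ᵥ Sum.elim (χ θ) v) ⬝ᵥ (χ θ - J *ᵥ v))) - Iw θ
        - θ * ((N *ᵥ Sum.elim (χ θ) v) ⬝ᵥ Z⁻¹ *ᵥ (N *ᵥ Sum.elim (χ θ) v))) ≤ 0 := by
      have h := mul_le_mul_of_nonneg_left hstuff hT.le
      simpa using h
    have hTgd : T * gd θ < 0 := by
      rw [hid]
      linarith [h1, h2, h3]
    nlinarith [hTgd, hT]
  have hcont : ContinuousOn g (Set.Icc 0 T) := fun θ _ =>
    ((hg θ).continuousAt).continuousWithinAt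
  have hanti : StrictAntiOn g (Set.Icc 0 T) := by
    apply strictAntiOn_of_deriv_neg (convex_Icc 0 T) hcont
    intro θ hθmem
    rw [interior_Icc] at hθmem
    rw [(hg θ).deriv]
    exact hneg θ hθmem
  have hlt := hanti (Set.left_mem_Icc.2 hT.le) (Set.right_mem_Icc.2 hT.le) hT
  have hg0 : g 0 = T * ((J *ᵥ v) ⬝ᵥ P *ᵥ (J *ᵥ v)) := by
    rw [hgdef]
    simp only [hχ0, hI0, sub_self, zero_dotProduct, dotProduct_zero, mul_zero, zero_mul,
      add_zero, zero_add, sub_zero]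
  have hgT : g T = T * (χ T ⬝ᵥ P *ᵥ χ T)
      + T * ((J *ᵥ v) ⬝ᵥ P *ᵥ (J *ᵥ v) - v ⬝ᵥ P *ᵥ v) := by
    rw [hgdef]
    ring
  rw [hgT, hg0] at hlt
  have hfin : χ T ⬝ᵥ P *ᵥ χ T - v ⬝ᵥ P *ᵥ v < 0 := by nlinarith [hlt, hT]
  exact hfin

end S8

/-- Minimal dwell-time, affine conditions: if `Ψ(T) ≺ 0`, `Φ(T) ≺ 0` and
`AᵀP + PA ≺ 0`, then `ℐ(P,A,J,s) ≺ 0` for all `s ≥ T`, and every impulsive trajectory with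
dwell-times `T_k ≥ T` tends to `0`. -/
theorem stmt8 {n : ℕ} (T : ℝ) (hT : 0 < T) (A J : Matrix (Fin n) (Fin n) ℝ)
    (P Z Q U R : Matrix (Fin n) (Fin n) ℝ) (N : Matrix (Fin n) (Fin n ⊕ Fin n) ℝ)
    (hPsym : P.IsSymm) (hP : posDef P) (hZsym : Z.IsSymm) (hZ : posDef Z)
    (hQsym : Q.IsSymm) (hUsym : U.IsSymm)
    (hPsi : negDef (Psi T A J P Z Q U R N))
    (hPhi : negDef (Phi T A J P Z Q U R N))
    (hC : negDef (Aᵀ * P + P * A)) :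
    (∀ s : ℝ, T ≤ s → negDef (scrI P A J s)) ∧
    (∀ Tk : ℕ → ℝ, (∀ k, T ≤ Tk k) →
      ∀ x₀ : Fin n → ℝ, ∀ x : ℕ → Fin n → ℝ, x 0 = x₀ →
        (∀ k, x (k + 1) = (mexp (Tk k • A) * J).mulVec (x k)) →
        Tendsto x atTop (nhds 0)) := by
  have hkey : negDef (scrI P A J T) := S8.key hT hZsym hZ hQsym hPsi hPhi
  have part1 : ∀ s : ℝ, T ≤ s → negDef (scrI P A J s) := by
    intro s hs v hv
    rw [S8.quad_scrI]
    have hmono := S8.phi_mono hC (J *ᵥ v) hs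
    have h2 := hkey v hv
    rw [S8.quad_scrI] at h2
    linarith
  refine ⟨part1, ?_⟩
  intro Tk hTk x₀ x hx0 hrec
  rcases Nat.eq_zero_or_pos n with hn | hn
  · subst hn
    have hsub : ∀ k, x k = 0 := fun k => funext fun i => i.elim0
    have hx : x = fun _ => 0 := funext hsub
    rw [hx]
    exact tendsto_const_nhds
  · have hn0 : n ≠ 0 := hn.ne'
    have hquadM : ∀ y : Fin n → ℝ,
        y ⬝ᵥ ((mexp (T • A) * J)ᵀ * P * (mexp (T • A) * J)) *ᵥ y
          = (mexp (T • A) *ᵥ (J *ᵥ y)) ⬝ᵥ P *ᵥ (mexp (T • A) *ᵥ (J *ᵥ y)) := by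
      intro y
      rw [S8.quad_congr, ← mulVec_mulVec]
    have hlt : ∀ y : Fin n → ℝ, y ≠ 0 →
        y ⬝ᵥ ((mexp (T • A) * J)ᵀ * P * (mexp (T • A) * J)) *ᵥ y < y ⬝ᵥ P *ᵥ y := by
      intro y hy
      have h := hkey y hy
      rw [S8.quad_scrI] at h
      rw [hquadM]
      linarith
    obtain ⟨ρ, hρ0, hρ1, hρ⟩ := S8.exists_ratio hn0 hP hlt
    have hstep : ∀ k, x (k+1) ⬝ᵥ P *ᵥ x (k+1) ≤ ρ * (x k ⬝ᵥ P *ᵥ x k) := by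
      intro k
      rw [hrec k, ← mulVec_mulVec]
      have h1 := S8.phi_mono hC (J *ᵥ x k) (hTk k)
      have h2 := hρ (x k)
      rw [hquadM] at h2
      linarith
    have hdecay : ∀ k, x k ⬝ᵥ P *ᵥ x k ≤ ρ ^ k * (x₀ ⬝ᵥ P *ᵥ x₀) := by
      intro k
      induction k with
      | zero => simp [hx0]
      | succ k ih =>
        calc x (k+1) ⬝ᵥ P *ᵥ x (k+1) ≤ ρ * (x k ⬝ᵥ P *ᵥ x k) := hstep k
          _ ≤ ρ * (ρ ^ k * (x₀ ⬝ᵥ P *ᵥ x₀)) := mul_le_mul_of_nonneg_left ih hρ0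
          _ = ρ ^ (k+1) * (x₀ ⬝ᵥ P *ᵥ x₀) := by ring
    obtain ⟨ε, hε, hlow⟩ := S8.exists_lower hn0 hP
    have hbound : ∀ k, ‖x k‖ ^ 2 ≤ ρ ^ k * (x₀ ⬝ᵥ P *ᵥ x₀) / ε := by
      intro k
      rw [le_div_iff₀ hε]
      calc ‖x k‖ ^ 2 * ε = ε * ‖x k‖ ^ 2 := by ring
        _ ≤ x k ⬝ᵥ P *ᵥ x k := hlow (x k)
        _ ≤ ρ ^ k * (x₀ ⬝ᵥ P *ᵥ x₀) := hdecay k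
    have htend : Tendsto (fun k => ρ ^ k * (x₀ ⬝ᵥ P *ᵥ x₀) / ε) atTop (nhds 0) := by
      have h1 := tendsto_pow_atTop_nhds_zero_of_lt_one hρ0 hρ1
      have h2 := (h1.mul_const (x₀ ⬝ᵥ P *ᵥ x₀)).div_const ε
      simpa using h2
    have hsq : Tendsto (fun k => ‖x k‖ ^ 2) atTop (nhds 0) := by
      apply tendsto_of_tendsto_of_tendsto_of_le_of_le tendsto_const_nhds htend
      · intro k
        positivity
      · exact hbound
    have hnrm : Tendsto (fun k => ‖x k‖) atTop (nhds 0) := by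
      have h := hsq.sqrt
      have heq : (fun k => Real.sqrt (‖x k‖ ^ 2)) = fun k => ‖x k‖ :=
        funext fun k => Real.sqrt_sq (norm_nonneg _)
      rw [heq, Real.sqrt_zero] at h
      exact h
    exact tendsto_zero_iff_norm_tendsto_zero.2 hnrm
end

section
/- (Limit LMI for T → 0.) Let P be a real symmetric n×n matrix and J a real n×n matrix, and define the n×2n block matrices Mζ := [I −J], Mx := [I 0], M₋ := [0 I]. Then there exist a real symmetric n×n matrix Q, a real n×n matrix R, and a real n×2n matrix N such that the 2n×2n matrix −MζᵀQMζ − MζᵀRMx − MxᵀRᵀMζ + NᵀMζ + MζᵀN + M₋ᵀ(JᵀPJ − P)M₋ is negative definite if and only if JᵀPJ − P is negative definite. -/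
open Matrix Filter

lemma quad_aux {k m : Type*} [Fintype k] [Fintype m]
    (X Y : Matrix k m ℝ) (v : m → ℝ) :
    v ⬝ᵥ (Xᵀ * Y).mulVec v = (X.mulVec v) ⬝ᵥ (Y.mulVec v) := by
  rw [← Matrix.mulVec_mulVec, Matrix.dotProduct_mulVec, Matrix.vecMul_transpose]

lemma mzb_mulVec {n : ℕ} (J : Matrix (Fin n) (Fin n) ℝ) (a b : Fin n → ℝ) :
    (Mzb J).mulVec (Sum.elim a b) = a - J.mulVec b := by
  simp [Mzb, sub_eq_add_neg, Matrix.neg_mulVec]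

lemma mmb_mulVec {n : ℕ} (a b : Fin n → ℝ) :
    (Mmb n).mulVec (Sum.elim a b) = b := by simp [Mmb]

lemma dp_self_nonneg {m : Type*} [Fintype m] (a : m → ℝ) : 0 ≤ a ⬝ᵥ a :=
  Finset.sum_nonneg fun i _ => mul_self_nonneg _

/-- Limit LMI for T → 0: there exist `Q = Qᵀ`, `R`, `N` making
`−MζᵀQMζ − MζᵀRMx − MxᵀRᵀMζ + NᵀMζ + MζᵀN + M₋ᵀ(JᵀPJ − P)M₋` negative definite
if and only if `JᵀPJ − P` is negative definite. -/
theorem stmt10 {n : ℕ} (P J : Matrix (Fin n) (Fin n) ℝ) (hPsym : P.IsSymm) :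
    (∃ (Q R : Matrix (Fin n) (Fin n) ℝ) (N : Matrix (Fin n) (Fin n ⊕ Fin n) ℝ),
      Q.IsSymm ∧
      negDef (-((Mzb J)ᵀ * Q * Mzb J) - (Mzb J)ᵀ * R * Mxb n - (Mxb n)ᵀ * Rᵀ * Mzb J
        + Nᵀ * Mzb J + (Mzb J)ᵀ * N + (Mmb n)ᵀ * (Jᵀ * P * J - P) * Mmb n)) ↔
    negDef (Jᵀ * P * J - P) := by
  constructor
  · rintro ⟨Q, R, N, hQ, hM⟩ y hy
    set v : Fin n ⊕ Fin n → ℝ := Sum.elim (J.mulVec y) y with hv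
    have hvne : v ≠ 0 := by
      intro h
      apply hy
      ext i
      simpa [hv] using congrFun h (Sum.inr i)
    have hz : (Mzb J).mulVec v = 0 := by
      rw [hv, mzb_mulVec]; simp
    have key := hM v hvne
    have t1 : v ⬝ᵥ ((Mzb J)ᵀ * Q * Mzb J).mulVec v = 0 := by
      rw [Matrix.mul_assoc, quad_aux, hz]; simp
    have t2 : v ⬝ᵥ ((Mzb J)ᵀ * R * Mxb n).mulVec v = 0 := by
      rw [Matrix.mul_assoc, quad_aux, hz]; simp
    have t3 : v ⬝ᵥ ((Mxb n)ᵀ * Rᵀ * Mzb J).mulVec v = 0 := by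
      rw [Matrix.mul_assoc, quad_aux, ← Matrix.mulVec_mulVec, hz]; simp
    have t4 : v ⬝ᵥ (Nᵀ * Mzb J).mulVec v = 0 := by
      rw [quad_aux, hz]; simp
    have t5 : v ⬝ᵥ ((Mzb J)ᵀ * N).mulVec v = 0 := by
      rw [quad_aux, hz]; simp
    have t6 : v ⬝ᵥ ((Mmb n)ᵀ * (Jᵀ * P * J - P) * Mmb n).mulVec v
        = y ⬝ᵥ (Jᵀ * P * J - P).mulVec y := by
      rw [Matrix.mul_assoc, quad_aux, ← Matrix.mulVec_mulVec, hv, mmb_mulVec]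
    calc y ⬝ᵥ (Jᵀ * P * J - P).mulVec y
        = v ⬝ᵥ (-((Mzb J)ᵀ * Q * Mzb J) - (Mzb J)ᵀ * R * Mxb n - (Mxb n)ᵀ * Rᵀ * Mzb J
            + Nᵀ * Mzb J + (Mzb J)ᵀ * N + (Mmb n)ᵀ * (Jᵀ * P * J - P) * Mmb n).mulVec v := by
          simp only [Matrix.add_mulVec, Matrix.sub_mulVec, Matrix.neg_mulVec,
            dotProduct_add, dotProduct_sub, dotProduct_neg, t1, t2, t3, t4, t5, t6]
          ring
      _ < 0 := key
  · intro hS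
    refine ⟨1, 0, 0, Matrix.isSymm_one, ?_⟩
    have hsimp : -((Mzb J)ᵀ * (1:Matrix (Fin n) (Fin n) ℝ) * Mzb J)
        - (Mzb J)ᵀ * (0:Matrix (Fin n) (Fin n) ℝ) * Mxb n
        - (Mxb n)ᵀ * (0:Matrix (Fin n) (Fin n) ℝ)ᵀ * Mzb J
        + (0:Matrix (Fin n) (Fin n ⊕ Fin n) ℝ)ᵀ * Mzb J
        + (Mzb J)ᵀ * (0:Matrix (Fin n) (Fin n ⊕ Fin n) ℝ)
        + (Mmb n)ᵀ * (Jᵀ * P * J - P) * Mmb n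
        = -((Mzb J)ᵀ * Mzb J) + (Mmb n)ᵀ * (Jᵀ * P * J - P) * Mmb n := by
      simp
    rw [hsimp]
    intro v hv
    have hveq : v = Sum.elim (v ∘ Sum.inl) (v ∘ Sum.inr) := by
      ext (i | i) <;> rfl
    set a := v ∘ Sum.inl with ha'
    set b := v ∘ Sum.inr with hb'
    set w := a - J.mulVec b with hw
    have t1 : v ⬝ᵥ ((Mzb J)ᵀ * Mzb J).mulVec v = w ⬝ᵥ w := by
      rw [quad_aux]
      conv_lhs => rw [hveq, mzb_mulVec]
    have t2 : v ⬝ᵥ ((Mmb n)ᵀ * (Jᵀ * P * J - P) * Mmb n).mulVec v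
        = b ⬝ᵥ (Jᵀ * P * J - P).mulVec b := by
      rw [Matrix.mul_assoc, quad_aux, ← Matrix.mulVec_mulVec]
      conv_lhs => rw [hveq, mmb_mulVec]
    have hval : v ⬝ᵥ (-((Mzb J)ᵀ * Mzb J)
        + (Mmb n)ᵀ * (Jᵀ * P * J - P) * Mmb n).mulVec v
        = -(w ⬝ᵥ w) + b ⬝ᵥ (Jᵀ * P * J - P).mulVec b := by
      simp only [Matrix.add_mulVec, Matrix.neg_mulVec, dotProduct_add, dotProduct_neg, t1, t2]
    rw [hval]
    rcases eq_or_ne b 0 with hb | hb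
    · have ha : a ≠ 0 := by
        intro h
        apply hv
        rw [hveq, h, hb]
        ext (i | i) <;> simp
      have hwa : w = a := by rw [hw, hb]; simp
      have hpos : 0 < w ⬝ᵥ w := by
        rcases lt_or_eq_of_le (dp_self_nonneg w) with h | h
        · exact h
        · exact absurd (dotProduct_self_eq_zero.mp h.symm) (hwa ▸ ha)
      rw [hb]
      simp only [Matrix.mulVec_zero, dotProduct_zero, add_zero]
      linarith
    · have h1 : b ⬝ᵥ (Jᵀ * P * J - P).mulVec b < 0 := hS b hb
      have h2 : 0 ≤ w ⬝ᵥ w := dp_self_nonneg w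
      linarith
end

section
/- (Robust minimal dwell-time.) Let T > 0 and let A₁, …, A_{N_A} and J₁, …, J_{N_J} be real n×n matrices. Suppose there exist a real symmetric positive definite n×n matrix P and, for each j = 1, …, N_J, real symmetric positive definite n×n matrices Zⱼ, real symmetric n×n matrices Qⱼ and Uⱼ, real n×n matrices Rⱼ, and real n×2n matrices Nⱼ such that Ψᵢⱼ(T), Φᵢⱼ(T), and AᵢᵀP + PAᵢ are all negative definite for all i = 1, …, N_A and all j = 1, …, N_J. Then ℐ(P,A,J,θ) is negative definite for every θ ≥ T, every A in the convex hull of {A₁, …, A_{N_A}}, and every J in the convex hull of {J₁, …, J_{N_J}}; consequently, for every sequence (T_k)_{k∈ℕ} with T_k ≥ T and every such pair (A, J), the sequence x_{k+1} = exp(T_k·A)·J·x_k tends to 0 for every initial vector x₀. -/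
open Matrix Filter

/-- The 2n×2n matrix `G⁰ᵢⱼ`. -/
def G0 {n : ℕ} (T : ℝ) (Ai Jj P Qj Rj : Matrix (Fin n) (Fin n) ℝ)
    (Nj : Matrix (Fin n) (Fin n ⊕ Fin n) ℝ) :
    Matrix (Fin n ⊕ Fin n) (Fin n ⊕ Fin n) ℝ :=
  T • He ((Mxb n)ᵀ * Aiᵀ * P * Mxb n) - (Mzb Jj)ᵀ * Qj * Mzb Jj
    + (Mmb n)ᵀ * (Jjᵀ * P * Jj - P) * Mmb n
    + He (Njᵀ * Mzb Jj - (Mzb Jj)ᵀ * Rj * Mxb n)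

/-- The 2n×2n matrix `G¹ᵢⱼ`. -/
def G1 {n : ℕ} (Ai Jj Qj Rj : Matrix (Fin n) (Fin n) ℝ) :
    Matrix (Fin n ⊕ Fin n) (Fin n ⊕ Fin n) ℝ :=
  He ((Mxb n)ᵀ * Aiᵀ * Qj * Mzb Jj + (Mxb n)ᵀ * Aiᵀ * Rj * Mxb n
    + (Mzb Jj)ᵀ * Rj * Ai * Mxb n)

/-- The 2n×2n matrix `G²ⱼ`. -/
def G2 {n : ℕ} (Jj Uj : Matrix (Fin n) (Fin n) ℝ) :
    Matrix (Fin n ⊕ Fin n) (Fin n ⊕ Fin n) ℝ :=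
  (Mmb n)ᵀ * Jjᵀ * Uj * Jj * Mmb n

/-- The 3n×3n block matrix `Ψᵢⱼ(T)`. -/
noncomputable def PsiR {n : ℕ} (T : ℝ) (Ai Jj P Zj Qj Uj Rj : Matrix (Fin n) (Fin n) ℝ)
    (Nj : Matrix (Fin n) (Fin n ⊕ Fin n) ℝ) :
    Matrix ((Fin n ⊕ Fin n) ⊕ Fin n) ((Fin n ⊕ Fin n) ⊕ Fin n) ℝ :=
  Matrix.fromBlocks (G0 T Ai Jj P Qj Rj Nj + T • (G1 Ai Jj Qj Rj + G2 Jj Uj))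
    ((Mxb n)ᵀ * Aiᵀ * Zj) (Zj * Ai * Mxb n) (-(T⁻¹ • Zj))

/-- The 3n×3n block matrix `Φᵢⱼ(T)`. -/
noncomputable def PhiR {n : ℕ} (T : ℝ) (Ai Jj P Zj Qj Uj Rj : Matrix (Fin n) (Fin n) ℝ)
    (Nj : Matrix (Fin n) (Fin n ⊕ Fin n) ℝ) :
    Matrix ((Fin n ⊕ Fin n) ⊕ Fin n) ((Fin n ⊕ Fin n) ⊕ Fin n) ℝ :=
  Matrix.fromBlocks (G0 T Ai Jj P Qj Rj Nj - T • G2 Jj Uj) Njᵀ Nj (-(T⁻¹ • Zj))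

namespace Stmt16Aux

lemma dp_trans {k m : Type*} [Fintype k] [Fintype m] (M : Matrix m k ℝ) (x : k → ℝ)
    (u : m → ℝ) : x ⬝ᵥ Mᵀ.mulVec u = M.mulVec x ⬝ᵥ u := by
  rw [Matrix.dotProduct_mulVec, Matrix.vecMul_transpose]

lemma dp_symm {m : Type*} [Fintype m] {M : Matrix m m ℝ} (hM : Mᵀ = M) (x u : m → ℝ) :
    x ⬝ᵥ M.mulVec u = u ⬝ᵥ M.mulVec x := by
  conv_lhs => rw [← hM]
  rw [dp_trans, dotProduct_comm]

lemma mulVec_sumv {m k : Type*} [Fintype m] [Fintype k] (M : Matrix m k ℝ) {ι : Type*}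
    (s : Finset ι) (f : ι → k → ℝ) :
    M.mulVec (∑ i ∈ s, f i) = ∑ i ∈ s, M.mulVec (f i) := by
  exact Matrix.mulVec_sum M s f

lemma sum_smul_mulVec {m : Type*} [Fintype m] {ι : Type*} (s : Finset ι) (c : ι → ℝ)
    (M : ι → Matrix m m ℝ) (v : m → ℝ) :
    (∑ i ∈ s, c i • M i).mulVec v = ∑ i ∈ s, c i • ((M i).mulVec v) := by
  ext j
  simp only [Matrix.mulVec, dotProduct, Finset.sum_apply, Pi.smul_apply, smul_eq_mul,
    Matrix.sum_apply, Matrix.smul_apply, Finset.sum_mul, Finset.mul_sum]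
  rw [Finset.sum_comm]
  exact Finset.sum_congr rfl fun i _ => Finset.sum_congr rfl fun j' _ => by ring

lemma sumv_dotProduct {m : Type*} [Fintype m] {ι : Type*} (s : Finset ι) (f : ι → m → ℝ)
    (w : m → ℝ) : (∑ i ∈ s, f i) ⬝ᵥ w = ∑ i ∈ s, f i ⬝ᵥ w := by
  simp only [dotProduct, Finset.sum_apply, Finset.sum_mul]
  rw [Finset.sum_comm]

lemma dotProduct_sumv {m : Type*} [Fintype m] {ι : Type*} (s : Finset ι) (v : m → ℝ)
    (f : ι → m → ℝ) : v ⬝ᵥ (∑ i ∈ s, f i) = ∑ i ∈ s, v ⬝ᵥ f i := by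
  simp only [dotProduct, Finset.sum_apply, Finset.mul_sum]
  rw [Finset.sum_comm]

lemma convex_neg_sum {ι : Type*} [Fintype ι] {la : ι → ℝ} {q : ι → ℝ}
    (h : ∀ i, q i < 0) (hla : ∀ i, 0 ≤ la i) (h1 : ∑ i, la i = 1) :
    ∑ i, la i * q i < 0 := by
  obtain ⟨i0, hi0⟩ : ∃ i, 0 < la i := by
    by_contra hc
    push_neg at hc
    have : ∀ i ∈ Finset.univ, la i = 0 := fun i _ => le_antisymm (hc i) (hla i)
    rw [Finset.sum_congr rfl this] at h1
    simp at h1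
  have : ∑ i, la i * q i < ∑ i : ι, (0 : ℝ) := by
    apply Finset.sum_lt_sum
    · exact fun i _ => mul_nonpos_of_nonneg_of_nonpos (hla i) (h i).le
    · exact ⟨i0, Finset.mem_univ _, by nlinarith [h i0]⟩
  simpa using this

lemma quad_sum_le {m ι : Type*} [Fintype m] [Fintype ι] (S : Matrix m m ℝ)
    (hS : ∀ v, 0 ≤ v ⬝ᵥ S.mulVec v) (v : ι → m → ℝ) (mu : ι → ℝ)
    (hmu : ∀ j, 0 ≤ mu j) (h1 : ∑ j, mu j = 1) :
    (∑ j, mu j • v j) ⬝ᵥ S.mulVec (∑ j, mu j • v j) ≤ ∑ j, mu j * (v j ⬝ᵥ S.mulVec (v j)) := by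
  set B : ι → ι → ℝ := fun j k => v j ⬝ᵥ S.mulVec (v k) with hB
  have hV : (∑ j, mu j • v j) ⬝ᵥ S.mulVec (∑ j, mu j • v j)
      = ∑ j, ∑ k, mu j * mu k * B j k := by
    rw [mulVec_sumv]
    rw [sumv_dotProduct]
    refine Finset.sum_congr rfl fun j _ => ?_
    rw [smul_dotProduct, dotProduct_sumv, smul_eq_mul, Finset.mul_sum]
    refine Finset.sum_congr rfl fun k _ => ?_
    rw [Matrix.mulVec_smul, dotProduct_smul, smul_eq_mul, hB]
    ring
  have key : 0 ≤ ∑ j, ∑ k, mu j * mu k * ((v j - v k) ⬝ᵥ S.mulVec (v j - v k)) := by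
    apply Finset.sum_nonneg; intro j _
    apply Finset.sum_nonneg; intro k _
    exact mul_nonneg (mul_nonneg (hmu j) (hmu k)) (hS _)
  have expand : ∑ j, ∑ k, mu j * mu k * ((v j - v k) ⬝ᵥ S.mulVec (v j - v k))
      = 2 * (∑ j, mu j * B j j) - 2 * (∑ j, ∑ k, mu j * mu k * B j k) := by
    have hpt : ∀ j k, (v j - v k) ⬝ᵥ S.mulVec (v j - v k)
        = B j j - B j k - B k j + B k k := by
      intro j k
      simp only [Matrix.mulVec_sub, sub_dotProduct, dotProduct_sub, B]
      ring
    simp only [hpt, mul_sub, mul_add, Finset.sum_sub_distrib, Finset.sum_add_distrib]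
    have e1 : ∑ j, ∑ k, mu j * mu k * B j j = ∑ j, mu j * B j j := by
      refine Finset.sum_congr rfl fun j _ => ?_
      rw [show ∀ (x : ℝ), (∑ k, mu j * mu k * x) = (∑ k, mu k) * (mu j * x) from
        fun x => by rw [Finset.sum_mul]; exact Finset.sum_congr rfl fun k _ => by ring, h1]
      ring
    have e2 : ∑ j, ∑ k : ι, mu j * mu k * B k k = ∑ j, mu j * B j j := by
      rw [Finset.sum_comm]
      refine Finset.sum_congr rfl fun k _ => ?_
      rw [show ∀ (x : ℝ), (∑ j, mu j * mu k * x) = (∑ j, mu j) * (mu k * x) from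
        fun x => by rw [Finset.sum_mul]; exact Finset.sum_congr rfl fun j _ => by ring, h1]
      ring
    have e3 : ∑ j, ∑ k, mu j * mu k * B k j = ∑ j, ∑ k, mu j * mu k * B j k := by
      rw [Finset.sum_comm]
      exact Finset.sum_congr rfl fun j _ => Finset.sum_congr rfl fun k _ => by ring
    rw [e1, e2, e3]
    ring
  rw [hV]
  rw [expand] at key
  linarith

lemma quad_scale {m : Type*} [Fintype m] (M : Matrix m m ℝ) (a : ℝ) (x : m → ℝ) :
    (a • x) ⬝ᵥ M.mulVec (a • x) = a^2 * (x ⬝ᵥ M.mulVec x) := by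
  rw [Matrix.mulVec_smul, smul_dotProduct, dotProduct_smul]
  simp [smul_eq_mul]; ring

lemma continuous_quad {m : Type*} [Fintype m] (M : Matrix m m ℝ) :
    Continuous fun x : m → ℝ => x ⬝ᵥ M.mulVec x := by
  have : (fun x : m → ℝ => x ⬝ᵥ M.mulVec x)
      = fun x => ∑ i, x i * ∑ j, M i j * x j := by
    funext x; simp [dotProduct, Matrix.mulVec]
  rw [this]
  exact continuous_finset_sum _ fun i _ => (continuous_apply i).mul
    (continuous_finset_sum _ fun j _ => continuous_const.mul (continuous_apply j))

lemma sphere_bound {m : Type*} [Fintype m] [Nonempty m] (M : Matrix m m ℝ) :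
    ∃ u : m → ℝ, ‖u‖ = 1 ∧ ∀ w : m → ℝ, ‖w‖ = 1 →
      w ⬝ᵥ M.mulVec w ≤ u ⬝ᵥ M.mulVec u := by
  have hc : IsCompact (Metric.sphere (0 : m → ℝ) 1) := isCompact_sphere _ _
  have hne : (Metric.sphere (0 : m → ℝ) 1).Nonempty := by
    apply NormedSpace.sphere_nonempty.2
    norm_num
  obtain ⟨u, hu, hmax⟩ := hc.exists_isMaxOn hne (continuous_quad M).continuousOn
  exact ⟨u, by simpa using hu, fun w hw => hmax (by simpa using hw)⟩

lemma sphere_bound_min {m : Type*} [Fintype m] [Nonempty m] (M : Matrix m m ℝ) :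
    ∃ u : m → ℝ, ‖u‖ = 1 ∧ ∀ w : m → ℝ, ‖w‖ = 1 →
      u ⬝ᵥ M.mulVec u ≤ w ⬝ᵥ M.mulVec w := by
  have hc : IsCompact (Metric.sphere (0 : m → ℝ) 1) := isCompact_sphere _ _
  have hne : (Metric.sphere (0 : m → ℝ) 1).Nonempty := by
    apply NormedSpace.sphere_nonempty.2
    norm_num
  obtain ⟨u, hu, hmin⟩ := hc.exists_isMinOn hne (continuous_quad M).continuousOn
  exact ⟨u, by simpa using hu, fun w hw => hmin (by simpa using hw)⟩

lemma quad_le_of_sphere {m : Type*} [Fintype m] (M : Matrix m m ℝ) (c : ℝ)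
    (h : ∀ w : m → ℝ, ‖w‖ = 1 → w ⬝ᵥ M.mulVec w ≤ c) (x : m → ℝ) :
    x ⬝ᵥ M.mulVec x ≤ c * ‖x‖^2 := by
  rcases eq_or_ne x 0 with rfl | hx
  · simp
  · have hn : ‖x‖ ≠ 0 := norm_ne_zero_iff.2 hx
    have hu : ‖(‖x‖⁻¹ • x)‖ = 1 := by
      rw [norm_smul]; simp [abs_of_nonneg (inv_nonneg.2 (norm_nonneg x)), inv_mul_cancel₀ hn]
    have := h _ hu
    rw [quad_scale] at this
    have h2 : (‖x‖⁻¹)^2 * (x ⬝ᵥ M.mulVec x) ≤ c := this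
    have h3 : (‖x‖)^2 > 0 := by positivity
    calc x ⬝ᵥ M.mulVec x = ‖x‖^2 * ((‖x‖⁻¹)^2 * (x ⬝ᵥ M.mulVec x)) := by
          field_simp
      _ ≤ ‖x‖^2 * c := by nlinarith
      _ = c * ‖x‖^2 := by ring

lemma quad_ge_of_sphere {m : Type*} [Fintype m] (M : Matrix m m ℝ) (c : ℝ)
    (h : ∀ w : m → ℝ, ‖w‖ = 1 → c ≤ w ⬝ᵥ M.mulVec w) (x : m → ℝ) :
    c * ‖x‖^2 ≤ x ⬝ᵥ M.mulVec x := by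
  have := quad_le_of_sphere (-M) (-c) (fun w hw => by
    simp only [Matrix.neg_mulVec, dotProduct_neg]
    linarith [h w hw]) x
  simp only [Matrix.neg_mulVec, dotProduct_neg] at this
  linarith

variable {n : ℕ}

lemma hasDerivAt_dotMulVec {f g : ℝ → Fin n → ℝ} {f' g' : Fin n → ℝ} {s : ℝ}
    (K : Matrix (Fin n) (Fin n) ℝ)
    (hf : ∀ i, HasDerivAt (fun t => f t i) (f' i) s)
    (hg : ∀ i, HasDerivAt (fun t => g t i) (g' i) s) :
    HasDerivAt (fun t => f t ⬝ᵥ K.mulVec (g t))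
      (f' ⬝ᵥ K.mulVec (g s) + f s ⬝ᵥ K.mulVec g') s := by
  have h : ∀ i ∈ Finset.univ, HasDerivAt (fun t => ∑ j, f t i * (K i j * g t j))
      (∑ j, (f' i * (K i j * g s j) + f s i * (K i j * g' j))) s := by
    intro i _
    exact HasDerivAt.fun_sum (fun j _ => ((hf i).mul ((hg j).const_mul _)))
  have h2 := HasDerivAt.fun_sum h
  convert h2 using 1
  · rfl
  · rfl
  · funext t
    simp [dotProduct, Matrix.mulVec, Finset.mul_sum]
  · simp [dotProduct, Matrix.mulVec, Finset.mul_sum, Finset.sum_add_distrib]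

lemma continuous_dotMulVec {f g : ℝ → Fin n → ℝ} (K : Matrix (Fin n) (Fin n) ℝ)
    (hf : ∀ i, Continuous fun t => f t i) (hg : ∀ i, Continuous fun t => g t i) :
    Continuous fun t => f t ⬝ᵥ K.mulVec (g t) := by
  have : (fun t => f t ⬝ᵥ K.mulVec (g t))
      = fun t => ∑ i, f t i * ∑ j, K i j * g t j := by
    funext t; simp [dotProduct, Matrix.mulVec]
  rw [this]
  exact continuous_finset_sum _ fun i _ => (hf i).mul
    (continuous_finset_sum _ fun j _ => continuous_const.mul (hg j))

section MexpDeriv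
attribute [local instance] Matrix.linftyOpNormedRing Matrix.linftyOpNormedAlgebra

lemma hasDerivAt_mexp_apply (A : Matrix (Fin n) (Fin n) ℝ) (c : Fin n → ℝ)
    (s : ℝ) (i : Fin n) :
    HasDerivAt (fun t : ℝ => (mexp (t • A)).mulVec c i)
      (A.mulVec ((mexp (s • A)).mulVec c) i) s := by
  haveI : CompleteSpace (Matrix (Fin n) (Fin n) ℝ) := FiniteDimensional.complete ℝ _
  have h := hasDerivAt_exp_smul_const' (𝕂 := ℝ) A s
  let L : Matrix (Fin n) (Fin n) ℝ →ₗ[ℝ] ℝ :=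
    { toFun := fun M => M.mulVec c i
      map_add' := by intro x y; simp [Matrix.add_mulVec]
      map_smul' := by intro m x; simp [Matrix.smul_mulVec] }
  have hL := (LinearMap.toContinuousLinearMap L).hasFDerivAt.comp_hasDerivAt s h
  convert hL using 1
  · rfl
  · rfl
  · rfl
  change _ = ((A * NormedSpace.exp (s • A)) *ᵥ c) i
  simp [L, ← Matrix.mulVec_mulVec, mexp]

end MexpDeriv

lemma mexp_zero_smul (A : Matrix (Fin n) (Fin n) ℝ) : mexp ((0:ℝ) • A) = 1 := by
  rw [zero_smul, mexp, NormedSpace.exp_zero]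

lemma mexp_transpose (t : ℝ) (A : Matrix (Fin n) (Fin n) ℝ) :
    mexp (t • Aᵀ) = (mexp (t • A))ᵀ := by
  rw [mexp, mexp, ← Matrix.transpose_smul, Matrix.exp_transpose]

/-- Quadratic form along the flow is non-increasing when `AᵀP+PA ⪯ 0`. -/
lemma quad_exp_mono (A P : Matrix (Fin n) (Fin n) ℝ)
    (hAP : ∀ x : Fin n → ℝ, x ⬝ᵥ ((Aᵀ * P + P * A).mulVec x) ≤ 0)
    (v : Fin n → ℝ) {T θ : ℝ} (hθ : T ≤ θ) :
    (mexp (θ • A)).mulVec v ⬝ᵥ P.mulVec ((mexp (θ • A)).mulVec v)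
      ≤ (mexp (T • A)).mulVec v ⬝ᵥ P.mulVec ((mexp (T • A)).mulVec v) := by
  set w : ℝ → Fin n → ℝ := fun s => (mexp (s • A)).mulVec v with hw_def
  have hw : ∀ (s : ℝ) (i : Fin n), HasDerivAt (fun t => w t i) (A.mulVec (w s) i) s :=
    fun s i => hasDerivAt_mexp_apply A v s i
  set f : ℝ → ℝ := fun s => w s ⬝ᵥ P.mulVec (w s) with hf_def
  have hder : ∀ s, HasDerivAt f
      (A.mulVec (w s) ⬝ᵥ P.mulVec (w s) + w s ⬝ᵥ P.mulVec (A.mulVec (w s))) s :=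
    fun s => hasDerivAt_dotMulVec P (hw s) (hw s)
  have hderneg : ∀ s : ℝ, A.mulVec (w s) ⬝ᵥ P.mulVec (w s)
      + w s ⬝ᵥ P.mulVec (A.mulVec (w s)) ≤ 0 := by
    intro s
    have := hAP (w s)
    rw [Matrix.add_mulVec, dotProduct_add, ← Matrix.mulVec_mulVec, ← Matrix.mulVec_mulVec,
      dp_trans] at this
    linarith
  have hdiff : Differentiable ℝ f := fun s => (hder s).differentiableAt
  have hanti : AntitoneOn f (Set.Icc T θ) := by
    apply antitoneOn_of_deriv_nonpos (convex_Icc T θ) hdiff.continuous.continuousOn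
      (hdiff.differentiableOn)
    intro x _
    rw [(hder x).deriv]
    exact hderneg x
  exact hanti (Set.left_mem_Icc.2 hθ) (Set.right_mem_Icc.2 hθ) hθ

@[simp] lemma Mxb_mulVec (a b : Fin n → ℝ) : (Mxb n).mulVec (Sum.elim a b) = a := by
  simp [Mxb, Matrix.fromCols_mulVec_sumElim]
@[simp] lemma Mmb_mulVec (a b : Fin n → ℝ) : (Mmb n).mulVec (Sum.elim a b) = b := by
  simp [Mmb, Matrix.fromCols_mulVec_sumElim]
@[simp] lemma Mzb_mulVec (J : Matrix (Fin n) (Fin n) ℝ) (a b : Fin n → ℝ) :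
    (Mzb J).mulVec (Sum.elim a b) = a - J.mulVec b := by
  simp [Mzb, Matrix.fromCols_mulVec_sumElim, Matrix.neg_mulVec, sub_eq_add_neg]

/-- The common part `Cψ` of the quadratic forms. -/
noncomputable def FG0 {n : ℕ} (T : ℝ) (J P Q R : Matrix (Fin n) (Fin n) ℝ)
    (N : Matrix (Fin n) (Fin n ⊕ Fin n) ℝ) (a b : Fin n → ℝ) : ℝ :=
  - ((a - J.mulVec b) ⬝ᵥ Q.mulVec (a - J.mulVec b))
  + (J.mulVec b ⬝ᵥ P.mulVec (J.mulVec b) - b ⬝ᵥ P.mulVec b)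
  + (N.mulVec (Sum.elim a b) ⬝ᵥ a - N.mulVec (Sum.elim a b) ⬝ᵥ J.mulVec b
      - (a - J.mulVec b) ⬝ᵥ R.mulVec a
      + ((a - J.mulVec b) ⬝ᵥ N.mulVec (Sum.elim a b)
        - (R.mulVec a ⬝ᵥ a - R.mulVec a ⬝ᵥ J.mulVec b)))

/-- Quadratic form of `PsiR`, as an affine function of `d = A *ᵥ a`. -/
noncomputable def FPsi {n : ℕ} (T : ℝ) (J P Z Q U R : Matrix (Fin n) (Fin n) ℝ)
    (N : Matrix (Fin n) (Fin n ⊕ Fin n) ℝ) (a b z d : Fin n → ℝ) : ℝ :=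
  FG0 T J P Q R N a b
  + T * (J.mulVec b ⬝ᵥ U.mulVec (J.mulVec b))
  - T⁻¹ * (z ⬝ᵥ Z.mulVec z)
  + d ⬝ᵥ ((2*T) • (P.mulVec a) + (2*T) • (Q.mulVec (a - J.mulVec b))
      + (2*T) • (R.mulVec a) + (2*T) • (Rᵀ.mulVec (a - J.mulVec b))
      + Z.mulVec z + Zᵀ.mulVec z)

/-- Quadratic form of `PhiR`, as an affine function of `d = A *ᵥ a`. -/
noncomputable def FPhi {n : ℕ} (T : ℝ) (J P Z Q U R : Matrix (Fin n) (Fin n) ℝ)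
    (N : Matrix (Fin n) (Fin n ⊕ Fin n) ℝ) (a b z d : Fin n → ℝ) : ℝ :=
  FG0 T J P Q R N a b
  - T * (J.mulVec b ⬝ᵥ U.mulVec (J.mulVec b))
  - T⁻¹ * (z ⬝ᵥ Z.mulVec z)
  + N.mulVec (Sum.elim a b) ⬝ᵥ z + z ⬝ᵥ N.mulVec (Sum.elim a b)
  + d ⬝ᵥ ((2*T) • (P.mulVec a))

lemma evalPsi (T : ℝ) (A J P Z Q U R : Matrix (Fin n) (Fin n) ℝ)
    (N : Matrix (Fin n) (Fin n ⊕ Fin n) ℝ) (a b z : Fin n → ℝ) :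
    Sum.elim (Sum.elim a b) z ⬝ᵥ (PsiR T A J P Z Q U R N).mulVec (Sum.elim (Sum.elim a b) z)
      = FPsi T J P Z Q U R N a b z (A.mulVec a) := by
  have c4 : (A.mulVec a) ⬝ᵥ Rᵀ.mulVec (a - J.mulVec b)
      = (a - J.mulVec b) ⬝ᵥ R.mulVec (A.mulVec a) := by
    rw [dp_trans, dotProduct_comm]
  have c5 : (A.mulVec a) ⬝ᵥ Rᵀ.mulVec a = R.mulVec (A.mulVec a) ⬝ᵥ a := dp_trans ..
  have c7 : (A.mulVec a) ⬝ᵥ Zᵀ.mulVec z = z ⬝ᵥ Z.mulVec (A.mulVec a) := by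
    rw [dp_trans, dotProduct_comm]
  simp only [PsiR, Matrix.fromBlocks_mulVec, sumElim_dotProduct_sumElim,
    G0, G1, G2, He, Matrix.transpose_mul, Matrix.transpose_transpose, Matrix.transpose_smul,
    Matrix.transpose_add, Matrix.transpose_sub, Matrix.add_mulVec, Matrix.sub_mulVec,
    Matrix.neg_mulVec, Matrix.smul_mulVec, ← Matrix.mulVec_mulVec, dotProduct_add,
    dotProduct_sub, dotProduct_neg, dotProduct_smul, dp_trans, Mxb_mulVec, Mmb_mulVec,
    Mzb_mulVec, smul_eq_mul, Sum.elim_comp_inl, Sum.elim_comp_inr]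
  have c6 : (A.mulVec a) ⬝ᵥ Rᵀ.mulVec (J.mulVec b)
      = R.mulVec (A.mulVec a) ⬝ᵥ J.mulVec b := dp_trans ..
  have k1 : ∀ u : Fin n → ℝ, u ⬝ᵥ A.mulVec a = A.mulVec a ⬝ᵥ u :=
    fun u => dotProduct_comm u _
  have k2 : ∀ u : Fin n → ℝ, u ⬝ᵥ R.mulVec (A.mulVec a) = R.mulVec (A.mulVec a) ⬝ᵥ u :=
    fun u => dotProduct_comm u _
  simp only [FPsi, FG0, dotProduct_add, dotProduct_smul, smul_eq_mul, c4, c5, c7,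
    Matrix.mulVec_sub, dotProduct_sub, sub_dotProduct, c6, k1, k2]
  ring

lemma evalPhi (T : ℝ) (A J P Z Q U R : Matrix (Fin n) (Fin n) ℝ)
    (N : Matrix (Fin n) (Fin n ⊕ Fin n) ℝ) (a b z : Fin n → ℝ) :
    Sum.elim (Sum.elim a b) z ⬝ᵥ (PhiR T A J P Z Q U R N).mulVec (Sum.elim (Sum.elim a b) z)
      = FPhi T J P Z Q U R N a b z (A.mulVec a) := by
  have k1 : ∀ u : Fin n → ℝ, u ⬝ᵥ A.mulVec a = A.mulVec a ⬝ᵥ u :=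
    fun u => dotProduct_comm u _
  simp only [PhiR, Matrix.fromBlocks_mulVec, sumElim_dotProduct_sumElim,
    G0, G1, G2, He, Matrix.transpose_mul, Matrix.transpose_transpose, Matrix.transpose_smul,
    Matrix.transpose_add, Matrix.transpose_sub, Matrix.add_mulVec, Matrix.sub_mulVec,
    Matrix.neg_mulVec, Matrix.smul_mulVec, ← Matrix.mulVec_mulVec, dotProduct_add,
    dotProduct_sub, dotProduct_neg, dotProduct_smul, dp_trans, Mxb_mulVec, Mmb_mulVec,
    Mzb_mulVec, smul_eq_mul, Sum.elim_comp_inl, Sum.elim_comp_inr]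
  simp only [FPhi, FG0, dotProduct_add, dotProduct_smul, smul_eq_mul,
    Matrix.mulVec_sub, dotProduct_sub, sub_dotProduct, k1]
  ring

/-- `FPsi` is affine in `d`. -/
lemma FPsi_affine {ι : Type*} [Fintype ι] (T : ℝ)
    (J P Z Q U R : Matrix (Fin n) (Fin n) ℝ) (N : Matrix (Fin n) (Fin n ⊕ Fin n) ℝ)
    (a b z : Fin n → ℝ) (la : ι → ℝ) (d : ι → Fin n → ℝ) (h1 : ∑ i, la i = 1) :
    FPsi T J P Z Q U R N a b z (∑ i, la i • d i)
      = ∑ i, la i * FPsi T J P Z Q U R N a b z (d i) := by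
  simp only [FPsi, sumv_dotProduct, smul_dotProduct, smul_eq_mul]
  rw [show ∀ (C : ℝ) (x : ι → ℝ), (∑ i, la i * (C + x i)) = (∑ i, la i) * C + ∑ i, la i * x i from ?_]
  · rw [h1]; ring
  · intro C x
    rw [Finset.sum_mul, ← Finset.sum_add_distrib]
    exact Finset.sum_congr rfl fun i _ => by ring

/-- `FPhi` is affine in `d`. -/
lemma FPhi_affine {ι : Type*} [Fintype ι] (T : ℝ)
    (J P Z Q U R : Matrix (Fin n) (Fin n) ℝ) (N : Matrix (Fin n) (Fin n ⊕ Fin n) ℝ)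
    (a b z : Fin n → ℝ) (la : ι → ℝ) (d : ι → Fin n → ℝ) (h1 : ∑ i, la i = 1) :
    FPhi T J P Z Q U R N a b z (∑ i, la i • d i)
      = ∑ i, la i * FPhi T J P Z Q U R N a b z (d i) := by
  simp only [FPhi, sumv_dotProduct, smul_dotProduct, smul_eq_mul]
  rw [show ∀ (C : ℝ) (x : ι → ℝ), (∑ i, la i * (C + x i)) = (∑ i, la i) * C + ∑ i, la i * x i from ?_]
  · rw [h1]; ring
  · intro C x
    rw [Finset.sum_mul, ← Finset.sum_add_distrib]
    exact Finset.sum_congr rfl fun i _ => by ring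

/-- Core single-vertex dwell-time lemma. -/
lemma core {T : ℝ} (hT : 0 < T) (A J P Z Q U R : Matrix (Fin n) (Fin n) ℝ)
    (N : Matrix (Fin n) (Fin n ⊕ Fin n) ℝ)
    (hPsym : Pᵀ = P) (hZsym : Zᵀ = Z) (hQsym : Qᵀ = Q)
    (hZpsd : ∀ vv : Fin n → ℝ, 0 ≤ vv ⬝ᵥ Z.mulVec vv)
    (hZZ : ∀ u : Fin n → ℝ, Z.mulVec (Z⁻¹.mulVec u) = u)
    (hPsiN : negDef (PsiR T A J P Z Q U R N))
    (hPhiN : negDef (PhiR T A J P Z Q U R N)) :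
    negDef (scrI P A J T) := by
  intro y hy
  set w : ℝ → Fin n → ℝ := fun s => (mexp (s • A)).mulVec (J.mulVec y) with hw_def
  set dw : ℝ → Fin n → ℝ := fun s => A.mulVec (w s) with hdw_def
  have hw : ∀ (s : ℝ) (i : Fin n), HasDerivAt (fun t => w t i) (dw s i) s := by
    intro s i
    simpa only [hw_def, hdw_def] using hasDerivAt_mexp_apply A (J.mulVec y) s i
  have hw0 : w 0 = J.mulVec y := by
    simp only [hw_def]; rw [mexp_zero_smul, Matrix.one_mulVec]
  have hwc : ∀ i, Continuous fun t => w t i := fun i =>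
    (Differentiable.continuous fun t => (hw t i).differentiableAt)
  have hdwc : ∀ i, Continuous fun t => dw t i := by
    intro i
    have he : (fun t => dw t i) = fun t => ∑ j, A i j * w t j := by
      funext t; simp [hdw_def, Matrix.mulVec, dotProduct]
    rw [he]
    exact continuous_finset_sum _ fun j _ => continuous_const.mul (hwc j)
  set h : ℝ → ℝ := fun u => dw u ⬝ᵥ Z.mulVec (dw u) with hh_def
  have hhc : Continuous h := continuous_dotMulVec Z hdwc hdwc
  set g : ℝ → ℝ := fun s => ∫ u in (0:ℝ)..s, h u with hg_def
  have hgd : ∀ s, HasDerivAt g (h s) s := by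
    intro s
    exact intervalIntegral.integral_hasDerivAt_right (hhc.intervalIntegrable _ _)
      hhc.aestronglyMeasurable.stronglyMeasurableAtFilter hhc.continuousAt
  -- FTC for linear functionals along the flow
  have hdot_cont : ∀ vv : Fin n → ℝ, Continuous fun u => vv ⬝ᵥ dw u := by
    intro vv
    have he : (fun u => vv ⬝ᵥ dw u) = fun u => ∑ i, vv i * dw u i := by
      funext u; simp [dotProduct]
    rw [he]; exact continuous_finset_sum _ fun i _ => continuous_const.mul (hdwc i)
  have hFTC : ∀ (vv : Fin n → ℝ) (s : ℝ),
      (∫ u in (0:ℝ)..s, vv ⬝ᵥ dw u) = vv ⬝ᵥ (w s - w 0) := by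
    intro vv s
    have hder : ∀ u ∈ Set.uIcc (0:ℝ) s, HasDerivAt (fun t => vv ⬝ᵥ w t) (vv ⬝ᵥ dw u) u := by
      intro u _
      have hsum : HasDerivAt (fun t => ∑ i, vv i * w t i) (∑ i, vv i * dw u i) u :=
        HasDerivAt.fun_sum fun i _ => ((hw u i).const_mul (vv i))
      simpa [dotProduct] using hsum
    rw [intervalIntegral.integral_eq_sub_of_hasDerivAt hder
      ((hdot_cont vv).intervalIntegrable _ _), dotProduct_sub]
  -- The free-matrix integral bound
  have hIntB : ∀ (vv : Fin n → ℝ) (s : ℝ), 0 ≤ s →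
      0 ≤ g s - 2 * (vv ⬝ᵥ (w s - w 0)) + s * (vv ⬝ᵥ Z⁻¹.mulVec vv) := by
    intro vv s hs
    set cc := Z⁻¹.mulVec vv with hcc
    have e2 : ∀ u, dw u ⬝ᵥ Z.mulVec cc = vv ⬝ᵥ dw u := by
      intro u; rw [hcc, hZZ, dotProduct_comm]
    have e1 : ∀ u, cc ⬝ᵥ Z.mulVec (dw u) = vv ⬝ᵥ dw u := by
      intro u; rw [dp_symm hZsym, e2]
    have e3 : cc ⬝ᵥ Z.mulVec cc = vv ⬝ᵥ Z⁻¹.mulVec vv := by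
      rw [hcc, hZZ, dotProduct_comm]
    have hq : ∀ u : ℝ, (dw u - cc) ⬝ᵥ Z.mulVec (dw u - cc)
        = h u - 2 * (vv ⬝ᵥ dw u) + vv ⬝ᵥ Z⁻¹.mulVec vv := by
      intro u
      rw [Matrix.mulVec_sub, dotProduct_sub, sub_dotProduct, sub_dotProduct,
        e1 u, e2 u, e3]
      simp only [hh_def]
      ring
    have hint : 0 ≤ ∫ u in (0:ℝ)..s, (dw u - cc) ⬝ᵥ Z.mulVec (dw u - cc) :=
      intervalIntegral.integral_nonneg hs (fun u _ => hZpsd _)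
    have hsplit : (∫ u in (0:ℝ)..s, (dw u - cc) ⬝ᵥ Z.mulVec (dw u - cc))
        = g s - 2 * (vv ⬝ᵥ (w s - w 0)) + s * (vv ⬝ᵥ Z⁻¹.mulVec vv) := by
      have hi1 : IntervalIntegrable (fun u => h u - 2 * (vv ⬝ᵥ dw u))
          MeasureTheory.volume 0 s :=
        (hhc.sub (continuous_const.mul (hdot_cont vv))).intervalIntegrable _ _
      calc (∫ u in (0:ℝ)..s, (dw u - cc) ⬝ᵥ Z.mulVec (dw u - cc))
          = ∫ u in (0:ℝ)..s, ((h u - 2 * (vv ⬝ᵥ dw u)) + vv ⬝ᵥ Z⁻¹.mulVec vv) := by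
            apply intervalIntegral.integral_congr
            intro u _
            exact hq u
        _ = (∫ u in (0:ℝ)..s, (h u - 2 * (vv ⬝ᵥ dw u)))
              + ∫ u in (0:ℝ)..s, (vv ⬝ᵥ Z⁻¹.mulVec vv : ℝ) :=
            intervalIntegral.integral_add hi1 (intervalIntegrable_const)
        _ = ((∫ u in (0:ℝ)..s, h u) - 2 * ∫ u in (0:ℝ)..s, vv ⬝ᵥ dw u)
              + s * (vv ⬝ᵥ Z⁻¹.mulVec vv) := by
            rw [intervalIntegral.integral_sub (f := h) (g := fun u => 2 * (vv ⬝ᵥ dw u))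
              (hhc.intervalIntegrable _ _)
              ((continuous_const.mul (hdot_cont vv)).intervalIntegrable _ _),
              intervalIntegral.integral_const]
            simp only [smul_eq_mul, sub_zero]
            rw [intervalIntegral.integral_const_mul]
        _ = g s - 2 * (vv ⬝ᵥ (w s - w 0)) + s * (vv ⬝ᵥ Z⁻¹.mulVec vv) := by
            rw [hFTC vv s, hg_def]
    rw [hsplit] at hint
    exact hint
  -- scalar functions
  set py := y ⬝ᵥ P.mulVec y with hpy
  set uu := (J.mulVec y) ⬝ᵥ U.mulVec (J.mulVec y) with huu
  set v : ℝ → ℝ := fun s => w s ⬝ᵥ P.mulVec (w s) with hv_def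
  set φ : ℝ → ℝ := fun s => (w s - J.mulVec y) ⬝ᵥ Q.mulVec (w s - J.mulVec y)
      + 2 * ((w s - J.mulVec y) ⬝ᵥ R.mulVec (w s)) with hphi_def
  have hζ : ∀ (s : ℝ) (i : Fin n), HasDerivAt (fun t => (w t - J.mulVec y) i) (dw s i) s := by
    intro s i
    simpa using (hw s i).sub_const (J.mulVec y i)
  have hvd : ∀ s, HasDerivAt v (dw s ⬝ᵥ P.mulVec (w s) + w s ⬝ᵥ P.mulVec (dw s)) s := by
    intro s
    simp only [hv_def]
    exact hasDerivAt_dotMulVec P (hw s) (hw s)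
  have hphid : ∀ s, HasDerivAt φ
      ((dw s ⬝ᵥ Q.mulVec (w s - J.mulVec y) + (w s - J.mulVec y) ⬝ᵥ Q.mulVec (dw s))
       + 2 * (dw s ⬝ᵥ R.mulVec (w s) + (w s - J.mulVec y) ⬝ᵥ R.mulVec (dw s))) s := by
    intro s
    simp only [hphi_def]
    exact (hasDerivAt_dotMulVec Q (hζ s) (hζ s)).add
      ((hasDerivAt_dotMulVec R (hζ s) (hw s)).const_mul 2)
  set Θ : ℝ → ℝ := fun s => T * (v s - v 0) + s * (v 0 - py) + (T - s) * φ s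
      + (s * (T - s)) * uu + (T - s) * g s with hTheta_def
  set DΘ : ℝ → ℝ := fun s => T * (dw s ⬝ᵥ P.mulVec (w s) + w s ⬝ᵥ P.mulVec (dw s))
      + (v 0 - py)
      + ((T - s) * ((dw s ⬝ᵥ Q.mulVec (w s - J.mulVec y)
            + (w s - J.mulVec y) ⬝ᵥ Q.mulVec (dw s))
          + 2 * (dw s ⬝ᵥ R.mulVec (w s) + (w s - J.mulVec y) ⬝ᵥ R.mulVec (dw s))) - φ s)
      + (T - 2*s) * uu + ((T - s) * h s - g s) with hDTheta_def
  have hΘd : ∀ s, HasDerivAt Θ (DΘ s) s := by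
    intro s
    have h1 : HasDerivAt (fun t => T * (v t - v 0))
        (T * (dw s ⬝ᵥ P.mulVec (w s) + w s ⬝ᵥ P.mulVec (dw s))) s :=
      ((hvd s).sub_const _).const_mul T
    have h2 : HasDerivAt (fun t : ℝ => t * (v 0 - py)) (1 * (v 0 - py)) s :=
      (hasDerivAt_id s).mul_const _
    have h3 := ((hasDerivAt_const s T).sub (hasDerivAt_id s)).mul (hphid s)
    have h4 := ((hasDerivAt_id s).mul
      ((hasDerivAt_const s T).sub (hasDerivAt_id s))).mul_const uu
    have h5 := ((hasDerivAt_const s T).sub (hasDerivAt_id s)).mul (hgd s)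
    have hsum := (((h1.add h2).add h3).add h4).add h5
    have hfun : Θ = fun t => T * (v t - v 0) + t * (v 0 - py) + (T - t) * φ t
        + (t * (T - t)) * uu + (T - t) * g t := hTheta_def
    rw [hfun]
    convert hsum using 1
    · rfl
    · rfl
    · rfl
    simp only [hDTheta_def, id_eq, Pi.sub_apply]
    ring
  -- the key derivative bound
  have hDneg : ∀ s : ℝ, 0 ≤ s → s ≤ T → DΘ s < 0 := by
    intro s hs0 hsT
    set ξ : (Fin n ⊕ Fin n) → ℝ := Sum.elim (w s) y with hxi
    obtain ⟨i0, hi0⟩ := Function.ne_iff.1 hy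
    have hne1 : Sum.elim ξ (T • dw s) ≠ 0 := by
      intro hcon
      exact hi0 (by simpa [hxi] using congrFun hcon (Sum.inl (Sum.inr i0)))
    have hne2 : Sum.elim ξ (T • (Z⁻¹.mulVec (N.mulVec ξ))) ≠ 0 := by
      intro hcon
      exact hi0 (by simpa [hxi] using congrFun hcon (Sum.inl (Sum.inr i0)))
    have hqPsi : FPsi T J P Z Q U R N (w s) y (T • dw s) (dw s) < 0 := by
      have := hPsiN _ hne1
      rw [hxi] at this
      rw [evalPsi] at this
      simpa only [hdw_def] using this
    have hqPhi : FPhi T J P Z Q U R N (w s) y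
        (T • (Z⁻¹.mulVec (N.mulVec ξ))) (dw s) < 0 := by
      have := hPhiN _ hne2
      rw [hxi] at this
      rw [evalPhi] at this
      simpa only [hdw_def, hxi] using this
    have hIB := hIntB (-(N.mulVec ξ)) s hs0
    rw [hw0] at hIB
    simp only [neg_dotProduct, dotProduct_neg, Matrix.mulVec_neg, mul_neg, neg_neg] at hIB
    -- hIB : 0 ≤ g s + 2 * (N *ᵥ ξ ⬝ᵥ (w s - J *ᵥ y)) + s * (N *ᵥ ξ ⬝ᵥ Z⁻¹ *ᵥ (N *ᵥ ξ))
    have hkey : DΘ s = (1 - s/T) * FPsi T J P Z Q U R N (w s) y (T • dw s) (dw s)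
        + (s/T) * FPhi T J P Z Q U R N (w s) y (T • (Z⁻¹.mulVec (N.mulVec ξ))) (dw s)
        - (g s + 2 * (N.mulVec ξ ⬝ᵥ (w s - J.mulVec y))
            + s * (N.mulVec ξ ⬝ᵥ Z⁻¹.mulVec (N.mulVec ξ))) := by
      have s1 : w s ⬝ᵥ P.mulVec (dw s) = dw s ⬝ᵥ P.mulVec (w s) := dp_symm hPsym ..
      have s2 : (w s - J.mulVec y) ⬝ᵥ Q.mulVec (dw s)
          = dw s ⬝ᵥ Q.mulVec (w s - J.mulVec y) := dp_symm hQsym ..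
      have s3 : dw s ⬝ᵥ Rᵀ.mulVec (w s - J.mulVec y)
          = (w s - J.mulVec y) ⬝ᵥ R.mulVec (dw s) := by
        rw [dp_trans, dotProduct_comm]
      have s4 : (w s - J.mulVec y) ⬝ᵥ N.mulVec ξ = N.mulVec ξ ⬝ᵥ (w s - J.mulVec y) :=
        dotProduct_comm ..
      have s5 : (Z⁻¹.mulVec (N.mulVec ξ)) ⬝ᵥ (N.mulVec ξ)
          = N.mulVec ξ ⬝ᵥ Z⁻¹.mulVec (N.mulVec ξ) := dotProduct_comm ..
      have s6 : R.mulVec (w s) ⬝ᵥ (w s) = w s ⬝ᵥ R.mulVec (w s) := dotProduct_comm ..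
      have s7 : R.mulVec (w s) ⬝ᵥ (J.mulVec y) = J.mulVec y ⬝ᵥ R.mulVec (w s) :=
        dotProduct_comm ..
      simp only [hDTheta_def, hphi_def, hv_def, hh_def, huu, hpy, hw0, FPsi, FPhi, FG0,
        ← hxi, hZsym, Matrix.mulVec_smul, dotProduct_smul, smul_dotProduct, smul_eq_mul,
        hZZ, dotProduct_add, dotProduct_sub, s1, s2, s3, s4, s5, s6, s7]
      field_simp
      simp only [sub_dotProduct]
      ring
    have hcoef1 : 0 ≤ 1 - s/T := by
      have hle : s/T ≤ 1 := (div_le_one hT).2 hsT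
      linarith
    have hcoef2 : 0 ≤ s/T := div_nonneg hs0 hT.le
    have hcsum : (1 - s/T) + s/T = 1 := by ring
    set X := FPsi T J P Z Q U R N (w s) y (T • dw s) (dw s) with hX
    set Y := FPhi T J P Z Q U R N (w s) y (T • (Z⁻¹.mulVec (N.mulVec ξ))) (dw s) with hY
    have hM : (1 - s/T) * X + (s/T) * Y < 0 := by
      rcases le_or_gt (s/T) (1/2) with hc | hc
      · nlinarith
      · nlinarith
    rw [hkey]
    linarith [hIB, hM]
  -- strict decrease
  have hdiff : Differentiable ℝ Θ := fun s => (hΘd s).differentiableAt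
  have hanti : StrictAntiOn Θ (Set.Icc 0 T) := by
    apply strictAntiOn_of_deriv_neg (convex_Icc 0 T) hdiff.continuous.continuousOn
    intro x hx
    rw [interior_Icc] at hx
    rw [(hΘd x).deriv]
    exact hDneg x hx.1.le hx.2.le
  have hlt : Θ T < Θ 0 :=
    hanti (Set.mem_Icc.2 ⟨le_refl 0, hT.le⟩) (Set.mem_Icc.2 ⟨hT.le, le_refl T⟩) hT
  have hTheta0 : Θ 0 = 0 := by
    simp only [hTheta_def, hphi_def, hg_def, hw0, sub_self, zero_dotProduct,
      zero_mul, mul_zero, intervalIntegral.integral_same, add_zero, zero_add, dotProduct_zero]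
    try ring
  have hThetaT : Θ T = T * (v T - py) := by
    simp only [hTheta_def]; ring
  have hvT : v T - py < 0 := by
    rw [hTheta0, hThetaT] at hlt
    nlinarith
  have heval : y ⬝ᵥ (scrI P A J T).mulVec y = v T - py := by
    simp only [scrI, mexp_transpose, Matrix.sub_mulVec, dotProduct_sub,
      ← Matrix.mulVec_mulVec, dp_trans, hv_def, hpy, hw_def]
  rw [heval]
  exact hvT

lemma posDef_psd {m : Type*} [Fintype m] {M : Matrix m m ℝ} (h : posDef M) :
    ∀ v : m → ℝ, 0 ≤ v ⬝ᵥ M.mulVec v := by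
  intro v
  rcases eq_or_ne v 0 with rfl | hv
  · simp
  · exact (h v hv).le

lemma posDef_mulVec_inv {M : Matrix (Fin n) (Fin n) ℝ} (hsym : Mᵀ = M) (h : posDef M) :
    ∀ u : Fin n → ℝ, M.mulVec (M⁻¹.mulVec u) = u := by
  have hpd : M.PosDef := by
    refine Matrix.PosDef.of_dotProduct_mulVec_pos ?_ ?_
    · rw [Matrix.IsHermitian, Matrix.conjTranspose_eq_transpose_of_trivial, hsym]
    · intro x hx
      simpa using h x hx
  have hunit : IsUnit M.det := hpd.det_pos.ne'.isUnit
  intro u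
  rw [Matrix.mulVec_mulVec, Matrix.mul_nonsing_inv _ hunit, Matrix.one_mulVec]

end Stmt16Aux

open Stmt16Aux

/-- Robust minimal dwell-time: if `Ψᵢⱼ(T) ≺ 0`, `Φᵢⱼ(T) ≺ 0` and
`AᵢᵀP + PAᵢ ≺ 0` for all vertices, then `ℐ(P,A,J,θ) ≺ 0` for all `θ ≥ T`, `A ∈ co{Aᵢ}`,
`J ∈ co{Jⱼ}`; consequently every impulsive trajectory with dwell-times `T_k ≥ T` tends
to `0`. -/
theorem stmt16 {n NA NJ : ℕ} (T : ℝ) (hT : 0 < T)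
    (A : Fin NA → Matrix (Fin n) (Fin n) ℝ) (Jm : Fin NJ → Matrix (Fin n) (Fin n) ℝ)
    (P : Matrix (Fin n) (Fin n) ℝ) (hPsym : P.IsSymm) (hP : posDef P)
    (Z Q U R : Fin NJ → Matrix (Fin n) (Fin n) ℝ)
    (N : Fin NJ → Matrix (Fin n) (Fin n ⊕ Fin n) ℝ)
    (hZsym : ∀ j, (Z j).IsSymm) (hZ : ∀ j, posDef (Z j))
    (hQsym : ∀ j, (Q j).IsSymm) (hUsym : ∀ j, (U j).IsSymm)
    (hPsi : ∀ i j, negDef (PsiR T (A i) (Jm j) P (Z j) (Q j) (U j) (R j) (N j)))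
    (hPhi : ∀ i j, negDef (PhiR T (A i) (Jm j) P (Z j) (Q j) (U j) (R j) (N j)))
    (hC : ∀ i, negDef ((A i)ᵀ * P + P * A i)) :
    ∀ (la : Fin NA → ℝ) (mu : Fin NJ → ℝ),
      (∀ i, 0 ≤ la i) → ∑ i, la i = 1 → (∀ j, 0 ≤ mu j) → ∑ j, mu j = 1 →
      (∀ θ : ℝ, T ≤ θ →
        negDef (scrI P (∑ i, la i • A i) (∑ j, mu j • Jm j) θ)) ∧
      (∀ Tk : ℕ → ℝ, (∀ k, T ≤ Tk k) →
        ∀ x₀ : Fin n → ℝ, ∀ x : ℕ → Fin n → ℝ, x 0 = x₀ →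
          (∀ k, x (k + 1) =
            (mexp (Tk k • (∑ i, la i • A i)) * (∑ j, mu j • Jm j)).mulVec (x k)) →
          Tendsto x atTop (nhds 0)) := by
  intro la mu hla hla1 hmu hmu1
  set Ac := ∑ i, la i • A i with hAc
  set Jc := ∑ j, mu j • Jm j with hJc
  have hPpsd : ∀ v : Fin n → ℝ, 0 ≤ v ⬝ᵥ P.mulVec v := posDef_psd hP
  -- convexified vertex conditions
  have hPsiC : ∀ j, negDef (PsiR T Ac (Jm j) P (Z j) (Q j) (U j) (R j) (N j)) := by
    intro j ρ hρ
    set a : Fin n → ℝ := fun i => ρ (Sum.inl (Sum.inl i)) with ha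
    set b : Fin n → ℝ := fun i => ρ (Sum.inl (Sum.inr i)) with hb
    set z : Fin n → ℝ := fun i => ρ (Sum.inr i) with hz
    have hdecomp : ρ = Sum.elim (Sum.elim a b) z := by
      funext p; rcases p with (p | p) | p <;> rfl
    rw [hdecomp, evalPsi, hAc, sum_smul_mulVec,
      FPsi_affine T (Jm j) P (Z j) (Q j) (U j) (R j) (N j) a b z la
        (fun i => (A i).mulVec a) hla1]
    refine convex_neg_sum (fun i => ?_) hla hla1
    rw [← evalPsi]
    exact hPsi i j _ (by rw [← hdecomp]; exact hρ)
  have hPhiC : ∀ j, negDef (PhiR T Ac (Jm j) P (Z j) (Q j) (U j) (R j) (N j)) := by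
    intro j ρ hρ
    set a : Fin n → ℝ := fun i => ρ (Sum.inl (Sum.inl i)) with ha
    set b : Fin n → ℝ := fun i => ρ (Sum.inl (Sum.inr i)) with hb
    set z : Fin n → ℝ := fun i => ρ (Sum.inr i) with hz
    have hdecomp : ρ = Sum.elim (Sum.elim a b) z := by
      funext p; rcases p with (p | p) | p <;> rfl
    rw [hdecomp, evalPhi, hAc, sum_smul_mulVec,
      FPhi_affine T (Jm j) P (Z j) (Q j) (U j) (R j) (N j) a b z la
        (fun i => (A i).mulVec a) hla1]
    refine convex_neg_sum (fun i => ?_) hla hla1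
    rw [← evalPhi]
    exact hPhi i j _ (by rw [← hdecomp]; exact hρ)
  -- convexified Lyapunov condition
  have hexpand : ∀ (B : Matrix (Fin n) (Fin n) ℝ) (x : Fin n → ℝ),
      x ⬝ᵥ ((Bᵀ * P + P * B).mulVec x)
        = B.mulVec x ⬝ᵥ P.mulVec x + x ⬝ᵥ P.mulVec (B.mulVec x) := by
    intro B x
    rw [Matrix.add_mulVec, dotProduct_add, ← Matrix.mulVec_mulVec, ← Matrix.mulVec_mulVec,
      dp_trans]
  have hCc : negDef (Acᵀ * P + P * Ac) := by
    intro x hx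
    rw [hexpand, hAc, sum_smul_mulVec]
    have hlin : (∑ i, la i • (A i).mulVec x) ⬝ᵥ P.mulVec x
        + x ⬝ᵥ P.mulVec (∑ i, la i • (A i).mulVec x)
        = ∑ i, la i * ((A i).mulVec x ⬝ᵥ P.mulVec x + x ⬝ᵥ P.mulVec ((A i).mulVec x)) := by
      rw [sumv_dotProduct, mulVec_sumv, dotProduct_sumv, ← Finset.sum_add_distrib]
      refine Finset.sum_congr rfl fun i _ => ?_
      rw [smul_dotProduct, Matrix.mulVec_smul, dotProduct_smul, smul_eq_mul, smul_eq_mul]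
      ring
    rw [hlin]
    refine convex_neg_sum (fun i => ?_) hla hla1
    rw [← hexpand]
    exact hC i x hx
  have hCcle : ∀ v : Fin n → ℝ, v ⬝ᵥ ((Acᵀ * P + P * Ac).mulVec v) ≤ 0 := by
    intro v
    rcases eq_or_ne v 0 with rfl | hv
    · simp
    · exact (hCc v hv).le
  -- per-vertex-in-J dwell-time conclusion at the combined A
  have hScore : ∀ j, negDef (scrI P Ac (Jm j) T) := by
    intro j
    exact core hT Ac (Jm j) P (Z j) (Q j) (U j) (R j) (N j) hPsym (hZsym j) (hQsym j)
      (posDef_psd (hZ j)) (posDef_mulVec_inv (hZsym j) (hZ j)) (hPsiC j) (hPhiC j)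
  -- evaluation of the quadratic form of scrI
  have heval : ∀ (θ' : ℝ) (K : Matrix (Fin n) (Fin n) ℝ) (x : Fin n → ℝ),
      x ⬝ᵥ (scrI P Ac K θ').mulVec x
        = (mexp (θ' • Ac)).mulVec (K.mulVec x)
            ⬝ᵥ P.mulVec ((mexp (θ' • Ac)).mulVec (K.mulVec x)) - x ⬝ᵥ P.mulVec x := by
    intro θ' K x
    simp only [scrI, mexp_transpose, Matrix.sub_mulVec, dotProduct_sub,
      ← Matrix.mulVec_mulVec, dp_trans]
  -- S-quadratic form
  set S := (mexp (T • Ac))ᵀ * P * mexp (T • Ac) with hS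
  have hSq : ∀ v : Fin n → ℝ, v ⬝ᵥ S.mulVec v
      = (mexp (T • Ac)).mulVec v ⬝ᵥ P.mulVec ((mexp (T • Ac)).mulVec v) := by
    intro v
    rw [hS, ← Matrix.mulVec_mulVec, ← Matrix.mulVec_mulVec, dp_trans]
  have hSpsd : ∀ v : Fin n → ℝ, 0 ≤ v ⬝ᵥ S.mulVec v := fun v => by
    rw [hSq]; exact hPpsd _
  have hPart1 : ∀ θ : ℝ, T ≤ θ → negDef (scrI P Ac Jc θ) := by
    intro θ hθ x hx
    rw [heval]
    have hmono := quad_exp_mono Ac P hCcle (Jc.mulVec x) hθ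
    have hJx : Jc.mulVec x = ∑ j, mu j • ((Jm j).mulVec x) := by
      rw [hJc, sum_smul_mulVec]
    have hjen := quad_sum_le S hSpsd (fun j => (Jm j).mulVec x) mu hmu hmu1
    have hvertex : ∀ j, (Jm j).mulVec x ⬝ᵥ S.mulVec ((Jm j).mulVec x)
        - x ⬝ᵥ P.mulVec x < 0 := by
      intro j
      rw [hSq, ← heval T (Jm j)]
      exact hScore j x hx
    have hsum := convex_neg_sum hvertex hmu hmu1
    have hid : ∑ j, mu j * ((Jm j).mulVec x ⬝ᵥ S.mulVec ((Jm j).mulVec x))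
        = ∑ j, mu j * ((Jm j).mulVec x ⬝ᵥ S.mulVec ((Jm j).mulVec x)
            - x ⬝ᵥ P.mulVec x) + x ⬝ᵥ P.mulVec x := by
      simp only [mul_sub, Finset.sum_sub_distrib, ← Finset.sum_mul, hmu1]
      ring
    have hq1 : (Jc.mulVec x) ⬝ᵥ S.mulVec (Jc.mulVec x)
        ≤ ∑ j, mu j * ((Jm j).mulVec x ⬝ᵥ S.mulVec ((Jm j).mulVec x)) := by
      rw [hJx]; exact hjen
    have hq2 := hSq (Jc.mulVec x)
    linarith
  refine ⟨hPart1, ?_⟩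
  intro Tk hTk x0 x hx0 hxrec
  rcases Nat.eq_zero_or_pos n with hn | hn
  · haveI : Subsingleton (Fin n → ℝ) := by
      subst hn; exact ⟨fun a b => funext fun i => i.elim0⟩
    have hxz : x = fun _ => 0 := funext fun k => Subsingleton.elim _ _
    rw [hxz]
    exact tendsto_const_nhds
  haveI : Nonempty (Fin n) := ⟨⟨0, hn⟩⟩
  set M := scrI P Ac Jc T with hM
  have hMneg : negDef M := hPart1 T le_rfl
  obtain ⟨uM, huM1, huMmax⟩ := sphere_bound M
  set c := -(uM ⬝ᵥ M.mulVec uM) with hc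
  have hcpos : 0 < c := by
    have := hMneg uM (by intro h0; rw [h0] at huM1; simp at huM1)
    rw [hc]; linarith
  have hMle : ∀ v, v ⬝ᵥ M.mulVec v ≤ -c * ‖v‖^2 := fun v =>
    quad_le_of_sphere M (-c) (fun w hw => by have := huMmax w hw; rw [hc]; linarith) v
  obtain ⟨uC, huC1, huCmax⟩ := sphere_bound P
  set Cu := uC ⬝ᵥ P.mulVec uC with hCu
  have hC1 : ∀ v, v ⬝ᵥ P.mulVec v ≤ Cu * ‖v‖^2 := fun v =>
    quad_le_of_sphere P Cu (fun w hw => huCmax w hw) v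
  have hCupos : 0 < Cu := hP uC (by intro h0; rw [h0] at huC1; simp at huC1)
  set Vf : ℕ → ℝ := fun k => x k ⬝ᵥ P.mulVec (x k) with hVf
  have hVnn : ∀ k, 0 ≤ Vf k := fun k => hPpsd (x k)
  have hstep : ∀ k, Vf (k+1) ≤ Vf k + x k ⬝ᵥ M.mulVec (x k) := by
    intro k
    have hx1 : x (k+1) = (mexp (Tk k • Ac)).mulVec (Jc.mulVec (x k)) := by
      rw [hxrec k, ← Matrix.mulVec_mulVec]
    have hmono := quad_exp_mono Ac P hCcle (Jc.mulVec (x k)) (hTk k)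
    have hT' : x k ⬝ᵥ M.mulVec (x k)
        = (mexp (T • Ac)).mulVec (Jc.mulVec (x k))
            ⬝ᵥ P.mulVec ((mexp (T • Ac)).mulVec (Jc.mulVec (x k)))
          - x k ⬝ᵥ P.mulVec (x k) := by
      rw [hM]; exact heval T Jc (x k)
    have hV1 : Vf (k+1) = (mexp (Tk k • Ac)).mulVec (Jc.mulVec (x k))
        ⬝ᵥ P.mulVec ((mexp (Tk k • Ac)).mulVec (Jc.mulVec (x k))) := by
      simp only [hVf]
      rw [hx1]
    rw [hV1]
    linarith
  have hdec : ∀ k, Vf (k+1) ≤ (1 - c/Cu) * Vf k := by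
    intro k
    have h1 := hstep k
    have h2 := hMle (x k)
    have h3 := hC1 (x k)
    have key : (c/Cu) * Vf k ≤ c * ‖x k‖^2 := by
      rw [div_mul_eq_mul_div, div_le_iff₀ hCupos]
      nlinarith [mul_le_mul_of_nonneg_left h3 hcpos.le]
    nlinarith
  set r : ℝ := max (1 - c/Cu) 0 with hr
  have hr0 : 0 ≤ r := le_max_right _ _
  have hr1 : r < 1 := by
    rw [hr]
    apply max_lt
    · have : 0 < c/Cu := div_pos hcpos hCupos
      linarith
    · norm_num
  have hgeom : ∀ k, Vf k ≤ r^k * Vf 0 := by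
    intro k
    induction k with
    | zero => simp
    | succ k ih =>
      calc Vf (k+1) ≤ (1 - c/Cu) * Vf k := hdec k
        _ ≤ r * Vf k := mul_le_mul_of_nonneg_right (le_max_left _ _) (hVnn k)
        _ ≤ r * (r^k * Vf 0) := mul_le_mul_of_nonneg_left ih hr0
        _ = r^(k+1) * Vf 0 := by ring
  have hV0 : Tendsto Vf atTop (nhds 0) := by
    have hpow : Tendsto (fun k : ℕ => r^k * Vf 0) atTop (nhds 0) := by
      have := (tendsto_pow_atTop_nhds_zero_of_lt_one hr0 hr1).mul_const (Vf 0)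
      simpa using this
    exact squeeze_zero hVnn hgeom hpow
  obtain ⟨um, hum1, humin⟩ := sphere_bound_min P
  set mP := um ⬝ᵥ P.mulVec um with hmP
  have hmpos : 0 < mP := hP um (by intro h0; rw [h0] at hum1; simp at hum1)
  have hlow : ∀ k, mP * ‖x k‖^2 ≤ Vf k := fun k =>
    quad_ge_of_sphere P mP (fun w hw => humin w hw) (x k)
  have hnorm2 : Tendsto (fun k => ‖x k‖^2) atTop (nhds 0) := by
    have hdiv : Tendsto (fun k => Vf k / mP) atTop (nhds 0) := by
      simpa using hV0.div_const mP
    apply squeeze_zero (fun k => by positivity) (fun k => ?_) hdiv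
    rw [le_div_iff₀ hmpos]
    nlinarith [hlow k]
  have hnorm : Tendsto (fun k => ‖x k‖) atTop (nhds 0) := by
    have hs := hnorm2.sqrt
    rw [Real.sqrt_zero] at hs
    have he : (fun k => Real.sqrt (‖x k‖^2)) = fun k => ‖x k‖ := by
      funext k; rw [Real.sqrt_sq (norm_nonneg _)]
    rwa [he] at hs
  rw [tendsto_zero_iff_norm_tendsto_zero]
  simpa using hnorm
end

section
/- (Robust ranged dwell-time.) Let 0 < T_min ≤ T_max < ∞ and let A₁, …, A_{N_A} and J₁, …, J_{N_J} be real n×n matrices. Suppose there exist a real symmetric positive definite n×n matrix P and, for each j = 1, …, N_J, real symmetric positive definite n×n matrices Zⱼ, real symmetric n×n matrices Qⱼ and Uⱼ, real n×n matrices Rⱼ, and real n×2n matrices Nⱼ such that Ψᵢⱼ(T) and Φᵢⱼ(T) are negative definite for all T ∈ {T_min, T_max}, all i = 1, …, N_A, and all j = 1, …, N_J. Then ℐ(P,A,J,θ) is negative definite for every θ ∈ [T_min, T_max], every A in the convex hull of {A₁, …, A_{N_A}}, and every J in the convex hull of {J₁, …, J_{N_J}}; consequently, for every sequence (T_k)_{k∈ℕ}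 with T_k ∈ [T_min, T_max] and every such pair (A, J), the sequence x_{k+1} = exp(T_k·A)·J·x_k tends to 0 for every initial vector x₀. -/
open Matrix Filter

section Stmt18Helpers
-- scalar quadratic forms
variable {n : ℕ}

lemma dotTrans {m k : Type*} [Fintype m] [Fintype k] (M : Matrix m k ℝ) (v : k → ℝ) (w : m → ℝ) :
    v ⬝ᵥ Mᵀ *ᵥ w = (M *ᵥ v) ⬝ᵥ w := by
  rw [dotProduct_mulVec, Matrix.vecMul_transpose]

lemma dotTrans' {m k : Type*} [Fintype m] [Fintype k] (M : Matrix m k ℝ) (v : k → ℝ) (w : m → ℝ) :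
    (Mᵀ *ᵥ w) ⬝ᵥ v = w ⬝ᵥ (M *ᵥ v) := by
  rw [dotProduct_comm, dotTrans, dotProduct_comm]

/-- scalar form of G0 -/
def G0q (T : ℝ) (Ai Jj P Qj Rj : Matrix (Fin n) (Fin n) ℝ)
    (Nj : Matrix (Fin n) (Fin n ⊕ Fin n) ℝ) (p y : Fin n → ℝ) : ℝ :=
  T * (2 * ((Ai *ᵥ p) ⬝ᵥ P *ᵥ p)) - (p - Jj *ᵥ y) ⬝ᵥ Qj *ᵥ (p - Jj *ᵥ y)
    + ((Jj *ᵥ y) ⬝ᵥ P *ᵥ (Jj *ᵥ y) - y ⬝ᵥ P *ᵥ y)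
    + (2 * ((Nj *ᵥ Sum.elim p y) ⬝ᵥ (p - Jj *ᵥ y)) - 2 * ((p - Jj *ᵥ y) ⬝ᵥ Rj *ᵥ p))

def G1q (Ai Jj Qj Rj : Matrix (Fin n) (Fin n) ℝ) (p y : Fin n → ℝ) : ℝ :=
  2 * ((Ai *ᵥ p) ⬝ᵥ Qj *ᵥ (p - Jj *ᵥ y)) + 2 * ((Ai *ᵥ p) ⬝ᵥ Rj *ᵥ p)
    + 2 * ((p - Jj *ᵥ y) ⬝ᵥ Rj *ᵥ (Ai *ᵥ p))

def G2q (Jj Uj : Matrix (Fin n) (Fin n) ℝ) (y : Fin n → ℝ) : ℝ :=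
  (Jj *ᵥ y) ⬝ᵥ Uj *ᵥ (Jj *ᵥ y)

lemma quad_G0 (T : ℝ) (Ai Jj P Qj Rj : Matrix (Fin n) (Fin n) ℝ)
    (Nj : Matrix (Fin n) (Fin n ⊕ Fin n) ℝ) (p y : Fin n → ℝ) :
    Sum.elim p y ⬝ᵥ (G0 T Ai Jj P Qj Rj Nj) *ᵥ Sum.elim p y = G0q T Ai Jj P Qj Rj Nj p y := by
  simp only [G0, G0q, He, Mxb, Mmb, Mzb, Matrix.transpose_mul, Matrix.transpose_transpose,
    Matrix.transpose_smul, Matrix.add_mulVec, Matrix.sub_mulVec, Matrix.smul_mulVec,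
    ← Matrix.mulVec_mulVec, Matrix.fromCols_mulVec_sumElim, dotTrans, dotTrans',
    Matrix.one_mulVec, Matrix.zero_mulVec, Matrix.neg_mulVec, Matrix.mulVec_add, Matrix.mulVec_sub,
    Matrix.mulVec_neg, dotProduct_add, add_dotProduct, dotProduct_sub,
    sub_dotProduct, dotProduct_neg, neg_dotProduct, dotProduct_smul,
    smul_dotProduct, smul_eq_mul, add_zero, zero_add]
  ring_nf
  simp only [dotProduct_comm]
  ring_nf

lemma quad_G1 (Ai Jj Qj Rj : Matrix (Fin n) (Fin n) ℝ) (p y : Fin n → ℝ) :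
    Sum.elim p y ⬝ᵥ (G1 Ai Jj Qj Rj) *ᵥ Sum.elim p y = G1q Ai Jj Qj Rj p y := by
  simp only [G1, G1q, He, Mxb, Mmb, Mzb, Matrix.transpose_mul, Matrix.transpose_transpose,
    Matrix.transpose_smul, Matrix.add_mulVec, Matrix.sub_mulVec, Matrix.smul_mulVec,
    ← Matrix.mulVec_mulVec, Matrix.fromCols_mulVec_sumElim, dotTrans, dotTrans',
    Matrix.one_mulVec, Matrix.zero_mulVec, Matrix.neg_mulVec, Matrix.mulVec_add, Matrix.mulVec_sub,
    Matrix.mulVec_neg, dotProduct_add, add_dotProduct, dotProduct_sub,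
    sub_dotProduct, dotProduct_neg, neg_dotProduct, dotProduct_smul,
    smul_dotProduct, smul_eq_mul, add_zero, zero_add]
  ring_nf
  simp only [dotProduct_comm]
  ring_nf

lemma quad_G2 (Jj Uj : Matrix (Fin n) (Fin n) ℝ) (p y : Fin n → ℝ) :
    Sum.elim p y ⬝ᵥ (G2 Jj Uj) *ᵥ Sum.elim p y = G2q Jj Uj y := by
  simp only [G2, G2q, He, Mxb, Mmb, Mzb, Matrix.transpose_mul, Matrix.transpose_transpose,
    ← Matrix.mulVec_mulVec, Matrix.fromCols_mulVec_sumElim, dotTrans, dotTrans',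
    Matrix.one_mulVec, Matrix.zero_mulVec, add_zero, zero_add]

lemma quad_fromBlocks {a b : Type*} [Fintype a] [Fintype b] (A : Matrix a a ℝ) (B : Matrix a b ℝ)
    (C : Matrix b a ℝ) (D : Matrix b b ℝ) (u : a → ℝ) (w : b → ℝ) :
    Sum.elim u w ⬝ᵥ (Matrix.fromBlocks A B C D) *ᵥ Sum.elim u w
      = u ⬝ᵥ A *ᵥ u + u ⬝ᵥ B *ᵥ w + w ⬝ᵥ C *ᵥ u + w ⬝ᵥ D *ᵥ w := by
  rw [show (Sum.elim u w : a ⊕ b → ℝ) = Sum.elim u w from rfl, Matrix.fromBlocks_mulVec]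
  simp only [Sum.elim_comp_inl, Sum.elim_comp_inr, sumElim_dotProduct_sumElim,
    dotProduct_add]
  ring

lemma quad_PsiR (T : ℝ) (Ai Jj P Zj Qj Uj Rj : Matrix (Fin n) (Fin n) ℝ)
    (Nj : Matrix (Fin n) (Fin n ⊕ Fin n) ℝ) (p y w : Fin n → ℝ) :
    Sum.elim (Sum.elim p y) w ⬝ᵥ (PsiR T Ai Jj P Zj Qj Uj Rj Nj) *ᵥ Sum.elim (Sum.elim p y) w
      = G0q T Ai Jj P Qj Rj Nj p y + T * (G1q Ai Jj Qj Rj p y + G2q Jj Uj y)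
        + (Ai *ᵥ p) ⬝ᵥ Zj *ᵥ w + w ⬝ᵥ Zj *ᵥ (Ai *ᵥ p) - T⁻¹ * (w ⬝ᵥ Zj *ᵥ w) := by
  rw [PsiR, quad_fromBlocks]
  rw [Matrix.add_mulVec, Matrix.smul_mulVec, Matrix.add_mulVec,
    dotProduct_add, dotProduct_smul, dotProduct_add,
    quad_G0, quad_G1, quad_G2]
  simp only [← Matrix.mulVec_mulVec, dotTrans, dotTrans', Matrix.neg_mulVec,
    Matrix.smul_mulVec, dotProduct_neg, dotProduct_smul, smul_eq_mul, Mxb,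
    Matrix.fromCols_mulVec_sumElim, Matrix.one_mulVec, Matrix.zero_mulVec, add_zero]
  ring

lemma quad_PhiR (T : ℝ) (Ai Jj P Zj Qj Uj Rj : Matrix (Fin n) (Fin n) ℝ)
    (Nj : Matrix (Fin n) (Fin n ⊕ Fin n) ℝ) (p y w : Fin n → ℝ) :
    Sum.elim (Sum.elim p y) w ⬝ᵥ (PhiR T Ai Jj P Zj Qj Uj Rj Nj) *ᵥ Sum.elim (Sum.elim p y) w
      = G0q T Ai Jj P Qj Rj Nj p y - T * G2q Jj Uj y
        + (Nj *ᵥ Sum.elim p y) ⬝ᵥ w + w ⬝ᵥ Nj *ᵥ Sum.elim p y - T⁻¹ * (w ⬝ᵥ Zj *ᵥ w) := by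
  rw [PhiR, quad_fromBlocks]
  rw [Matrix.sub_mulVec, Matrix.smul_mulVec, dotProduct_sub, dotProduct_smul,
    quad_G0, quad_G2]
  simp only [dotTrans, dotTrans', Matrix.neg_mulVec, Matrix.smul_mulVec,
    dotProduct_neg, dotProduct_smul, smul_eq_mul]
  ring

section withnorm
attribute [local instance] Matrix.linftyOpNormedAddCommGroup Matrix.linftyOpNormedRing
  Matrix.linftyOpNormedAlgebra

lemma mexp_entry_hasDerivAt (A : Matrix (Fin n) (Fin n) ℝ) (t : ℝ) (i j : Fin n) :
    HasDerivAt (fun s : ℝ => mexp (s • A) i j) ((A * mexp (t • A)) i j) t := by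
  have h : HasDerivAt (fun s : ℝ => mexp (s • A)) (A * mexp (t • A)) t :=
    hasDerivAt_exp_smul_const' A t
  let L : Matrix (Fin n) (Fin n) ℝ →ₗ[ℝ] ℝ :=
    { toFun := fun M => M i j, map_add' := fun _ _ => rfl, map_smul' := fun _ _ => rfl }
  exact (LinearMap.toContinuousLinearMap L).hasFDerivAt.comp_hasDerivAt t h

lemma mexp_zero : mexp (0 : Matrix (Fin n) (Fin n) ℝ) = 1 := NormedSpace.exp_zero

end withnorm

lemma mexp_transpose (t : ℝ) (A : Matrix (Fin n) (Fin n) ℝ) :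
    mexp (t • Aᵀ) = (mexp (t • A))ᵀ := by
  rw [mexp, mexp, ← Matrix.transpose_smul, Matrix.exp_transpose]

lemma quad_scrI (P A J : Matrix (Fin n) (Fin n) ℝ) (T : ℝ) (v : Fin n → ℝ) :
    v ⬝ᵥ (scrI P A J T) *ᵥ v
      = (mexp (T • A) *ᵥ (J *ᵥ v)) ⬝ᵥ P *ᵥ (mexp (T • A) *ᵥ (J *ᵥ v)) - v ⬝ᵥ P *ᵥ v := by
  rw [scrI, mexp_transpose]
  simp only [Matrix.sub_mulVec, dotProduct_sub, ← Matrix.mulVec_mulVec, dotTrans, dotTrans']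

/-- `x ⬝ᵥ M *ᵥ y = y ⬝ᵥ M *ᵥ x` for symmetric `M`. -/
lemma symm_dot {M : Matrix (Fin n) (Fin n) ℝ} (hM : M.IsSymm) (x y : Fin n → ℝ) :
    x ⬝ᵥ M *ᵥ y = y ⬝ᵥ M *ᵥ x := by
  conv_lhs => rw [← hM]
  rw [dotTrans, dotProduct_comm]

lemma sum_elim_eq_zero_iff {a b : Type*} (p : a → ℝ) (y : b → ℝ) :
    (Sum.elim p y = 0) ↔ p = 0 ∧ y = 0 := by
  constructor
  · intro h
    constructor <;> ext i
    · exact congrFun h (Sum.inl i)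
    · exact congrFun h (Sum.inr i)
  · rintro ⟨hp, hy⟩; subst hp; subst hy; ext i; cases i <;> rfl

/-- strict convex combination of negatives is negative -/
lemma convex_neg_sum {m : ℕ} (la : Fin m → ℝ) (f : Fin m → ℝ) (hla : ∀ i, 0 ≤ la i)
    (hs : ∑ i, la i = 1) (hf : ∀ i, f i < 0) : ∑ i, la i * f i < 0 := by
  obtain ⟨i0, hi0⟩ : ∃ i, 0 < la i := by
    by_contra h
    push_neg at h
    have : ∑ i, la i = 0 := Finset.sum_eq_zero fun i _ => le_antisymm (h i) (hla i)
    simp [this] at hs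
  have h1 : ∑ i ∈ Finset.univ \ {i0}, la i * f i ≤ 0 :=
    Finset.sum_nonpos fun i _ => mul_nonpos_of_nonneg_of_nonpos (hla i) (hf i).le
  have h2 : la i0 * f i0 < 0 := mul_neg_of_pos_of_neg hi0 (hf i0)
  have := Finset.sum_eq_sum_sdiff_singleton_add (Finset.mem_univ i0) (fun i => la i * f i)
  linarith

/-- `(∑ f) ⬝ᵥ w = ∑ (f ⬝ᵥ w)`. -/
lemma sum_dotProduct' {m k : Type*} [Fintype m] [Fintype k] (f : k → m → ℝ) (w : m → ℝ) :
    (∑ i, f i) ⬝ᵥ w = ∑ i, f i ⬝ᵥ w := by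
  simp only [dotProduct, Finset.sum_apply, Finset.sum_mul]
  exact Finset.sum_comm

/-- Jensen for a PSD symmetric quadratic form. -/
lemma jensen_psd {m : ℕ} {Z : Matrix (Fin n) (Fin n) ℝ} (hZs : Z.IsSymm) (hZ : posSemidef Z)
    (la : Fin m → ℝ) (b : Fin m → Fin n → ℝ) (hla : ∀ i, 0 ≤ la i) (hs : ∑ i, la i = 1) :
    (∑ i, la i • b i) ⬝ᵥ Z *ᵥ (∑ i, la i • b i) ≤ ∑ i, la i * (b i ⬝ᵥ Z *ᵥ b i) := by
  set c := ∑ i, la i • b i with hc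
  have hbc : ∑ i, la i * (b i ⬝ᵥ Z *ᵥ c) = c ⬝ᵥ Z *ᵥ c := by
    rw [hc, sum_dotProduct']
    exact Finset.sum_congr rfl fun i _ => by rw [smul_dotProduct, smul_eq_mul]
  have key : ∀ i, (b i - c) ⬝ᵥ Z *ᵥ (b i - c) = b i ⬝ᵥ Z *ᵥ b i - 2 * (b i ⬝ᵥ Z *ᵥ c)
      + c ⬝ᵥ Z *ᵥ c := by
    intro i
    rw [sub_dotProduct, Matrix.mulVec_sub, dotProduct_sub, dotProduct_sub,
      symm_dot hZs c (b i)]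
    ring
  have expand : ∑ i, la i * ((b i - c) ⬝ᵥ Z *ᵥ (b i - c))
      = ∑ i, la i * (b i ⬝ᵥ Z *ᵥ b i) - c ⬝ᵥ Z *ᵥ c := by
    calc ∑ i, la i * ((b i - c) ⬝ᵥ Z *ᵥ (b i - c))
        = ∑ i, (la i * (b i ⬝ᵥ Z *ᵥ b i) - 2 * (la i * (b i ⬝ᵥ Z *ᵥ c))
            + la i * (c ⬝ᵥ Z *ᵥ c)) := Finset.sum_congr rfl fun i _ => by rw [key i]; ring
      _ = ∑ i, la i * (b i ⬝ᵥ Z *ᵥ b i) - 2 * ∑ i, la i * (b i ⬝ᵥ Z *ᵥ c)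
            + (∑ i, la i) * (c ⬝ᵥ Z *ᵥ c) := by
          rw [Finset.sum_add_distrib, Finset.sum_sub_distrib, ← Finset.mul_sum, Finset.sum_mul]
      _ = ∑ i, la i * (b i ⬝ᵥ Z *ᵥ b i) - c ⬝ᵥ Z *ᵥ c := by rw [hbc, hs]; ring
  have nn : 0 ≤ ∑ i, la i * ((b i - c) ⬝ᵥ Z *ᵥ (b i - c)) :=
    Finset.sum_nonneg fun i _ => mul_nonneg (hla i) (hZ _)
  linarith [expand ▸ nn]

lemma posDef_toPSD {Z : Matrix (Fin n) (Fin n) ℝ} (hZ : posDef Z) : posSemidef Z := by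
  intro x
  rcases eq_or_ne x 0 with h | h
  · simp [h]
  · exact (hZ x h).le

lemma posDef_det_isUnit {Z : Matrix (Fin n) (Fin n) ℝ} (hZ : posDef Z) : IsUnit Z.det := by
  rw [isUnit_iff_ne_zero]
  intro hdet
  obtain ⟨v, hv, hZv⟩ := (Matrix.exists_mulVec_eq_zero_iff).mpr hdet
  have := hZ v hv
  rw [hZv] at this
  simp [dotProduct_zero] at this

lemma inv_symm {Z : Matrix (Fin n) (Fin n) ℝ} (hZs : Z.IsSymm) : (Z⁻¹).IsSymm := by
  rw [Matrix.IsSymm, Matrix.transpose_nonsing_inv, hZs]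

lemma mulVec_inv_cancel {Z : Matrix (Fin n) (Fin n) ℝ} (hZ : posDef Z) (a : Fin n → ℝ) :
    Z *ᵥ (Z⁻¹ *ᵥ a) = a := by
  rw [Matrix.mulVec_mulVec, Matrix.mul_nonsing_inv _ (posDef_det_isUnit hZ), Matrix.one_mulVec]

lemma sum_mulVec' {m k l : Type*} [Fintype m] [Fintype k] [Fintype l]
    (f : l → Matrix m k ℝ) (v : k → ℝ) : (∑ i, f i) *ᵥ v = ∑ i, (f i) *ᵥ v := by
  let L : Matrix m k ℝ →ₗ[ℝ] (m → ℝ) :=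
    { toFun := fun M => M *ᵥ v, map_add' := fun M N => Matrix.add_mulVec M N v,
      map_smul' := fun c M => Matrix.smul_mulVec c M v }
  exact map_sum L f Finset.univ

lemma dotProduct_sum' {m k : Type*} [Fintype m] [Fintype k] (f : k → m → ℝ) (w : m → ℝ) :
    w ⬝ᵥ (∑ i, f i) = ∑ i, w ⬝ᵥ f i := by
  rw [dotProduct_comm, sum_dotProduct']
  exact Finset.sum_congr rfl fun i _ => dotProduct_comm _ _

/-- Schur complement quadratic form of Ψ. -/
def sPsiQ (T : ℝ) (Am Jj P Zj Qj Uj Rj : Matrix (Fin n) (Fin n) ℝ)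
    (Nj : Matrix (Fin n) (Fin n ⊕ Fin n) ℝ) (p y : Fin n → ℝ) : ℝ :=
  G0q T Am Jj P Qj Rj Nj p y + T * (G1q Am Jj Qj Rj p y + G2q Jj Uj y)
    + T * ((Am *ᵥ p) ⬝ᵥ Zj *ᵥ (Am *ᵥ p))

/-- Schur complement quadratic form of Φ. -/
noncomputable def sPhiQ (T : ℝ) (Am Jj P Zj Qj Uj Rj : Matrix (Fin n) (Fin n) ℝ)
    (Nj : Matrix (Fin n) (Fin n ⊕ Fin n) ℝ) (p y : Fin n → ℝ) : ℝ :=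
  G0q T Am Jj P Qj Rj Nj p y - T * G2q Jj Uj y
    + T * ((Nj *ᵥ Sum.elim p y) ⬝ᵥ Zj⁻¹ *ᵥ (Nj *ᵥ Sum.elim p y))

lemma schur_psi {T : ℝ} (hT : 0 < T) {Am Jj P Zj Qj Uj Rj : Matrix (Fin n) (Fin n) ℝ}
    {Nj : Matrix (Fin n) (Fin n ⊕ Fin n) ℝ}
    (h : negDef (PsiR T Am Jj P Zj Qj Uj Rj Nj)) (p y : Fin n → ℝ) (hpy : Sum.elim p y ≠ 0) :
    sPsiQ T Am Jj P Zj Qj Uj Rj Nj p y < 0 := by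
  have hv : Sum.elim (Sum.elim p y) (T • (Am *ᵥ p)) ≠ 0 := by
    rw [Ne, sum_elim_eq_zero_iff]
    intro ⟨h1, _⟩; exact hpy h1
  have := h _ hv
  rw [quad_PsiR] at this
  rw [sPsiQ]
  have e1 : (Am *ᵥ p) ⬝ᵥ Zj *ᵥ (T • (Am *ᵥ p)) = T * ((Am *ᵥ p) ⬝ᵥ Zj *ᵥ (Am *ᵥ p)) := by
    rw [Matrix.mulVec_smul, dotProduct_smul, smul_eq_mul]
  have e2 : (T • (Am *ᵥ p)) ⬝ᵥ Zj *ᵥ (Am *ᵥ p) = T * ((Am *ᵥ p) ⬝ᵥ Zj *ᵥ (Am *ᵥ p)) := by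
    rw [smul_dotProduct, smul_eq_mul]
  have e3 : (T • (Am *ᵥ p)) ⬝ᵥ Zj *ᵥ (T • (Am *ᵥ p))
      = T * (T * ((Am *ᵥ p) ⬝ᵥ Zj *ᵥ (Am *ᵥ p))) := by
    rw [smul_dotProduct, Matrix.mulVec_smul, dotProduct_smul]
    simp only [smul_eq_mul]
    try ring
  rw [e1, e2, e3] at this
  have hTne : T ≠ 0 := ne_of_gt hT
  calc G0q T Am Jj P Qj Rj Nj p y + T * (G1q Am Jj Qj Rj p y + G2q Jj Uj y)
      + T * ((Am *ᵥ p) ⬝ᵥ Zj *ᵥ (Am *ᵥ p))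
      = G0q T Am Jj P Qj Rj Nj p y + T * (G1q Am Jj Qj Rj p y + G2q Jj Uj y)
        + T * ((Am *ᵥ p) ⬝ᵥ Zj *ᵥ (Am *ᵥ p)) + T * ((Am *ᵥ p) ⬝ᵥ Zj *ᵥ (Am *ᵥ p))
        - T⁻¹ * (T * (T * ((Am *ᵥ p) ⬝ᵥ Zj *ᵥ (Am *ᵥ p)))) := by
        field_simp
        try ring
    _ < 0 := this

lemma schur_phi {T : ℝ} (hT : 0 < T) {Am Jj P Zj Qj Uj Rj : Matrix (Fin n) (Fin n) ℝ}
    {Nj : Matrix (Fin n) (Fin n ⊕ Fin n) ℝ} (hZs : Zj.IsSymm) (hZ : posDef Zj)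
    (h : negDef (PhiR T Am Jj P Zj Qj Uj Rj Nj)) (p y : Fin n → ℝ) (hpy : Sum.elim p y ≠ 0) :
    sPhiQ T Am Jj P Zj Qj Uj Rj Nj p y < 0 := by
  set a := Nj *ᵥ Sum.elim p y with ha
  have hv : Sum.elim (Sum.elim p y) (T • (Zj⁻¹ *ᵥ a)) ≠ 0 := by
    rw [Ne, sum_elim_eq_zero_iff]
    intro ⟨h1, _⟩; exact hpy h1
  have := h _ hv
  rw [quad_PhiR] at this
  rw [sPhiQ, ← ha]
  have e1 : a ⬝ᵥ (T • (Zj⁻¹ *ᵥ a)) = T * (a ⬝ᵥ Zj⁻¹ *ᵥ a) := by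
    rw [dotProduct_smul, smul_eq_mul]
  have e2 : (T • (Zj⁻¹ *ᵥ a)) ⬝ᵥ a = T * (a ⬝ᵥ Zj⁻¹ *ᵥ a) := by
    rw [smul_dotProduct, smul_eq_mul, dotProduct_comm]
  have e3 : (T • (Zj⁻¹ *ᵥ a)) ⬝ᵥ Zj *ᵥ (T • (Zj⁻¹ *ᵥ a)) = T * (T * (a ⬝ᵥ Zj⁻¹ *ᵥ a)) := by
    rw [smul_dotProduct, Matrix.mulVec_smul, dotProduct_smul,
      mulVec_inv_cancel hZ, dotProduct_comm]
    simp only [smul_eq_mul]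
    try ring
  rw [e1, e2, e3] at this
  have hTne : T ≠ 0 := ne_of_gt hT
  calc G0q T Am Jj P Qj Rj Nj p y - T * G2q Jj Uj y + T * (a ⬝ᵥ Zj⁻¹ *ᵥ a)
      = G0q T Am Jj P Qj Rj Nj p y - T * G2q Jj Uj y + T * (a ⬝ᵥ Zj⁻¹ *ᵥ a)
        + T * (a ⬝ᵥ Zj⁻¹ *ᵥ a) - T⁻¹ * (T * (T * (a ⬝ᵥ Zj⁻¹ *ᵥ a))) := by
        field_simp
        try ring
    _ < 0 := this

section combo
variable {NA : ℕ} (T : ℝ) (Jj P Zj Qj Uj Rj : Matrix (Fin n) (Fin n) ℝ)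
  (Nj : Matrix (Fin n) (Fin n ⊕ Fin n) ℝ) (p y : Fin n → ℝ)

/-- A-free part of sPsiQ -/
noncomputable def psiC : ℝ :=
  (- ((p - Jj *ᵥ y) ⬝ᵥ Qj *ᵥ (p - Jj *ᵥ y))
    + ((Jj *ᵥ y) ⬝ᵥ P *ᵥ (Jj *ᵥ y) - y ⬝ᵥ P *ᵥ y)
    + (2 * ((Nj *ᵥ Sum.elim p y) ⬝ᵥ (p - Jj *ᵥ y)) - 2 * ((p - Jj *ᵥ y) ⬝ᵥ Rj *ᵥ p)))
    + T * G2q Jj Uj y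

/-- coefficient vector of the linear-in-`A *ᵥ p` part of sPsiQ -/
noncomputable def psiW : Fin n → ℝ :=
  (2 * T) • (P *ᵥ p) + (2 * T) • (Qj *ᵥ (p - Jj *ᵥ y)) + (2 * T) • (Rj *ᵥ p)
    + (2 * T) • (Rjᵀ *ᵥ (p - Jj *ᵥ y))

lemma sPsiQ_eq (Am : Matrix (Fin n) (Fin n) ℝ) :
    sPsiQ T Am Jj P Zj Qj Uj Rj Nj p y
      = psiC T Jj P Qj Uj Rj Nj p y + psiW T Jj P Qj Rj p y ⬝ᵥ (Am *ᵥ p)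
        + T * ((Am *ᵥ p) ⬝ᵥ Zj *ᵥ (Am *ᵥ p)) := by
  rw [sPsiQ, G0q, G1q, psiC, psiW]
  simp only [add_dotProduct, smul_dotProduct, smul_eq_mul, dotTrans']
  simp only [dotProduct_comm (Am *ᵥ p)]
  ring

lemma sPhiQ_eq (Am : Matrix (Fin n) (Fin n) ℝ) :
    sPhiQ T Am Jj P Zj Qj Uj Rj Nj p y
      = (- ((p - Jj *ᵥ y) ⬝ᵥ Qj *ᵥ (p - Jj *ᵥ y))
          + ((Jj *ᵥ y) ⬝ᵥ P *ᵥ (Jj *ᵥ y) - y ⬝ᵥ P *ᵥ y)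
          + (2 * ((Nj *ᵥ Sum.elim p y) ⬝ᵥ (p - Jj *ᵥ y)) - 2 * ((p - Jj *ᵥ y) ⬝ᵥ Rj *ᵥ p))
          - T * G2q Jj Uj y
          + T * ((Nj *ᵥ Sum.elim p y) ⬝ᵥ Zj⁻¹ *ᵥ (Nj *ᵥ Sum.elim p y)))
        + ((2 * T) • (P *ᵥ p)) ⬝ᵥ (Am *ᵥ p) := by
  rw [sPhiQ, G0q]
  simp only [smul_dotProduct, smul_eq_mul]
  simp only [dotProduct_comm (Am *ᵥ p)]
  ring

variable (A : Fin NA → Matrix (Fin n) (Fin n) ℝ) (la : Fin NA → ℝ)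

lemma bar_mulVec (hs : ∑ i, la i = 1) :
    (∑ i, la i • A i) *ᵥ p = ∑ i, la i • (A i *ᵥ p) := by
  rw [sum_mulVec']
  exact Finset.sum_congr rfl fun i _ => Matrix.smul_mulVec _ _ _

lemma dot_sum_smul (w : Fin n → ℝ) (b : Fin NA → Fin n → ℝ) :
    w ⬝ᵥ (∑ i, la i • b i) = ∑ i, la i * (w ⬝ᵥ b i) := by
  rw [dotProduct_sum']
  exact Finset.sum_congr rfl fun i _ => by rw [dotProduct_smul, smul_eq_mul]

lemma sPsiQ_A_combo (hT : 0 ≤ T) (hZs : Zj.IsSymm) (hZ : posSemidef Zj)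
    (hla : ∀ i, 0 ≤ la i) (hs : ∑ i, la i = 1) :
    sPsiQ T (∑ i, la i • A i) Jj P Zj Qj Uj Rj Nj p y
      ≤ ∑ i, la i * sPsiQ T (A i) Jj P Zj Qj Uj Rj Nj p y := by
  have hb := bar_mulVec (p := p) A la hs
  have hjen := jensen_psd hZs hZ la (fun i => A i *ᵥ p) hla hs
  have hrhs : ∑ i, la i * sPsiQ T (A i) Jj P Zj Qj Uj Rj Nj p y
      = psiC T Jj P Qj Uj Rj Nj p y
        + psiW T Jj P Qj Rj p y ⬝ᵥ (∑ i, la i • (A i *ᵥ p))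
        + T * (∑ i, la i * ((A i *ᵥ p) ⬝ᵥ Zj *ᵥ (A i *ᵥ p))) := by
    calc ∑ i, la i * sPsiQ T (A i) Jj P Zj Qj Uj Rj Nj p y
        = ∑ i, (la i * psiC T Jj P Qj Uj Rj Nj p y
            + la i * (psiW T Jj P Qj Rj p y ⬝ᵥ (A i *ᵥ p))
            + T * (la i * ((A i *ᵥ p) ⬝ᵥ Zj *ᵥ (A i *ᵥ p)))) := by
          refine Finset.sum_congr rfl fun i _ => ?_
          rw [sPsiQ_eq]; ring
      _ = _ := by
          rw [Finset.sum_add_distrib, Finset.sum_add_distrib, ← Finset.sum_mul, hs, one_mul,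
            ← Finset.mul_sum, dot_sum_smul]
  rw [hrhs, sPsiQ_eq, hb]
  have := mul_le_mul_of_nonneg_left hjen hT
  linarith

lemma sPhiQ_A_combo (hla : ∀ i, 0 ≤ la i) (hs : ∑ i, la i = 1) :
    sPhiQ T (∑ i, la i • A i) Jj P Zj Qj Uj Rj Nj p y
      = ∑ i, la i * sPhiQ T (A i) Jj P Zj Qj Uj Rj Nj p y := by
  have hb := bar_mulVec (p := p) A la hs
  calc sPhiQ T (∑ i, la i • A i) Jj P Zj Qj Uj Rj Nj p y
      = _ + ((2 * T) • (P *ᵥ p)) ⬝ᵥ ((∑ i, la i • A i) *ᵥ p) := sPhiQ_eq _ _ _ _ _ _ _ _ _ _ _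
    _ = ∑ i, la i * sPhiQ T (A i) Jj P Zj Qj Uj Rj Nj p y := by
        rw [hb, dot_sum_smul]
        rw [show ∀ c : ℝ, ∀ f : Fin NA → ℝ, c + ∑ i, la i * f i = ∑ i, (la i * f i + la i * c)
          from fun c f => by rw [Finset.sum_add_distrib, ← Finset.sum_mul, hs]; ring]
        refine Finset.sum_congr rfl fun i _ => ?_
        rw [sPhiQ_eq]; ring

/-- affine interpolation in T -/
lemma sPsiQ_T_interp (Am : Matrix (Fin n) (Fin n) ℝ) {Tmin Tmax θ : ℝ}
    (hθ : θ ∈ Set.Icc Tmin Tmax)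
    (h1 : sPsiQ Tmin Am Jj P Zj Qj Uj Rj Nj p y < 0)
    (h2 : sPsiQ Tmax Am Jj P Zj Qj Uj Rj Nj p y < 0) :
    sPsiQ θ Am Jj P Zj Qj Uj Rj Nj p y < 0 := by
  obtain ⟨ha, hb⟩ := hθ
  have key : ∀ t : ℝ, sPsiQ t Am Jj P Zj Qj Uj Rj Nj p y
      = sPsiQ 0 Am Jj P Zj Qj Uj Rj Nj p y
        + t * (2 * ((Am *ᵥ p) ⬝ᵥ P *ᵥ p) + (G1q Am Jj Qj Rj p y + G2q Jj Uj y)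
          + (Am *ᵥ p) ⬝ᵥ Zj *ᵥ (Am *ᵥ p)) := by
    intro t
    rw [sPsiQ, sPsiQ, G0q, G0q]
    ring
  rw [key θ]; rw [key Tmin] at h1; rw [key Tmax] at h2
  rcases le_or_gt 0 (2 * ((Am *ᵥ p) ⬝ᵥ P *ᵥ p) + (G1q Am Jj Qj Rj p y + G2q Jj Uj y)
      + (Am *ᵥ p) ⬝ᵥ Zj *ᵥ (Am *ᵥ p)) with h | h
  · nlinarith
  · nlinarith

lemma sPhiQ_T_interp (Am : Matrix (Fin n) (Fin n) ℝ) {Tmin Tmax θ : ℝ}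
    (hθ : θ ∈ Set.Icc Tmin Tmax)
    (h1 : sPhiQ Tmin Am Jj P Zj Qj Uj Rj Nj p y < 0)
    (h2 : sPhiQ Tmax Am Jj P Zj Qj Uj Rj Nj p y < 0) :
    sPhiQ θ Am Jj P Zj Qj Uj Rj Nj p y < 0 := by
  obtain ⟨ha, hb⟩ := hθ
  have key : ∀ t : ℝ, sPhiQ t Am Jj P Zj Qj Uj Rj Nj p y
      = sPhiQ 0 Am Jj P Zj Qj Uj Rj Nj p y
        + t * (2 * ((Am *ᵥ p) ⬝ᵥ P *ᵥ p) - G2q Jj Uj y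
          + (Nj *ᵥ Sum.elim p y) ⬝ᵥ Zj⁻¹ *ᵥ (Nj *ᵥ Sum.elim p y)) := by
    intro t
    rw [sPhiQ, sPhiQ, G0q, G0q]
    ring
  rw [key θ]; rw [key Tmin] at h1; rw [key Tmax] at h2
  rcases le_or_gt 0 (2 * ((Am *ᵥ p) ⬝ᵥ P *ᵥ p) - G2q Jj Uj y
      + (Nj *ᵥ Sum.elim p y) ⬝ᵥ Zj⁻¹ *ᵥ (Nj *ᵥ Sum.elim p y)) with h | h
  · nlinarith
  · nlinarith
end combo

section calchelp
variable {N' : Type*} [Fintype N'] {α : Type*} [TopologicalSpace α]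

lemma continuous_mulVec' {w : α → N' → ℝ} (M : Matrix N' N' ℝ) (hw : Continuous w) :
    Continuous fun s => M *ᵥ w s := by
  refine continuous_pi fun i => ?_
  change Continuous fun s => ∑ j, M i j * w s j
  fun_prop

lemma continuous_dot' {u w : α → N' → ℝ} (hu : Continuous u) (hw : Continuous w) :
    Continuous fun s => u s ⬝ᵥ w s := by
  change Continuous fun s => ∑ i, u s i * w s i
  fun_prop

lemma hasDerivAt_dotmul {u w : ℝ → N' → ℝ} {u' w' : N' → ℝ} {t : ℝ}
    (hu : ∀ i, HasDerivAt (fun s => u s i) (u' i) t)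
    (hw : ∀ i, HasDerivAt (fun s => w s i) (w' i) t)
    (M : Matrix N' N' ℝ) :
    HasDerivAt (fun s => u s ⬝ᵥ M *ᵥ w s) (u' ⬝ᵥ M *ᵥ w t + u t ⬝ᵥ M *ᵥ w') t := by
  simp only [dotProduct, Matrix.mulVec]
  have h := HasDerivAt.fun_sum (fun i (_ : i ∈ Finset.univ) =>
    ((hu i).fun_mul (HasDerivAt.fun_sum fun j (_ : j ∈ Finset.univ) => (hw j).const_mul (M i j))))
  refine h.congr_deriv ?_
  rw [← Finset.sum_add_distrib]

lemma hasDerivAt_dotconst {u : ℝ → N' → ℝ} {u' : N' → ℝ} {t : ℝ} (a : N' → ℝ)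
    (hu : ∀ i, HasDerivAt (fun s => u s i) (u' i) t) :
    HasDerivAt (fun s => a ⬝ᵥ u s) (a ⬝ᵥ u') t := by
  simp only [dotProduct]
  exact HasDerivAt.fun_sum fun i _ => (hu i).const_mul (a i)

end calchelp

section keylemma
variable {T : ℝ} {Am Jj P Zj Qj Uj Rj : Matrix (Fin n) (Fin n) ℝ}
  {Nj : Matrix (Fin n) (Fin n ⊕ Fin n) ℝ}

/-- The main analytic (looped-functional) lemma. -/
lemma key_ode (hT : 0 < T) (hPsym : P.IsSymm) (hQsym : Qj.IsSymm) (hZsym : Zj.IsSymm)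
    (hZ : posDef Zj)
    (hPsiH : ∀ p y : Fin n → ℝ, Sum.elim p y ≠ 0 → sPsiQ T Am Jj P Zj Qj Uj Rj Nj p y < 0)
    (hPhiH : ∀ p y : Fin n → ℝ, Sum.elim p y ≠ 0 → sPhiQ T Am Jj P Zj Qj Uj Rj Nj p y < 0) :
    negDef (scrI P Am Jj T) := by
  intro y hy
  set c : Fin n → ℝ := Jj *ᵥ y with hc
  set χ : ℝ → Fin n → ℝ := fun s => mexp (s • Am) *ᵥ c with hχdef
  set χd : ℝ → Fin n → ℝ := fun s => Am *ᵥ χ s with hχd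
  have hχi : ∀ (s : ℝ) (i : Fin n), HasDerivAt (fun t => χ t i) (χd s i) s := by
    intro s i
    have hcoor : ∀ t : ℝ, χ t i = ∑ j, mexp (t • Am) i j * c j := fun t => rfl
    simp only [hcoor]
    have h := HasDerivAt.fun_sum fun j (_ : j ∈ Finset.univ) =>
      (mexp_entry_hasDerivAt Am s i j).mul_const (c j)
    refine h.congr_deriv ?_
    symm
    show (Am *ᵥ (mexp (s • Am) *ᵥ c)) i = _
    rw [Matrix.mulVec_mulVec]
    rfl
  have hχcont : Continuous χ := continuous_pi fun i =>
    continuous_iff_continuousAt.2 fun s => (hχi s i).continuousAt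
  have hχdcont : Continuous χd := continuous_mulVec' Am hχcont
  have hχ0 : χ 0 = c := by
    rw [hχdef]
    simp only [zero_smul, mexp_zero, Matrix.one_mulVec]
  set q : ℝ → ℝ := fun s => χd s ⬝ᵥ Zj *ᵥ χd s with hq
  have hqcont : Continuous q := continuous_dot' hχdcont (continuous_mulVec' Zj hχdcont)
  set IZ : ℝ → ℝ := fun s => ∫ θ in (0:ℝ)..s, q θ with hIZ
  have hIZd : ∀ s : ℝ, HasDerivAt IZ (q s) s := fun s =>
    intervalIntegral.integral_hasDerivAt_right (hqcont.intervalIntegrable _ _)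
      (hqcont.stronglyMeasurableAtFilter _ _) hqcont.continuousAt
  set ζ : ℝ → Fin n → ℝ := fun s => χ s - c with hζ
  have hζi : ∀ (s : ℝ) (i : Fin n), HasDerivAt (fun t => ζ t i) (χd s i) s := by
    intro s i
    have hcoor : ∀ t : ℝ, ζ t i = χ t i - c i := fun t => rfl
    simp only [hcoor]
    exact (hχi s i).sub_const (c i)
  have hζ0 : ζ 0 = 0 := by rw [hζ]; simp [hχ0]
  set u₀ : ℝ := c ⬝ᵥ Uj *ᵥ c with hu₀
  set cP : ℝ := c ⬝ᵥ P *ᵥ c - y ⬝ᵥ P *ᵥ y with hcP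
  set F : ℝ → ℝ := fun s =>
    T * (χ s ⬝ᵥ P *ᵥ χ s) + (T - s) * (ζ s ⬝ᵥ Qj *ᵥ ζ s + 2 * (ζ s ⬝ᵥ Rj *ᵥ χ s))
      + (T - s) * IZ s + s * (T - s) * u₀ + s * cP with hF
  set D : ℝ → ℝ := fun s =>
    T * (2 * (χd s ⬝ᵥ P *ᵥ χ s))
      - (ζ s ⬝ᵥ Qj *ᵥ ζ s + 2 * (ζ s ⬝ᵥ Rj *ᵥ χ s))
      + (T - s) * (2 * (χd s ⬝ᵥ Qj *ᵥ ζ s) + 2 * (χd s ⬝ᵥ Rj *ᵥ χ s) + 2 * (ζ s ⬝ᵥ Rj *ᵥ χd s))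
      - IZ s + (T - s) * q s + (T - 2 * s) * u₀ + cP with hD
  have hFd : ∀ s : ℝ, HasDerivAt F (D s) s := by
    intro s
    have h1 : HasDerivAt (fun t => χ t ⬝ᵥ P *ᵥ χ t)
        (χd s ⬝ᵥ P *ᵥ χ s + χ s ⬝ᵥ P *ᵥ χd s) s :=
      hasDerivAt_dotmul (hχi s) (hχi s) P
    have h2 : HasDerivAt (fun t => ζ t ⬝ᵥ Qj *ᵥ ζ t)
        (χd s ⬝ᵥ Qj *ᵥ ζ s + ζ s ⬝ᵥ Qj *ᵥ χd s) s :=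
      hasDerivAt_dotmul (hζi s) (hζi s) Qj
    have h3 : HasDerivAt (fun t => ζ t ⬝ᵥ Rj *ᵥ χ t)
        (χd s ⬝ᵥ Rj *ᵥ χ s + ζ s ⬝ᵥ Rj *ᵥ χd s) s :=
      hasDerivAt_dotmul (hζi s) (hχi s) Rj
    have hTs : HasDerivAt (fun t : ℝ => T - t) (-1) s := by
      simpa using (hasDerivAt_id s).const_sub T
    have hid : HasDerivAt (fun t : ℝ => t) 1 s := hasDerivAt_id s
    have hsum := (((((h1.const_mul T).fun_add
        (hTs.fun_mul (h2.fun_add (h3.const_mul 2)))).fun_add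
        (hTs.fun_mul (hIZd s))).fun_add
        ((hid.fun_mul hTs).mul_const u₀)).fun_add
        (hid.mul_const cP))
    refine hsum.congr_deriv ?_
    rw [hD]
    rw [symm_dot hPsym (χ s) (χd s), symm_dot hQsym (ζ s) (χd s)]
    ring
  -- derivative negative on the interior
  have hDneg : ∀ s ∈ Set.Ioo (0:ℝ) T, D s < 0 := by
    intro s hs
    set a : Fin n → ℝ := Nj *ᵥ Sum.elim (χ s) y with ha
    -- pointwise completion of square
    have hpt : ∀ θ : ℝ, 0 ≤ q θ + 2 * (a ⬝ᵥ χd θ) + a ⬝ᵥ Zj⁻¹ *ᵥ a := by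
      intro θ
      have h0 := posDef_toPSD hZ (χd θ + Zj⁻¹ *ᵥ a)
      have hexp : (χd θ + Zj⁻¹ *ᵥ a) ⬝ᵥ Zj *ᵥ (χd θ + Zj⁻¹ *ᵥ a)
          = q θ + 2 * (a ⬝ᵥ χd θ) + a ⬝ᵥ Zj⁻¹ *ᵥ a := by
        rw [add_dotProduct, Matrix.mulVec_add, dotProduct_add,
          dotProduct_add, mulVec_inv_cancel hZ]
        have e1 : χd θ ⬝ᵥ a = a ⬝ᵥ χd θ := dotProduct_comm _ _
        have e2 : (Zj⁻¹ *ᵥ a) ⬝ᵥ Zj *ᵥ χd θ = a ⬝ᵥ χd θ := by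
          rw [symm_dot hZsym, mulVec_inv_cancel hZ, dotProduct_comm]
        have e3 : (Zj⁻¹ *ᵥ a) ⬝ᵥ a = a ⬝ᵥ Zj⁻¹ *ᵥ a := dotProduct_comm _ _
        rw [e1, e2, e3, hq]
        ring
      rw [← hexp]
      exact h0
    -- FTC for the linear term
    have hadot : ∀ θ : ℝ, HasDerivAt (fun t => a ⬝ᵥ χ t) (a ⬝ᵥ χd θ) θ := fun θ =>
      hasDerivAt_dotconst a (hχi θ)
    have hacont : Continuous fun θ => a ⬝ᵥ χd θ :=
      continuous_dot' continuous_const hχdcont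
    have hint1 : ∫ θ in (0:ℝ)..s, a ⬝ᵥ χd θ = a ⬝ᵥ χ s - a ⬝ᵥ χ 0 :=
      intervalIntegral.integral_eq_sub_of_hasDerivAt (fun θ _ => hadot θ)
        (hacont.intervalIntegrable _ _)
    have hIZbound : - IZ s ≤ 2 * (a ⬝ᵥ ζ s) + s * (a ⬝ᵥ Zj⁻¹ *ᵥ a) := by
      have hnn : 0 ≤ ∫ θ in (0:ℝ)..s, (q θ + 2 * (a ⬝ᵥ χd θ) + a ⬝ᵥ Zj⁻¹ *ᵥ a) := by
        apply intervalIntegral.integral_nonneg hs.1.le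
        intro θ _
        exact hpt θ
      have hsplit : ∫ θ in (0:ℝ)..s, (q θ + 2 * (a ⬝ᵥ χd θ) + a ⬝ᵥ Zj⁻¹ *ᵥ a)
          = IZ s + 2 * (a ⬝ᵥ ζ s) + s * (a ⬝ᵥ Zj⁻¹ *ᵥ a) := by
        rw [intervalIntegral.integral_add (((hqcont).fun_add
            ((continuous_const.fun_mul hacont))).intervalIntegrable _ _)
            (intervalIntegrable_const),
          intervalIntegral.integral_add (hqcont.intervalIntegrable _ _)
            ((continuous_const.fun_mul hacont).intervalIntegrable _ _)]
        rw [intervalIntegral.integral_const, intervalIntegral.integral_const_mul, hint1, hχ0]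
        have : a ⬝ᵥ ζ s = a ⬝ᵥ χ s - a ⬝ᵥ c := by
          rw [hζ]
          simp only [dotProduct_sub]
        rw [this]
        simp only [smul_eq_mul, sub_zero]
        rfl
      linarith [hsplit ▸ hnn]
    have hne : Sum.elim (χ s) y ≠ 0 := by
      rw [Ne, sum_elim_eq_zero_iff]
      intro ⟨_, h2⟩; exact hy h2
    have hψ := hPsiH (χ s) y hne
    have hφ := hPhiH (χ s) y hne
    -- main algebraic identity
    have hiden : T * D s = (T - s) * sPsiQ T Am Jj P Zj Qj Uj Rj Nj (χ s) y
        + s * sPhiQ T Am Jj P Zj Qj Uj Rj Nj (χ s) y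
        + T * (- IZ s - 2 * (a ⬝ᵥ ζ s) - s * (a ⬝ᵥ Zj⁻¹ *ᵥ a)) := by
      rw [hD, sPsiQ, sPhiQ, G0q, G1q, G2q, hq]
      have hζeq : χ s - Jj *ᵥ y = ζ s := by rw [hζ, hc]
      have haeq : Nj *ᵥ Sum.elim (χ s) y = a := by rw [ha]
      have hbeq : Am *ᵥ χ s = χd s := by rw [hχd]
      rw [hζeq, haeq, hbeq, hu₀, hcP, hc]
      ring
    have h1 : (T - s) * sPsiQ T Am Jj P Zj Qj Uj Rj Nj (χ s) y < 0 :=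
      mul_neg_of_pos_of_neg (by linarith [hs.2]) hψ
    have h2 : s * sPhiQ T Am Jj P Zj Qj Uj Rj Nj (χ s) y < 0 :=
      mul_neg_of_pos_of_neg hs.1 hφ
    have h3 : T * (- IZ s - 2 * (a ⬝ᵥ ζ s) - s * (a ⬝ᵥ Zj⁻¹ *ᵥ a)) ≤ 0 := by
      apply mul_nonpos_of_nonneg_of_nonpos hT.le
      linarith [hIZbound]
    have hTD : T * D s < 0 := by rw [hiden]; linarith
    by_contra hcon
    push_neg at hcon
    have : 0 ≤ T * D s := mul_nonneg hT.le hcon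
    linarith
  -- strict decrease
  have hcontF : ContinuousOn F (Set.Icc 0 T) := fun s _ => ((hFd s).continuousAt).continuousWithinAt
  have hanti : StrictAntiOn F (Set.Icc 0 T) := by
    apply strictAntiOn_of_deriv_neg (convex_Icc 0 T) hcontF
    intro s hs
    rw [interior_Icc] at hs
    rw [(hFd s).deriv]
    exact hDneg s hs
  have hlt : F T < F 0 := hanti (Set.left_mem_Icc.2 hT.le) (Set.right_mem_Icc.2 hT.le) hT
  have hF0 : F 0 = T * (c ⬝ᵥ P *ᵥ c) := by
    rw [hF]
    simp only [hζ0, hχ0, hIZ]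
    simp [zero_dotProduct]
  have hFT : F T = T * (χ T ⬝ᵥ P *ᵥ χ T) + T * cP := by
    rw [hF]
    simp
  rw [quad_scrI]
  have hce : mexp (T • Am) *ᵥ (Jj *ᵥ y) = χ T := rfl
  rw [hce]
  rw [hF0, hFT, hcP] at hlt
  nlinarith [hlt, hT]
end keylemma

lemma mulVec_sum_smul {NJ : ℕ} (M : Matrix (Fin n) (Fin n) ℝ) (mu : Fin NJ → ℝ)
    (w : Fin NJ → Fin n → ℝ) :
    M *ᵥ (∑ j, mu j • w j) = ∑ j, mu j • (M *ᵥ w j) := by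
  let L : (Fin n → ℝ) →ₗ[ℝ] (Fin n → ℝ) :=
    { toFun := fun v => M *ᵥ v, map_add' := fun v w => Matrix.mulVec_add M v w,
      map_smul' := fun c v => Matrix.mulVec_smul M c v }
  have h1 := map_sum L (fun j => mu j • w j) Finset.univ
  have h2 : ∀ j : Fin NJ, L (mu j • w j) = mu j • (M *ᵥ w j) := fun j =>
    Matrix.mulVec_smul M (mu j) (w j)
  rw [Finset.sum_congr rfl fun j _ => h2 j] at h1
  exact h1

lemma scrI_J_combo {NJ : ℕ} (θ : ℝ) (Ab : Matrix (Fin n) (Fin n) ℝ)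
    (Jm : Fin NJ → Matrix (Fin n) (Fin n) ℝ) (P : Matrix (Fin n) (Fin n) ℝ)
    (hPsym : P.IsSymm) (hP : posDef P) (mu : Fin NJ → ℝ)
    (hmu : ∀ j, 0 ≤ mu j) (hs : ∑ j, mu j = 1)
    (h : ∀ j, negDef (scrI P Ab (Jm j) θ)) :
    negDef (scrI P Ab (∑ j, mu j • Jm j) θ) := by
  intro v hv
  rw [quad_scrI]
  have hbar : (∑ j, mu j • Jm j) *ᵥ v = ∑ j, mu j • (Jm j *ᵥ v) := bar_mulVec _ _ _ hs
  rw [hbar, mulVec_sum_smul]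
  have hjen := jensen_psd hPsym (posDef_toPSD hP) mu
    (fun j => mexp (θ • Ab) *ᵥ (Jm j *ᵥ v)) hmu hs
  have hneg : ∑ j, mu j * ((mexp (θ • Ab) *ᵥ (Jm j *ᵥ v)) ⬝ᵥ P *ᵥ (mexp (θ • Ab) *ᵥ (Jm j *ᵥ v))
      - v ⬝ᵥ P *ᵥ v) < 0 := by
    apply convex_neg_sum mu _ hmu hs
    intro j
    have := h j v hv
    rw [quad_scrI] at this
    exact this
  have hsum : ∑ j, mu j * ((mexp (θ • Ab) *ᵥ (Jm j *ᵥ v)) ⬝ᵥ P *ᵥ (mexp (θ • Ab) *ᵥ (Jm j *ᵥ v))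
      - v ⬝ᵥ P *ᵥ v)
      = ∑ j, mu j * ((mexp (θ • Ab) *ᵥ (Jm j *ᵥ v)) ⬝ᵥ P *ᵥ (mexp (θ • Ab) *ᵥ (Jm j *ᵥ v)))
        - v ⬝ᵥ P *ᵥ v := by
    rw [show ∀ f : Fin NJ → ℝ, ∑ j, mu j * (f j - v ⬝ᵥ P *ᵥ v)
        = ∑ j, (mu j * f j - mu j * (v ⬝ᵥ P *ᵥ v)) from fun f =>
      Finset.sum_congr rfl fun j _ => by ring]
    rw [Finset.sum_sub_distrib, ← Finset.sum_mul, hs]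
    ring
  rw [hsum] at hneg
  linarith [hjen]

section assembly
variable {NA NJ : ℕ}

lemma part1 (Tmin Tmax : ℝ) (h1 : 0 < Tmin) (h2 : Tmin ≤ Tmax)
    (A : Fin NA → Matrix (Fin n) (Fin n) ℝ) (Jm : Fin NJ → Matrix (Fin n) (Fin n) ℝ)
    (P : Matrix (Fin n) (Fin n) ℝ) (hPsym : P.IsSymm) (hP : posDef P)
    (Z Q U R : Fin NJ → Matrix (Fin n) (Fin n) ℝ)
    (N : Fin NJ → Matrix (Fin n) (Fin n ⊕ Fin n) ℝ)
    (hZsym : ∀ j, (Z j).IsSymm) (hZ : ∀ j, posDef (Z j))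
    (hQsym : ∀ j, (Q j).IsSymm)
    (hPsi : ∀ T ∈ ({Tmin, Tmax} : Set ℝ), ∀ i j,
      negDef (PsiR T (A i) (Jm j) P (Z j) (Q j) (U j) (R j) (N j)))
    (hPhi : ∀ T ∈ ({Tmin, Tmax} : Set ℝ), ∀ i j,
      negDef (PhiR T (A i) (Jm j) P (Z j) (Q j) (U j) (R j) (N j)))
    (la : Fin NA → ℝ) (mu : Fin NJ → ℝ)
    (hla : ∀ i, 0 ≤ la i) (hlas : ∑ i, la i = 1) (hmu : ∀ j, 0 ≤ mu j) (hmus : ∑ j, mu j = 1) :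
    ∀ θ ∈ Set.Icc Tmin Tmax,
      negDef (scrI P (∑ i, la i • A i) (∑ j, mu j • Jm j) θ) := by
  intro θ hθ
  have hθpos : 0 < θ := lt_of_lt_of_le h1 hθ.1
  set Ab : Matrix (Fin n) (Fin n) ℝ := ∑ i, la i • A i with hAb
  -- per-vertex-j result
  have hvert : ∀ j, negDef (scrI P Ab (Jm j) θ) := by
    intro j
    -- sPsiQ at combined A for T ∈ {Tmin, Tmax}
    have hψT : ∀ T ∈ ({Tmin, Tmax} : Set ℝ), ∀ p y : Fin n → ℝ, Sum.elim p y ≠ 0 →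
        sPsiQ T Ab (Jm j) P (Z j) (Q j) (U j) (R j) (N j) p y < 0 := by
      intro T hT p y hpy
      have hTpos : 0 < T := by
        rcases hT with h | h
        · rw [h] at *; exact h1
        · rw [Set.mem_singleton_iff] at h; rw [h]; exact lt_of_lt_of_le h1 h2
      have hverts : ∀ i, sPsiQ T (A i) (Jm j) P (Z j) (Q j) (U j) (R j) (N j) p y < 0 :=
        fun i => schur_psi hTpos (hPsi T hT i j) p y hpy
      calc sPsiQ T Ab (Jm j) P (Z j) (Q j) (U j) (R j) (N j) p y
          ≤ ∑ i, la i * sPsiQ T (A i) (Jm j) P (Z j) (Q j) (U j) (R j) (N j) p y :=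
            sPsiQ_A_combo T (Jm j) P (Z j) (Q j) (U j) (R j) (N j) p y A la hTpos.le
              (hZsym j) (posDef_toPSD (hZ j)) hla hlas
        _ < 0 := convex_neg_sum la _ hla hlas hverts
    have hφT : ∀ T ∈ ({Tmin, Tmax} : Set ℝ), ∀ p y : Fin n → ℝ, Sum.elim p y ≠ 0 →
        sPhiQ T Ab (Jm j) P (Z j) (Q j) (U j) (R j) (N j) p y < 0 := by
      intro T hT p y hpy
      have hTpos : 0 < T := by
        rcases hT with h | h
        · rw [h] at *; exact h1
        · rw [Set.mem_singleton_iff] at h; rw [h]; exact lt_of_lt_of_le h1 h2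
      have hverts : ∀ i, sPhiQ T (A i) (Jm j) P (Z j) (Q j) (U j) (R j) (N j) p y < 0 :=
        fun i => schur_phi hTpos (hZsym j) (hZ j) (hPhi T hT i j) p y hpy
      rw [sPhiQ_A_combo T (Jm j) P (Z j) (Q j) (U j) (R j) (N j) p y A la hla hlas]
      exact convex_neg_sum la _ hla hlas hverts
    -- interpolate in T
    have hψ : ∀ p y : Fin n → ℝ, Sum.elim p y ≠ 0 →
        sPsiQ θ Ab (Jm j) P (Z j) (Q j) (U j) (R j) (N j) p y < 0 := by
      intro p y hpy
      exact sPsiQ_T_interp (Jm j) P (Z j) (Q j) (U j) (R j) (N j) p y Ab hθ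
        (hψT Tmin (Or.inl rfl) p y hpy) (hψT Tmax (Or.inr rfl) p y hpy)
    have hφ : ∀ p y : Fin n → ℝ, Sum.elim p y ≠ 0 →
        sPhiQ θ Ab (Jm j) P (Z j) (Q j) (U j) (R j) (N j) p y < 0 := by
      intro p y hpy
      exact sPhiQ_T_interp (Jm j) P (Z j) (Q j) (U j) (R j) (N j) p y Ab hθ
        (hφT Tmin (Or.inl rfl) p y hpy) (hφT Tmax (Or.inr rfl) p y hpy)
    exact key_ode hθpos hPsym (hQsym j) (hZsym j) (hZ j) hψ hφ
  exact scrI_J_combo θ Ab Jm P hPsym hP mu hmu hmus hvert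
end assembly

lemma quad_smul (M : Matrix (Fin n) (Fin n) ℝ) (v : Fin n → ℝ) (c : ℝ) :
    (c • v) ⬝ᵥ M *ᵥ (c • v) = c ^ 2 * (v ⬝ᵥ M *ᵥ v) := by
  rw [smul_dotProduct, Matrix.mulVec_smul, dotProduct_smul]
  simp only [smul_eq_mul]
  ring

lemma part2 (Tmin Tmax : ℝ) (h1 : 0 < Tmin) (h2 : Tmin ≤ Tmax)
    (Ab Jb P : Matrix (Fin n) (Fin n) ℝ) (hPsym : P.IsSymm) (hP : posDef P)
    (hscr : ∀ θ ∈ Set.Icc Tmin Tmax, negDef (scrI P Ab Jb θ)) :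
    ∀ Tk : ℕ → ℝ, (∀ k, Tk k ∈ Set.Icc Tmin Tmax) →
      ∀ x₀ : Fin n → ℝ, ∀ x : ℕ → Fin n → ℝ, x 0 = x₀ →
        (∀ k, x (k + 1) = (mexp (Tk k • Ab) * Jb).mulVec (x k)) →
        Filter.Tendsto x Filter.atTop (nhds 0) := by
  intro Tk hTk x₀ x hx0 hxrec
  rcases Nat.eq_zero_or_pos n with hn | hn
  · subst hn
    have hx : x = fun _ => 0 := funext fun k => funext fun i => i.elim0
    rw [hx]
    exact tendsto_const_nhds
  haveI : Nonempty (Fin n) := ⟨⟨0, hn⟩⟩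
  -- continuity
  have hE : ∀ i j, Continuous fun θ : ℝ => mexp (θ • Ab) i j := fun i j =>
    continuous_iff_continuousAt.2 fun θ => (mexp_entry_hasDerivAt Ab θ i j).continuousAt
  set g : ℝ × (Fin n → ℝ) → (Fin n → ℝ) := fun z => mexp (z.1 • Ab) *ᵥ (Jb *ᵥ z.2) with hg
  have hgc : Continuous g := by
    refine continuous_pi fun i => ?_
    change Continuous fun z : ℝ × (Fin n → ℝ) => ∑ j, mexp (z.1 • Ab) i j * (Jb *ᵥ z.2) j
    refine continuous_finset_sum _ fun j _ => Continuous.mul ((hE i j).comp continuous_fst) ?_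
    change Continuous fun z : ℝ × (Fin n → ℝ) => ∑ k, Jb j k * z.2 k
    exact continuous_finset_sum _ fun k _ =>
      continuous_const.mul ((continuous_apply k).comp continuous_snd)
  set f : ℝ × (Fin n → ℝ) → ℝ := fun z => g z ⬝ᵥ P *ᵥ g z - z.2 ⬝ᵥ P *ᵥ z.2 with hf
  have hfc : Continuous f :=
    (continuous_dot' hgc (continuous_mulVec' P hgc)).sub
      (continuous_dot' continuous_snd (continuous_mulVec' P continuous_snd))
  have hfI : ∀ θ (v : Fin n → ℝ), f (θ, v) = v ⬝ᵥ (scrI P Ab Jb θ) *ᵥ v := by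
    intro θ v
    rw [quad_scrI]
  -- compactness over K
  set K : Set (ℝ × (Fin n → ℝ)) := Set.Icc Tmin Tmax ×ˢ Metric.sphere 0 1 with hK
  have hKc : IsCompact K := (isCompact_Icc).prod (isCompact_sphere 0 1)
  have hone : (fun _ : Fin n => (1:ℝ)) ∈ Metric.sphere (0 : Fin n → ℝ) 1 := by
    simp [mem_sphere_iff_norm, pi_norm_const]
  have hKne : K.Nonempty := ⟨(Tmin, fun _ => 1), Set.left_mem_Icc.2 h2, hone⟩
  obtain ⟨z0, hz0K, hz0max⟩ := hKc.exists_isMaxOn hKne hfc.continuousOn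
  set ε : ℝ := -f z0 with hε
  have hz0ne : z0.2 ≠ 0 := by
    have := hz0K.2
    simp only [mem_sphere_iff_norm, sub_zero] at this
    intro h0
    rw [h0] at this
    simp at this
  have hεpos : 0 < ε := by
    have := hscr z0.1 hz0K.1 z0.2 hz0ne
    rw [← hfI] at this
    simp only [hε]
    linarith
  -- P bounds on the sphere
  have hPc : Continuous fun v : Fin n → ℝ => v ⬝ᵥ P *ᵥ v :=
    continuous_dot' continuous_id (continuous_mulVec' P continuous_id)
  obtain ⟨vM, hvM, hvMmax⟩ := (isCompact_sphere (0 : Fin n → ℝ) 1).exists_isMaxOn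
    ⟨_, hone⟩ hPc.continuousOn
  obtain ⟨vm, hvm, hvmmin⟩ := (isCompact_sphere (0 : Fin n → ℝ) 1).exists_isMinOn
    ⟨_, hone⟩ hPc.continuousOn
  set MM : ℝ := vM ⬝ᵥ P *ᵥ vM with hMM
  set mm : ℝ := vm ⬝ᵥ P *ᵥ vm with hmm
  have hvmne : vm ≠ 0 := by
    simp only [mem_sphere_iff_norm, sub_zero] at hvm
    intro h0; rw [h0] at hvm; simp at hvm
  have hmmpos : 0 < mm := hP vm hvmne
  have hMMpos : 0 < MM := lt_of_lt_of_le hmmpos (hvmmin hvM)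
  -- scaling
  have hunit : ∀ v : Fin n → ℝ, v ≠ 0 → (‖v‖⁻¹ • v) ∈ Metric.sphere (0 : Fin n → ℝ) 1 := by
    intro v hv
    simp [mem_sphere_iff_norm, norm_smul, norm_inv, norm_norm,
      inv_mul_cancel₀ (norm_ne_zero_iff.2 hv)]
  have hscale : ∀ v : Fin n → ℝ, v ≠ 0 → v = ‖v‖ • (‖v‖⁻¹ • v) := by
    intro v hv
    rw [smul_smul, mul_inv_cancel₀ (norm_ne_zero_iff.2 hv), one_smul]
  -- P quadratic bounds
  have hPub : ∀ v : Fin n → ℝ, v ⬝ᵥ P *ᵥ v ≤ MM * ‖v‖ ^ 2 := by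
    intro v
    rcases eq_or_ne v 0 with h0 | h0
    · simp [h0, zero_dotProduct]
    · have hu := hunit v h0
      have hle : (‖v‖⁻¹ • v) ⬝ᵥ P *ᵥ (‖v‖⁻¹ • v) ≤ MM := hvMmax hu
      have hnn : (0:ℝ) ≤ ‖v‖ ^ 2 := sq_nonneg _
      calc v ⬝ᵥ P *ᵥ v = ‖v‖ ^ 2 * ((‖v‖⁻¹ • v) ⬝ᵥ P *ᵥ (‖v‖⁻¹ • v)) := by
            conv_lhs => rw [hscale v h0]
            rw [quad_smul]
        _ ≤ MM * ‖v‖ ^ 2 := by nlinarith [mul_le_mul_of_nonneg_left hle hnn]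
  have hPlb : ∀ v : Fin n → ℝ, mm * ‖v‖ ^ 2 ≤ v ⬝ᵥ P *ᵥ v := by
    intro v
    rcases eq_or_ne v 0 with h0 | h0
    · simp [h0, zero_dotProduct]
    · have hu := hunit v h0
      have hle : mm ≤ (‖v‖⁻¹ • v) ⬝ᵥ P *ᵥ (‖v‖⁻¹ • v) := hvmmin hu
      have hnn : (0:ℝ) ≤ ‖v‖ ^ 2 := sq_nonneg _
      have hveq : v ⬝ᵥ P *ᵥ v = ‖v‖ ^ 2 * ((‖v‖⁻¹ • v) ⬝ᵥ P *ᵥ (‖v‖⁻¹ • v)) := by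
        conv_lhs => rw [hscale v h0]
        rw [quad_smul]
      rw [hveq]
      nlinarith [mul_le_mul_of_nonneg_left hle hnn]
  -- f bound
  have hfub : ∀ θ ∈ Set.Icc Tmin Tmax, ∀ v : Fin n → ℝ, f (θ, v) ≤ -ε * ‖v‖ ^ 2 := by
    intro θ hθ v
    rcases eq_or_ne v 0 with h0 | h0
    · simp [h0, hf, hg, Matrix.mulVec_zero, zero_dotProduct, dotProduct_zero]
    · have hu := hunit v h0
      have hmem : (θ, ‖v‖⁻¹ • v) ∈ K := ⟨hθ, hu⟩
      have hle' : f (θ, ‖v‖⁻¹ • v) ≤ f z0 := hz0max hmem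
      have hgs : g (θ, v) = ‖v‖ • g (θ, ‖v‖⁻¹ • v) := by
        show mexp (θ • Ab) *ᵥ (Jb *ᵥ v) = ‖v‖ • (mexp (θ • Ab) *ᵥ (Jb *ᵥ (‖v‖⁻¹ • v)))
        conv_lhs => rw [hscale v h0]
        rw [Matrix.mulVec_smul, Matrix.mulVec_smul]
      have e1 : g (θ, v) ⬝ᵥ P *ᵥ g (θ, v)
          = ‖v‖ ^ 2 * (g (θ, ‖v‖⁻¹ • v) ⬝ᵥ P *ᵥ g (θ, ‖v‖⁻¹ • v)) := by
        rw [hgs, quad_smul]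
      have e2 : v ⬝ᵥ P *ᵥ v = ‖v‖ ^ 2 * ((‖v‖⁻¹ • v) ⬝ᵥ P *ᵥ (‖v‖⁻¹ • v)) := by
        conv_lhs => rw [hscale v h0]
        rw [quad_smul]
      have hfs : f (θ, v) = ‖v‖ ^ 2 * f (θ, ‖v‖⁻¹ • v) := by
        rw [hf]
        simp only
        rw [e1, e2]
        ring
      rw [hfs]
      have hfle : f (θ, ‖v‖⁻¹ • v) ≤ -ε := by
        rw [hε, neg_neg]
        exact hle'
      nlinarith [sq_nonneg ‖v‖]
  -- ε ≤ MM
  have hεM : ε ≤ MM := by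
    have h0 : 0 ≤ g z0 ⬝ᵥ P *ᵥ g z0 := posDef_toPSD hP _
    have h1' : z0.2 ⬝ᵥ P *ᵥ z0.2 ≤ MM := hvMmax hz0K.2
    have : -ε = f z0 := by rw [hε]; ring
    rw [hf] at this
    simp only at this
    linarith
  -- the Lyapunov sequence
  set V : ℕ → ℝ := fun k => x k ⬝ᵥ P *ᵥ x k with hV
  set r : ℝ := 1 - ε / MM with hr
  have hr0 : 0 ≤ r := by
    rw [hr]
    have : ε / MM ≤ 1 := (div_le_one hMMpos).2 hεM
    linarith
  have hr1 : r < 1 := by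
    rw [hr]
    have : 0 < ε / MM := div_pos hεpos hMMpos
    linarith
  have hVnn : ∀ k, 0 ≤ V k := fun k => posDef_toPSD hP _
  have hVrec : ∀ k, V (k + 1) ≤ r * V k := by
    intro k
    have hx1 : x (k + 1) = g (Tk k, x k) := by
      rw [hxrec k, hg]
      simp only
      rw [← Matrix.mulVec_mulVec]
    have hVeq : V (k + 1) = f (Tk k, x k) + V k := by
      rw [hV, hf]
      simp only [hx1]
      ring
    have hfb := hfub (Tk k) (hTk k) (x k)
    have hnb : -ε * ‖x k‖ ^ 2 ≤ -(ε / MM) * V k := by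
      have hub := hPub (x k)
      have hd : 0 ≤ ε / MM := le_of_lt (div_pos hεpos hMMpos)
      have : (ε / MM) * V k ≤ (ε / MM) * (MM * ‖x k‖ ^ 2) := by
        apply mul_le_mul_of_nonneg_left hub hd
      have heq : (ε / MM) * (MM * ‖x k‖ ^ 2) = ε * ‖x k‖ ^ 2 := by
        field_simp
      nlinarith
    calc V (k + 1) = f (Tk k, x k) + V k := hVeq
      _ ≤ -ε * ‖x k‖ ^ 2 + V k := by linarith [hfb]
      _ ≤ -(ε / MM) * V k + V k := by linarith [hnb]
      _ = r * V k := by rw [hr]; ring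
  have hVk : ∀ k, V k ≤ r ^ k * V 0 := by
    intro k
    induction k with
    | zero => simp
    | succ k ih =>
      calc V (k + 1) ≤ r * V k := hVrec k
        _ ≤ r * (r ^ k * V 0) := mul_le_mul_of_nonneg_left ih hr0
        _ = r ^ (k + 1) * V 0 := by ring
  -- convergence
  have hrk : Filter.Tendsto (fun k : ℕ => r ^ k * V 0) Filter.atTop (nhds 0) := by
    have := tendsto_pow_atTop_nhds_zero_of_lt_one hr0 hr1
    simpa using this.mul_const (V 0)
  have hVto : Filter.Tendsto V Filter.atTop (nhds 0) :=
    tendsto_of_tendsto_of_tendsto_of_le_of_le tendsto_const_nhds hrk hVnn hVk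
  have hnorm2 : Filter.Tendsto (fun k => ‖x k‖ ^ 2) Filter.atTop (nhds 0) := by
    have h3 : Filter.Tendsto (fun k => mm⁻¹ * V k) Filter.atTop (nhds 0) := by
      simpa using hVto.const_mul (mm⁻¹)
    apply tendsto_of_tendsto_of_tendsto_of_le_of_le tendsto_const_nhds h3
    · intro k; positivity
    · intro k
      have h' : ‖x k‖ ^ 2 ≤ V k / mm := by
        rw [le_div_iff₀ hmmpos]
        nlinarith [hPlb (x k)]
      calc ‖x k‖ ^ 2 ≤ V k / mm := h'
        _ = mm⁻¹ * V k := by ring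
  have hnorm : Filter.Tendsto (fun k => ‖x k‖) Filter.atTop (nhds 0) := by
    have hs := hnorm2.sqrt
    simp only [Real.sqrt_zero] at hs
    have : ∀ k, Real.sqrt (‖x k‖ ^ 2) = ‖x k‖ := fun k => Real.sqrt_sq (norm_nonneg _)
    simpa only [this] using hs
  rw [tendsto_zero_iff_norm_tendsto_zero]
  exact hnorm

end Stmt18Helpers

/-- Robust ranged dwell-time: if `Ψᵢⱼ(T) ≺ 0` and `Φᵢⱼ(T) ≺ 0` for
`T ∈ {T_min, T_max}` and all vertices, then `ℐ(P,A,J,θ) ≺ 0` for all `θ ∈ [T_min, T_max]`,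
`A ∈ co{Aᵢ}`, `J ∈ co{Jⱼ}`; consequently every impulsive trajectory with dwell-times in
`[T_min, T_max]` tends to `0`. -/
theorem stmt18 {n NA NJ : ℕ} (Tmin Tmax : ℝ) (h1 : 0 < Tmin) (h2 : Tmin ≤ Tmax)
    (A : Fin NA → Matrix (Fin n) (Fin n) ℝ) (Jm : Fin NJ → Matrix (Fin n) (Fin n) ℝ)
    (P : Matrix (Fin n) (Fin n) ℝ) (hPsym : P.IsSymm) (hP : posDef P)
    (Z Q U R : Fin NJ → Matrix (Fin n) (Fin n) ℝ)
    (N : Fin NJ → Matrix (Fin n) (Fin n ⊕ Fin n) ℝ)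
    (hZsym : ∀ j, (Z j).IsSymm) (hZ : ∀ j, posDef (Z j))
    (hQsym : ∀ j, (Q j).IsSymm) (hUsym : ∀ j, (U j).IsSymm)
    (hPsi : ∀ T ∈ ({Tmin, Tmax} : Set ℝ), ∀ i j,
      negDef (PsiR T (A i) (Jm j) P (Z j) (Q j) (U j) (R j) (N j)))
    (hPhi : ∀ T ∈ ({Tmin, Tmax} : Set ℝ), ∀ i j,
      negDef (PhiR T (A i) (Jm j) P (Z j) (Q j) (U j) (R j) (N j))) :
    ∀ (la : Fin NA → ℝ) (mu : Fin NJ → ℝ),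
      (∀ i, 0 ≤ la i) → ∑ i, la i = 1 → (∀ j, 0 ≤ mu j) → ∑ j, mu j = 1 →
      (∀ θ ∈ Set.Icc Tmin Tmax,
        negDef (scrI P (∑ i, la i • A i) (∑ j, mu j • Jm j) θ)) ∧
      (∀ Tk : ℕ → ℝ, (∀ k, Tk k ∈ Set.Icc Tmin Tmax) →
        ∀ x₀ : Fin n → ℝ, ∀ x : ℕ → Fin n → ℝ, x 0 = x₀ →
          (∀ k, x (k + 1) =
            (mexp (Tk k • (∑ i, la i • A i)) * (∑ j, mu j • Jm j)).mulVec (x k)) →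
          Tendsto x atTop (nhds 0)) := by
  intro la mu hla hlas hmu hmus
  have hp1 := part1 Tmin Tmax h1 h2 A Jm P hPsym hP Z Q U R N hZsym hZ hQsym hPsi hPhi
    la mu hla hlas hmu hmus
  refine ⟨hp1, ?_⟩
  intro Tk hTk x₀ x hx0 hxrec
  exact part2 Tmin Tmax h1 h2 _ _ P hPsym hP hp1 Tk hTk x₀ x hx0 hxrec
end
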